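/- arXiv:2103.00628 — 5 statements merged into one kernel-verified Lean document; each statement's English description precedes it below -/
import Mathlib

section
/- Let U = (v¹, v², v³, v⁴, v⁵, v⁶) be functions from [0,L] to ℂ such that v¹, v³ are C² on [0,L], v⁵ is C¹ on [0,L] and twice continuously differentiable on [0,β] and on [β,L], v², v⁴, v⁶ are C¹ on [0,L], and v¹, v², v³, v⁴, v⁵, v⁶ all vanish at x = 0 and x = L. Define (𝒜U)₂ := (k₁/ρ₁)(v¹′ + v³ + l v⁵)′ + (l k₃/ρ₁)(v⁵′ − l v¹), (𝒜U)₄ := (k₂/ρ₂) v³′′ − (k₁/ρ₂)(v¹′ + v³ + l v⁵), (𝒜U)₆ := (k₃/ρ₁)(v⁵′ − l v¹)′ − (l k₁/ρ₁)(v¹′ + v³ + l v⁵) − (a(x)/ρ₁) v⁶ (′ denoting d/dx). Then Re ∫₀^L [ k₁ (v²′ + v⁴ + l v⁶) conj(v¹′ + v³ + l v⁵) + ρ₁ (𝒜U)₂ conj(v²) + k₂ v⁴′ conj(v³′) + ρ₂ (𝒜U)₄ conj(v⁴) + k₃ (v⁶′ − l v²) conj(v⁵′ − l v¹) + ρ₁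 (𝒜U)₆ conj(v⁶) ] dx = − a₀ ∫₀^β |v⁶|² dx ≤ 0. -/
open Set Filter MeasureTheory Topology

noncomputable section

private lemma hasDerivAt_conj0 {w : ℝ → ℂ} {c : ℂ} {x : ℝ} (h : HasDerivAt w c x) :
    HasDerivAt (fun y => (starRingEnd ℂ) (w y)) ((starRingEnd ℂ) c) x := by
  have := h.star
  simpa only [starRingEnd_apply] using this

private lemma hasDerivAt_re0 {w : ℝ → ℂ} {c : ℂ} {x : ℝ} (h : HasDerivAt w c x) :
    HasDerivAt (fun y => (w y).re) c.re x := by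
  exact Complex.reCLM.hasFDerivAt.comp_hasDerivAt x h

private lemma re_eq_re0 {z w : ℂ} (h : z + (starRingEnd ℂ) z = w + (starRingEnd ℂ) w) :
    z.re = w.re := by
  have h2 := congrArg Complex.re h
  simp only [Complex.add_re, Complex.conj_re] at h2
  linarith

private lemma hasDerivAt_deriv2 {f : ℝ → ℂ} {x : ℝ} (h : ContDiffAt ℝ 2 f x) :
    HasDerivAt (deriv f) (deriv (deriv f) x) x := by
  obtain ⟨u, hu, hfu⟩ := h.contDiffOn le_rfl (by simp)
  obtain ⟨t, hts, ht, hxt⟩ := mem_nhds_iff.mp hu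
  have h2 : ContDiffOn ℝ 1 (deriv f) t := (hfu.mono hts).deriv_of_isOpen ht (by norm_num)
  exact (((h2.differentiableOn (by norm_num)) x hxt).differentiableAt (ht.mem_nhds hxt)).hasDerivAt

private def bresseF (ρ₁ ρ₂ k₁ k₂ k₃ l : ℝ) (v1 v2 v3 v4 v5 v6 A2 A4 A6 : ℝ → ℂ) (x : ℝ) : ℂ :=
  (k₁ : ℂ) * ((deriv v2 x + v4 x + (l : ℂ) * v6 x) *
      starRingEnd ℂ (deriv v1 x + v3 x + (l : ℂ) * v5 x))
    + (ρ₁ : ℂ) * (A2 x * starRingEnd ℂ (v2 x))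
    + (k₂ : ℂ) * (deriv v4 x * starRingEnd ℂ (deriv v3 x))
    + (ρ₂ : ℂ) * (A4 x * starRingEnd ℂ (v4 x))
    + (k₃ : ℂ) * ((deriv v6 x - (l : ℂ) * v2 x) *
        starRingEnd ℂ (deriv v5 x - (l : ℂ) * v1 x))
    + (ρ₁ : ℂ) * (A6 x * starRingEnd ℂ (v6 x))

private def bresseG (k₁ k₂ k₃ l L : ℝ) (v1 v2 v3 v4 v5 v6 : ℝ → ℂ) (x : ℝ) : ℝ :=
  ((k₁ : ℂ) * (v2 x * starRingEnd ℂ (derivWithin v1 (Icc 0 L) x + v3 x + (l : ℂ) * v5 x))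
    + (k₂ : ℂ) * (v4 x * starRingEnd ℂ (derivWithin v3 (Icc 0 L) x))
    + (k₃ : ℂ) * (v6 x * starRingEnd ℂ (derivWithin v5 (Icc 0 L) x - (l : ℂ) * v1 x))).re

set_option maxHeartbeats 1000000 in
private lemma bresse_key
    (ρ₁ ρ₂ k₁ k₂ k₃ l L β a₀ : ℝ)
    (hrho1 : 0 < ρ₁) (hrho2 : 0 < ρ₂) (hL : 0 < L)
    (v1 v2 v3 v4 v5 v6 : ℝ → ℂ)
    (hv1 : ContDiffOn ℝ 2 v1 (Icc 0 L)) (hv3 : ContDiffOn ℝ 2 v3 (Icc 0 L))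
    (hv5 : ContDiffOn ℝ 1 v5 (Icc 0 L))
    (hv2 : ContDiffOn ℝ 1 v2 (Icc 0 L)) (hv4 : ContDiffOn ℝ 1 v4 (Icc 0 L))
    (hv6 : ContDiffOn ℝ 1 v6 (Icc 0 L))
    (A2 A4 A6 : ℝ → ℂ)
    (hA2 : ∀ x, A2 x = ((k₁ / ρ₁ : ℝ) : ℂ) * deriv (fun y => deriv v1 y + v3 y + (l : ℂ) * v5 y) x
      + ((l * k₃ / ρ₁ : ℝ) : ℂ) * (deriv v5 x - (l : ℂ) * v1 x))
    (hA4 : ∀ x, A4 x = ((k₂ / ρ₂ : ℝ) : ℂ) * deriv (deriv v3) x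
      - ((k₁ / ρ₂ : ℝ) : ℂ) * (deriv v1 x + v3 x + (l : ℂ) * v5 x))
    (hA6 : ∀ x, A6 x = ((k₃ / ρ₁ : ℝ) : ℂ) * deriv (fun y => deriv v5 y - (l : ℂ) * v1 y) x
      - ((l * k₁ / ρ₁ : ℝ) : ℂ) * (deriv v1 x + v3 x + (l : ℂ) * v5 x)
      - (((if x < β then a₀ else 0) / ρ₁ : ℝ) : ℂ) * v6 x)
    (c d ac : ℝ) (hcd : c < d) (hc0 : 0 ≤ c) (hdL : d ≤ L)
    (hv5cd : ContDiffOn ℝ 2 v5 (Icc c d))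
    (hac : ∀ x ∈ Ioo c d, (if x < β then a₀ else 0) = ac) :
    IntervalIntegrable (bresseF ρ₁ ρ₂ k₁ k₂ k₃ l v1 v2 v3 v4 v5 v6 A2 A4 A6) volume c d ∧
      ∫ x in c..d, (bresseF ρ₁ ρ₂ k₁ k₂ k₃ l v1 v2 v3 v4 v5 v6 A2 A4 A6 x).re
        = bresseG k₁ k₂ k₃ l L v1 v2 v3 v4 v5 v6 d - bresseG k₁ k₂ k₃ l L v1 v2 v3 v4 v5 v6 c
          - ac * ∫ x in c..d, ‖v6 x‖ ^ 2 := by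
  have hsub : Icc c d ⊆ Icc 0 L := Icc_subset_Icc hc0 hdL
  have hsubo : Ioo c d ⊆ Ioo 0 L := Ioo_subset_Ioo hc0 hdL
  have hUs : UniqueDiffOn ℝ (Icc (0:ℝ) L) := uniqueDiffOn_Icc hL
  have hUt : UniqueDiffOn ℝ (Icc c d) := uniqueDiffOn_Icc hcd
  have hρ1 : (ρ₁ : ℂ) ≠ 0 := by exact_mod_cast hrho1.ne'
  have hρ2 : (ρ₂ : ℂ) ≠ 0 := by exact_mod_cast hrho2.ne'
  set D1 := derivWithin v1 (Icc (0:ℝ) L) with hD1def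
  set D2 := derivWithin v2 (Icc (0:ℝ) L) with hD2def
  set D3 := derivWithin v3 (Icc (0:ℝ) L) with hD3def
  set D4 := derivWithin v4 (Icc (0:ℝ) L) with hD4def
  set D5 := derivWithin v5 (Icc (0:ℝ) L) with hD5def
  set D6 := derivWithin v6 (Icc (0:ℝ) L) with hD6def
  set dd1 := derivWithin D1 (Icc (0:ℝ) L) with hdd1def
  set dd3 := derivWithin D3 (Icc (0:ℝ) L) with hdd3def
  set dd5 := derivWithin (derivWithin v5 (Icc c d)) (Icc c d) with hdd5def
  set F : ℝ → ℂ := fun x =>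
    (k₁ : ℂ) * ((D2 x + v4 x + (l : ℂ) * v6 x) * starRingEnd ℂ (D1 x + v3 x + (l : ℂ) * v5 x))
    + (ρ₁ : ℂ) * ((((k₁ / ρ₁ : ℝ) : ℂ) * (dd1 x + D3 x + (l : ℂ) * D5 x)
        + ((l * k₃ / ρ₁ : ℝ) : ℂ) * (D5 x - (l : ℂ) * v1 x)) * starRingEnd ℂ (v2 x))
    + (k₂ : ℂ) * (D4 x * starRingEnd ℂ (D3 x))
    + (ρ₂ : ℂ) * ((((k₂ / ρ₂ : ℝ) : ℂ) * dd3 x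
        - ((k₁ / ρ₂ : ℝ) : ℂ) * (D1 x + v3 x + (l : ℂ) * v5 x)) * starRingEnd ℂ (v4 x))
    + (k₃ : ℂ) * ((D6 x - (l : ℂ) * v2 x) * starRingEnd ℂ (D5 x - (l : ℂ) * v1 x))
    + (ρ₁ : ℂ) * ((((k₃ / ρ₁ : ℝ) : ℂ) * (dd5 x - (l : ℂ) * D1 x)
        - ((l * k₁ / ρ₁ : ℝ) : ℂ) * (D1 x + v3 x + (l : ℂ) * v5 x)
        - ((ac / ρ₁ : ℝ) : ℂ) * v6 x) * starRingEnd ℂ (v6 x)) with hFdef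
  -- pointwise facts on the interior
  have key : ∀ x ∈ Ioo c d,
      bresseF ρ₁ ρ₂ k₁ k₂ k₃ l v1 v2 v3 v4 v5 v6 A2 A4 A6 x = F x ∧
      HasDerivAt (bresseG k₁ k₂ k₃ l L v1 v2 v3 v4 v5 v6) ((F x).re + ac * ‖v6 x‖ ^ 2) x := by
    intro x hx
    have hx0L : x ∈ Ioo 0 L := hsubo hx
    have hsx : Icc (0:ℝ) L ∈ 𝓝 x := Icc_mem_nhds hx0L.1 hx0L.2
    have htx : Icc c d ∈ 𝓝 x := Icc_mem_nhds hx.1 hx.2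
    have cd1 : ContDiffAt ℝ 2 v1 x := hv1.contDiffAt hsx
    have cd3 : ContDiffAt ℝ 2 v3 x := hv3.contDiffAt hsx
    have cd5 : ContDiffAt ℝ 2 v5 x := hv5cd.contDiffAt htx
    have h1 : HasDerivAt v1 (deriv v1 x) x := (cd1.differentiableAt (by norm_num)).hasDerivAt
    have h3 : HasDerivAt v3 (deriv v3 x) x := (cd3.differentiableAt (by norm_num)).hasDerivAt
    have h5 : HasDerivAt v5 (deriv v5 x) x := (cd5.differentiableAt (by norm_num)).hasDerivAt
    have h2 : HasDerivAt v2 (deriv v2 x) x :=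
      ((hv2.contDiffAt hsx).differentiableAt (by norm_num)).hasDerivAt
    have h4 : HasDerivAt v4 (deriv v4 x) x :=
      ((hv4.contDiffAt hsx).differentiableAt (by norm_num)).hasDerivAt
    have h6 : HasDerivAt v6 (deriv v6 x) x :=
      ((hv6.contDiffAt hsx).differentiableAt (by norm_num)).hasDerivAt
    have h1' := hasDerivAt_deriv2 cd1
    have h3' := hasDerivAt_deriv2 cd3
    have h5' := hasDerivAt_deriv2 cd5
    have evs : ∀ {g : ℝ → ℂ}, ContDiffOn ℝ 1 g (Icc 0 L) →
        derivWithin g (Icc (0:ℝ) L) =ᶠ[𝓝 x] deriv g := by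
      intro g hg
      filter_upwards [isOpen_Ioo.mem_nhds hx0L] with y hy
      exact derivWithin_of_mem_nhds (Icc_mem_nhds hy.1 hy.2)
    have ev1 : D1 =ᶠ[𝓝 x] deriv v1 := evs (hv1.of_le (by norm_num))
    have ev3 : D3 =ᶠ[𝓝 x] deriv v3 := evs (hv3.of_le (by norm_num))
    have ev5 : D5 =ᶠ[𝓝 x] deriv v5 := evs hv5
    have ev5t : derivWithin v5 (Icc c d) =ᶠ[𝓝 x] deriv v5 := by
      filter_upwards [isOpen_Ioo.mem_nhds hx] with y hy
      exact derivWithin_of_mem_nhds (Icc_mem_nhds hy.1 hy.2)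
    have e1 : D1 x = deriv v1 x := derivWithin_of_mem_nhds hsx
    have e2 : D2 x = deriv v2 x := derivWithin_of_mem_nhds hsx
    have e3 : D3 x = deriv v3 x := derivWithin_of_mem_nhds hsx
    have e4 : D4 x = deriv v4 x := derivWithin_of_mem_nhds hsx
    have e5 : D5 x = deriv v5 x := derivWithin_of_mem_nhds hsx
    have e6 : D6 x = deriv v6 x := derivWithin_of_mem_nhds hsx
    have edd1 : dd1 x = deriv (deriv v1) x :=
      (derivWithin_of_mem_nhds hsx).trans ev1.deriv_eq
    have edd3 : dd3 x = deriv (deriv v3) x :=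
      (derivWithin_of_mem_nhds hsx).trans ev3.deriv_eq
    have edd5 : dd5 x = deriv (deriv v5) x :=
      (derivWithin_of_mem_nhds htx).trans ev5t.deriv_eq
    have eT' : deriv (fun y => deriv v1 y + v3 y + (l : ℂ) * v5 y) x
        = deriv (deriv v1) x + deriv v3 x + (l : ℂ) * deriv v5 x :=
      ((h1'.add h3).add (h5.const_mul (l : ℂ))).deriv
    have eS' : deriv (fun y => deriv v5 y - (l : ℂ) * v1 y) x
        = deriv (deriv v5) x - (l : ℂ) * deriv v1 x :=
      (h5'.sub (h1.const_mul (l : ℂ))).deriv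
    constructor
    · simp only [bresseF, hFdef]
      rw [hA2 x, hA4 x, hA6 x, eT', eS', hac x hx]
      simp only [e1, e2, e3, e4, e5, e6, edd1, edd3, edd5]
    · have hD1 : HasDerivAt D1 (deriv (deriv v1) x) x := h1'.congr_of_eventuallyEq ev1
      have hD3 : HasDerivAt D3 (deriv (deriv v3) x) x := h3'.congr_of_eventuallyEq ev3
      have hD5 : HasDerivAt D5 (deriv (deriv v5) x) x := h5'.congr_of_eventuallyEq ev5
      have hT : HasDerivAt (fun y => D1 y + v3 y + (l : ℂ) * v5 y)
          (deriv (deriv v1) x + deriv v3 x + (l : ℂ) * deriv v5 x) x :=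
        (hD1.add h3).add (h5.const_mul _)
      have hS : HasDerivAt (fun y => D5 y - (l : ℂ) * v1 y)
          (deriv (deriv v5) x - (l : ℂ) * deriv v1 x) x := hD5.sub (h1.const_mul _)
      have hH := ((HasDerivAt.const_mul (k₁ : ℂ) (h2.mul (hasDerivAt_conj0 hT))).add
          (HasDerivAt.const_mul (k₂ : ℂ) (h4.mul (hasDerivAt_conj0 hD3)))).add
          (HasDerivAt.const_mul (k₃ : ℂ) (h6.mul (hasDerivAt_conj0 hS)))
      have hG : HasDerivAt (bresseG k₁ k₂ k₃ l L v1 v2 v3 v4 v5 v6)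
          ((k₁ : ℂ) * (deriv v2 x * starRingEnd ℂ (D1 x + v3 x + (l : ℂ) * v5 x)
              + v2 x * starRingEnd ℂ (deriv (deriv v1) x + deriv v3 x + (l : ℂ) * deriv v5 x))
            + (k₂ : ℂ) * (deriv v4 x * starRingEnd ℂ (D3 x)
              + v4 x * starRingEnd ℂ (deriv (deriv v3) x))
            + (k₃ : ℂ) * (deriv v6 x * starRingEnd ℂ (D5 x - (l : ℂ) * v1 x)
              + v6 x * starRingEnd ℂ (deriv (deriv v5) x - (l : ℂ) * deriv v1 x))).re x := by
        exact hasDerivAt_re0 hH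
      have hval : ((k₁ : ℂ) * (deriv v2 x * starRingEnd ℂ (D1 x + v3 x + (l : ℂ) * v5 x)
              + v2 x * starRingEnd ℂ (deriv (deriv v1) x + deriv v3 x + (l : ℂ) * deriv v5 x))
            + (k₂ : ℂ) * (deriv v4 x * starRingEnd ℂ (D3 x)
              + v4 x * starRingEnd ℂ (deriv (deriv v3) x))
            + (k₃ : ℂ) * (deriv v6 x * starRingEnd ℂ (D5 x - (l : ℂ) * v1 x)
              + v6 x * starRingEnd ℂ (deriv (deriv v5) x - (l : ℂ) * deriv v1 x))).re
          = (F x).re + ac * ‖v6 x‖ ^ 2 := by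
        rw [← Complex.ofReal_re (ac * ‖v6 x‖ ^ 2), ← Complex.add_re]
        apply re_eq_re0
        simp only [hFdef]
        simp only [e1, e2, e3, e4, e5, e6, edd1, edd3, edd5]
        have hnorm : ((‖v6 x‖ ^ 2 : ℝ) : ℂ) = v6 x * starRingEnd ℂ (v6 x) := by
          rw [Complex.mul_conj]
          norm_cast
          rw [Complex.sq_norm]
        rw [Complex.ofReal_mul, hnorm]
        simp only [map_add, map_sub, map_mul, Complex.conj_conj, Complex.conj_ofReal]
        push_cast
        field_simp
        ring
      rw [hval] at hG
      exact hG
  -- continuity facts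
  have u1 : ContinuousOn v1 (Icc c d) := (hv1.continuousOn).mono hsub
  have u2 : ContinuousOn v2 (Icc c d) := (hv2.continuousOn).mono hsub
  have u3 : ContinuousOn v3 (Icc c d) := (hv3.continuousOn).mono hsub
  have u4 : ContinuousOn v4 (Icc c d) := (hv4.continuousOn).mono hsub
  have u5 : ContinuousOn v5 (Icc c d) := (hv5.continuousOn).mono hsub
  have u6 : ContinuousOn v6 (Icc c d) := (hv6.continuousOn).mono hsub
  have uD1 : ContinuousOn D1 (Icc c d) :=
    (hv1.continuousOn_derivWithin hUs (by norm_num)).mono hsub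
  have uD2 : ContinuousOn D2 (Icc c d) :=
    (hv2.continuousOn_derivWithin hUs le_rfl).mono hsub
  have uD3 : ContinuousOn D3 (Icc c d) :=
    (hv3.continuousOn_derivWithin hUs (by norm_num)).mono hsub
  have uD4 : ContinuousOn D4 (Icc c d) :=
    (hv4.continuousOn_derivWithin hUs le_rfl).mono hsub
  have uD5 : ContinuousOn D5 (Icc c d) :=
    (hv5.continuousOn_derivWithin hUs le_rfl).mono hsub
  have uD6 : ContinuousOn D6 (Icc c d) :=
    (hv6.continuousOn_derivWithin hUs le_rfl).mono hsub
  have udd1 : ContinuousOn dd1 (Icc c d) :=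
    ((hv1.derivWithin hUs (by norm_num)).continuousOn_derivWithin hUs le_rfl).mono hsub
  have udd3 : ContinuousOn dd3 (Icc c d) :=
    ((hv3.derivWithin hUs (by norm_num)).continuousOn_derivWithin hUs le_rfl).mono hsub
  have udd5 : ContinuousOn dd5 (Icc c d) :=
    (hv5cd.derivWithin hUt (by norm_num)).continuousOn_derivWithin hUt le_rfl
  have hstar : ∀ {g : ℝ → ℂ}, ContinuousOn g (Icc c d) →
      ContinuousOn (fun x => starRingEnd ℂ (g x)) (Icc c d) := fun hg =>
    continuous_star.comp_continuousOn hg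
  have hFcont : ContinuousOn F (Icc c d) := by
    rw [hFdef]
    exact ((((( (continuousOn_const.mul (((uD2.add u4).add (continuousOn_const.mul u6)).mul
      (hstar ((uD1.add u3).add (continuousOn_const.mul u5))))).add
      (continuousOn_const.mul (((continuousOn_const.mul ((udd1.add uD3).add
        (continuousOn_const.mul uD5))).add (continuousOn_const.mul (uD5.sub
        (continuousOn_const.mul u1)))).mul (hstar u2)))).add
      (continuousOn_const.mul (uD4.mul (hstar uD3)))).add
      (continuousOn_const.mul (((continuousOn_const.mul udd3).sub (continuousOn_const.mul
        ((uD1.add u3).add (continuousOn_const.mul u5)))).mul (hstar u4)))).add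
      (continuousOn_const.mul ((uD6.sub (continuousOn_const.mul u2)).mul
        (hstar (uD5.sub (continuousOn_const.mul u1)))))).add
      (continuousOn_const.mul ((((continuousOn_const.mul (udd5.sub
        (continuousOn_const.mul uD1))).sub (continuousOn_const.mul ((uD1.add u3).add
        (continuousOn_const.mul u5)))).sub (continuousOn_const.mul u6)).mul (hstar u6))))
  have hGcont : ContinuousOn (bresseG k₁ k₂ k₃ l L v1 v2 v3 v4 v5 v6) (Icc c d) := by
    have hHcont : ContinuousOn (fun x =>
        (k₁ : ℂ) * (v2 x * starRingEnd ℂ (D1 x + v3 x + (l : ℂ) * v5 x))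
        + (k₂ : ℂ) * (v4 x * starRingEnd ℂ (D3 x))
        + (k₃ : ℂ) * (v6 x * starRingEnd ℂ (D5 x - (l : ℂ) * v1 x))) (Icc c d) :=
      ((continuousOn_const.mul (u2.mul (hstar ((uD1.add u3).add
        (continuousOn_const.mul u5))))).add
        (continuousOn_const.mul (u4.mul (hstar uD3)))).add
        (continuousOn_const.mul (u6.mul (hstar (uD5.sub (continuousOn_const.mul u1)))))
    exact Complex.continuous_re.comp_continuousOn hHcont
  have hFint : IntervalIntegrable F volume c d := hFcont.intervalIntegrable_of_Icc hcd.le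
  have haeIoc : (bresseF ρ₁ ρ₂ k₁ k₂ k₃ l v1 v2 v3 v4 v5 v6 A2 A4 A6)
      =ᵐ[volume.restrict (Ioc c d)] F := by
    rw [← Measure.restrict_congr_set Ioo_ae_eq_Ioc]
    filter_upwards [ae_restrict_mem measurableSet_Ioo] with x hx
    exact (key x hx).1
  have hfint : IntervalIntegrable
      (bresseF ρ₁ ρ₂ k₁ k₂ k₃ l v1 v2 v3 v4 v5 v6 A2 A4 A6) volume c d := by
    rw [intervalIntegrable_iff, uIoc_of_le hcd.le]
    exact (hFint.1).congr haeIoc.symm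
  refine ⟨hfint, ?_⟩
  have hv6sq : ContinuousOn (fun x => ‖v6 x‖ ^ 2) (Icc c d) := (u6.norm).pow 2
  have hIcont : ContinuousOn (fun x => (F x).re + ac * ‖v6 x‖ ^ 2) (Icc c d) :=
    (Complex.continuous_re.comp_continuousOn hFcont).add (continuousOn_const.mul hv6sq)
  have hFTC : ∫ x in c..d, ((F x).re + ac * ‖v6 x‖ ^ 2)
      = bresseG k₁ k₂ k₃ l L v1 v2 v3 v4 v5 v6 d - bresseG k₁ k₂ k₃ l L v1 v2 v3 v4 v5 v6 c :=
    intervalIntegral.integral_eq_sub_of_hasDeriv_right_of_le hcd.le hGcont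
      (fun x hx => ((key x hx).2).hasDerivWithinAt)
      (hIcont.intervalIntegrable_of_Icc hcd.le)
  have hne : ∀ᵐ (y : ℝ) ∂volume, y ≠ d := by
    have hd0 : volume ({d} : Set ℝ) = 0 := Real.volume_singleton
    exact ae_iff.2 (by simpa using hd0)
  have hre1 : ∫ x in c..d, (bresseF ρ₁ ρ₂ k₁ k₂ k₃ l v1 v2 v3 v4 v5 v6 A2 A4 A6 x).re
      = ∫ x in c..d, (F x).re := by
    apply intervalIntegral.integral_congr_ae
    filter_upwards [hne] with y hy hyI
    rw [uIoc_of_le hcd.le] at hyI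
    rw [(key y ⟨hyI.1, lt_of_le_of_ne hyI.2 hy⟩).1]
  have hFre : IntervalIntegrable (fun x => (F x).re) volume c d :=
    (Complex.continuous_re.comp_continuousOn hFcont).intervalIntegrable_of_Icc hcd.le
  have hsqint : IntervalIntegrable (fun x => ac * ‖v6 x‖ ^ 2) volume c d :=
    (continuousOn_const.mul hv6sq).intervalIntegrable_of_Icc hcd.le
  have hadd : ∫ x in c..d, ((F x).re + ac * ‖v6 x‖ ^ 2)
      = (∫ x in c..d, (F x).re) + ∫ x in c..d, ac * ‖v6 x‖ ^ 2 :=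
    intervalIntegral.integral_add hFre hsqint
  have hconstmul : ∫ x in c..d, ac * ‖v6 x‖ ^ 2 = ac * ∫ x in c..d, ‖v6 x‖ ^ 2 :=
    intervalIntegral.integral_const_mul ac _
  rw [hre1]
  rw [hadd, hconstmul] at hFTC
  linarith

/-- Dissipativity of the Bresse generator:
`Re (𝒜U, U)_H = −a₀ ∫₀^β |v⁶|² dx ≤ 0`. -/
theorem bresse_generator_dissipative
    (ρ₁ ρ₂ k₁ k₂ k₃ l L β a₀ : ℝ)
    (hrho1 : 0 < ρ₁) (hrho2 : 0 < ρ₂) (hk1 : 0 < k₁) (hk2 : 0 < k₂) (hk3 : 0 < k₃)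
    (hl : 0 < l) (hL : 0 < L) (ha0 : 0 < a₀) (hbeta : 0 < β) (hbetaL : β < L)
    (v1 v2 v3 v4 v5 v6 : ℝ → ℂ)
    (hv1 : ContDiffOn ℝ 2 v1 (Icc 0 L)) (hv3 : ContDiffOn ℝ 2 v3 (Icc 0 L))
    (hv5 : ContDiffOn ℝ 1 v5 (Icc 0 L))
    (hv5l : ContDiffOn ℝ 2 v5 (Icc 0 β)) (hv5r : ContDiffOn ℝ 2 v5 (Icc β L))
    (hv2 : ContDiffOn ℝ 1 v2 (Icc 0 L)) (hv4 : ContDiffOn ℝ 1 v4 (Icc 0 L))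
    (hv6 : ContDiffOn ℝ 1 v6 (Icc 0 L))
    (hbc0 : v1 0 = 0 ∧ v2 0 = 0 ∧ v3 0 = 0 ∧ v4 0 = 0 ∧ v5 0 = 0 ∧ v6 0 = 0)
    (hbcL : v1 L = 0 ∧ v2 L = 0 ∧ v3 L = 0 ∧ v4 L = 0 ∧ v5 L = 0 ∧ v6 L = 0)
    (A2 A4 A6 : ℝ → ℂ)
    (hA2 : ∀ x, A2 x = ((k₁ / ρ₁ : ℝ) : ℂ) * deriv (fun y => deriv v1 y + v3 y + (l : ℂ) * v5 y) x
      + ((l * k₃ / ρ₁ : ℝ) : ℂ) * (deriv v5 x - (l : ℂ) * v1 x))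
    (hA4 : ∀ x, A4 x = ((k₂ / ρ₂ : ℝ) : ℂ) * deriv (deriv v3) x
      - ((k₁ / ρ₂ : ℝ) : ℂ) * (deriv v1 x + v3 x + (l : ℂ) * v5 x))
    (hA6 : ∀ x, A6 x = ((k₃ / ρ₁ : ℝ) : ℂ) * deriv (fun y => deriv v5 y - (l : ℂ) * v1 y) x
      - ((l * k₁ / ρ₁ : ℝ) : ℂ) * (deriv v1 x + v3 x + (l : ℂ) * v5 x)
      - (((if x < β then a₀ else 0) / ρ₁ : ℝ) : ℂ) * v6 x) :
    (∫ x in (0 : ℝ)..L,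
      ((k₁ : ℂ) * ((deriv v2 x + v4 x + (l : ℂ) * v6 x) *
          starRingEnd ℂ (deriv v1 x + v3 x + (l : ℂ) * v5 x))
        + (ρ₁ : ℂ) * (A2 x * starRingEnd ℂ (v2 x))
        + (k₂ : ℂ) * (deriv v4 x * starRingEnd ℂ (deriv v3 x))
        + (ρ₂ : ℂ) * (A4 x * starRingEnd ℂ (v4 x))
        + (k₃ : ℂ) * ((deriv v6 x - (l : ℂ) * v2 x) *
            starRingEnd ℂ (deriv v5 x - (l : ℂ) * v1 x))
        + (ρ₁ : ℂ) * (A6 x * starRingEnd ℂ (v6 x)))).re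
      = -a₀ * (∫ x in (0 : ℝ)..β, ‖v6 x‖ ^ 2) ∧
    -a₀ * (∫ x in (0 : ℝ)..β, ‖v6 x‖ ^ 2) ≤ 0 := by
  obtain ⟨hb1, hb2, hb3, hb4, hb5, hb6⟩ := hbc0
  obtain ⟨hB1, hB2, hB3, hB4, hB5, hB6⟩ := hbcL
  have hkey1 := bresse_key ρ₁ ρ₂ k₁ k₂ k₃ l L β a₀ hrho1 hrho2 hL v1 v2 v3 v4 v5 v6
    hv1 hv3 hv5 hv2 hv4 hv6 A2 A4 A6 hA2 hA4 hA6 0 β a₀ hbeta le_rfl hbetaL.le hv5l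
    (fun x hx => if_pos hx.2)
  have hkey2 := bresse_key ρ₁ ρ₂ k₁ k₂ k₃ l L β a₀ hrho1 hrho2 hL v1 v2 v3 v4 v5 v6
    hv1 hv3 hv5 hv2 hv4 hv6 A2 A4 A6 hA2 hA4 hA6 β L 0 hbetaL hbeta.le le_rfl hv5r
    (fun x hx => if_neg (not_lt.2 hx.1.le))
  have hG0 : bresseG k₁ k₂ k₃ l L v1 v2 v3 v4 v5 v6 0 = 0 := by
    simp [bresseG, hb2, hb4, hb6]
  have hGL : bresseG k₁ k₂ k₃ l L v1 v2 v3 v4 v5 v6 L = 0 := by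
    simp [bresseG, hB2, hB4, hB6]
  have hsplit : (∫ x in (0:ℝ)..L, bresseF ρ₁ ρ₂ k₁ k₂ k₃ l v1 v2 v3 v4 v5 v6 A2 A4 A6 x)
      = (∫ x in (0:ℝ)..β, bresseF ρ₁ ρ₂ k₁ k₂ k₃ l v1 v2 v3 v4 v5 v6 A2 A4 A6 x)
        + ∫ x in β..L, bresseF ρ₁ ρ₂ k₁ k₂ k₃ l v1 v2 v3 v4 v5 v6 A2 A4 A6 x :=
    (intervalIntegral.integral_add_adjacent_intervals hkey1.1 hkey2.1).symm
  have hre : ∀ (a b : ℝ),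
      IntervalIntegrable (bresseF ρ₁ ρ₂ k₁ k₂ k₃ l v1 v2 v3 v4 v5 v6 A2 A4 A6) volume a b →
      (∫ x in a..b, bresseF ρ₁ ρ₂ k₁ k₂ k₃ l v1 v2 v3 v4 v5 v6 A2 A4 A6 x).re
        = ∫ x in a..b, (bresseF ρ₁ ρ₂ k₁ k₂ k₃ l v1 v2 v3 v4 v5 v6 A2 A4 A6 x).re := by
    intro a b h
    have := Complex.reCLM.intervalIntegral_comp_comm h
    simpa using this.symm
  constructor
  · show (∫ x in (0:ℝ)..L, bresseF ρ₁ ρ₂ k₁ k₂ k₃ l v1 v2 v3 v4 v5 v6 A2 A4 A6 x).re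
      = -a₀ * (∫ x in (0 : ℝ)..β, ‖v6 x‖ ^ 2)
    rw [hsplit, Complex.add_re, hre 0 β hkey1.1, hre β L hkey2.1, hkey1.2, hkey2.2, hG0, hGL]
    ring
  · have hnn : 0 ≤ ∫ x in (0:ℝ)..β, ‖v6 x‖ ^ 2 :=
      intervalIntegral.integral_nonneg hbeta.le (fun u _ => sq_nonneg _)
    nlinarith [mul_nonneg ha0.le hnn]
end
end

section
/- There exists a constant c > 0 (depending only on k₁, k₂, k₃, l, L) such that for all C¹ functions v¹, v³, v⁵ : [0,L] → ℂ with v¹(0) = v¹(L) = v³(0) = v³(L) = v⁵(0) = v⁵(L) = 0, one has ∫₀^L ( k₁ |v¹′ + v³ + l v⁵|² + k₂ |v³′|² + k₃ |v⁵′ − l v¹|² ) dx ≥ c ∫₀^L ( |v¹′|² + |v³′|² + |v⁵′|² + |v¹|² + |v³|² + |v⁵|² ) dx. -/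
open Set Filter MeasureTheory intervalIntegral

noncomputable section

lemma my_ii {L : ℝ} (hL : 0 ≤ L) {f : ℝ → ℝ} (hf : ContinuousOn f (Icc 0 L)) :
    IntervalIntegrable f volume 0 L := by
  apply ContinuousOn.intervalIntegrable; rwa [uIcc_of_le hL]

lemma my_iiC {L : ℝ} (hL : 0 ≤ L) {f : ℝ → ℂ} (hf : ContinuousOn f (Icc 0 L)) :
    IntervalIntegrable f volume 0 L := by
  apply ContinuousOn.intervalIntegrable; rwa [uIcc_of_le hL]

lemma poincare_aux {L : ℝ} (hL : 0 < L) (g g' : ℝ → ℂ)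
    (hgc : ContinuousOn g (Icc 0 L)) (hg'c : ContinuousOn g' (Icc 0 L))
    (hderiv : ∀ x ∈ Ioo 0 L, HasDerivAt g (g' x) x) (h0 : g 0 = 0) :
    (∫ x in (0:ℝ)..L, ‖g x‖^2) ≤ L^2 * ∫ x in (0:ℝ)..L, ‖g' x‖^2 := by
  set M : ℝ := ∫ x in (0:ℝ)..L, ‖g' x‖ with hM
  have hng'c : ContinuousOn (fun x => ‖g' x‖) (Icc 0 L) := hg'c.norm
  have hng'2c : ContinuousOn (fun x => ‖g' x‖^2) (Icc 0 L) := hng'c.pow 2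
  have hiin : IntervalIntegrable (fun x => ‖g' x‖) volume 0 L := my_ii hL.le hng'c
  have hiin2 : IntervalIntegrable (fun x => ‖g' x‖^2) volume 0 L := my_ii hL.le hng'2c
  have hMnn : 0 ≤ M := intervalIntegral.integral_nonneg hL.le (fun x _ => norm_nonneg _)
  have hCS : M^2 ≤ L * ∫ x in (0:ℝ)..L, ‖g' x‖^2 := by
    have h0' : (0:ℝ) ≤ ∫ x in (0:ℝ)..L, (‖g' x‖ - M/L)^2 :=
      intervalIntegral.integral_nonneg hL.le (fun x _ => sq_nonneg _)
    have hexp : (∫ x in (0:ℝ)..L, (‖g' x‖ - M/L)^2)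
        = (∫ x in (0:ℝ)..L, ‖g' x‖^2) - (2*(M/L)) * M + L * (M/L)^2 := by
      have : ∀ x : ℝ, (‖g' x‖ - M/L)^2 = ‖g' x‖^2 - (2*(M/L)) * ‖g' x‖ + (M/L)^2 := by
        intro x; ring
      simp_rw [this]
      rw [intervalIntegral.integral_add (hiin2.sub (hiin.const_mul _)) intervalIntegrable_const,
        intervalIntegral.integral_sub hiin2 (hiin.const_mul _),
        intervalIntegral.integral_const_mul, intervalIntegral.integral_const]
      simp [hM]
    rw [hexp] at h0'
    have e1 : (2*(M/L)) * M = 2*(M^2/L) := by ring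
    have e2 : L * (M/L)^2 = M^2/L := by field_simp
    rw [e1, e2] at h0'
    have h2 : M^2 / L ≤ ∫ x in (0:ℝ)..L, ‖g' x‖^2 := by linarith
    have := (div_le_iff₀ hL).mp h2
    linarith
  have hpt : ∀ x ∈ Icc (0:ℝ) L, ‖g x‖ ≤ M := by
    intro x hx
    have hx0 : 0 ≤ x := hx.1
    have hxL : x ≤ L := hx.2
    have hftc : (∫ t in (0:ℝ)..x, g' t) = g x - g 0 := by
      apply intervalIntegral.integral_eq_sub_of_hasDerivAt_of_le hx0
        (hgc.mono (Icc_subset_Icc le_rfl hxL))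
        (fun t ht => hderiv t ⟨ht.1, lt_of_lt_of_le ht.2 hxL⟩)
        ((my_iiC hL.le hg'c).mono_set
          (by rw [uIcc_of_le hx0, uIcc_of_le hL.le]; exact Icc_subset_Icc le_rfl hxL))
    have : ‖g x‖ = ‖∫ t in (0:ℝ)..x, g' t‖ := by rw [hftc, h0, sub_zero]
    rw [this]
    calc ‖∫ t in (0:ℝ)..x, g' t‖ ≤ ∫ t in (0:ℝ)..x, ‖g' t‖ :=
          intervalIntegral.norm_integral_le_integral_norm hx0
      _ ≤ M := by
          apply intervalIntegral.integral_mono_interval le_rfl hx0 hxL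
          · filter_upwards with t; simp
          · exact hiin
  calc (∫ x in (0:ℝ)..L, ‖g x‖^2) ≤ ∫ x in (0:ℝ)..L, M^2 := by
        apply intervalIntegral.integral_mono_on hL.le (my_ii hL.le (hgc.norm.pow 2))
          intervalIntegrable_const
        intro x hx
        have := hpt x hx
        show ‖g x‖ ^ 2 ≤ M ^ 2
        nlinarith [norm_nonneg (g x)]
    _ = L * M^2 := by rw [intervalIntegral.integral_const]; simp
    _ ≤ L * (L * ∫ x in (0:ℝ)..L, ‖g' x‖^2) := by nlinarith
    _ = L^2 * ∫ x in (0:ℝ)..L, ‖g' x‖^2 := by ring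

/-- Poincaré with rotation: if `w(0)=0` and `μ` is purely imaginary, then
`∫‖w‖² ≤ L² ∫‖w' - μ w‖²`. -/
lemma rot_aux {L : ℝ} (hL : 0 < L) (μ : ℂ) (hμ : μ.re = 0) (w dw : ℝ → ℂ)
    (hwc : ContinuousOn w (Icc 0 L)) (hdwc : ContinuousOn dw (Icc 0 L))
    (hder : ∀ x ∈ Ioo 0 L, HasDerivAt w (dw x) x) (h0 : w 0 = 0) :
    (∫ x in (0:ℝ)..L, ‖w x‖^2) ≤ L^2 * ∫ x in (0:ℝ)..L, ‖dw x - μ * w x‖^2 := by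
  set g : ℝ → ℂ := fun x => Complex.exp (-(μ*x)) * w x with hg
  set g' : ℝ → ℂ := fun x => Complex.exp (-(μ*x)) * (dw x - μ * w x) with hg'
  have hofReal : ∀ x : ℝ, HasDerivAt (fun y : ℝ => (y:ℂ)) 1 x := fun x => by
    simpa using (hasDerivAt_id x).ofReal_comp
  have hexp : ∀ x : ℝ, HasDerivAt (fun y : ℝ => Complex.exp (-(μ*y)))
      (Complex.exp (-(μ*x)) * (-μ)) x := by
    intro x
    have h := (((hofReal x).const_mul μ).neg).cexp
    simpa using h
  have hnorm : ∀ x : ℝ, ‖Complex.exp (-(μ*(x:ℝ)))‖ = 1 := by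
    intro x
    simp [Complex.norm_exp, hμ]
  have hexpc : Continuous (fun y : ℝ => Complex.exp (-(μ*y))) :=
    continuous_iff_continuousAt.2 fun x => (hexp x).continuousAt
  have hgc : ContinuousOn g (Icc 0 L) := hexpc.continuousOn.mul hwc
  have hg'c : ContinuousOn g' (Icc 0 L) :=
    hexpc.continuousOn.mul (hdwc.sub (continuousOn_const.mul hwc))
  have hgder : ∀ x ∈ Ioo 0 L, HasDerivAt g (g' x) x := by
    intro x hx
    have h := (hexp x).mul (hder x hx)
    have : Complex.exp (-(μ*x)) * (-μ) * w x + Complex.exp (-(μ*x)) * dw x = g' x := by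
      rw [hg']; ring
    rwa [this] at h
  have hg0 : g 0 = 0 := by simp [hg, h0]
  have key := poincare_aux hL g g' hgc hg'c hgder hg0
  have e1 : ∀ x : ℝ, ‖g x‖ = ‖w x‖ := fun x => by
    rw [hg]; simp only []; rw [norm_mul, hnorm x, one_mul]
  have e2 : ∀ x : ℝ, ‖g' x‖ = ‖dw x - μ * w x‖ := fun x => by
    rw [hg']; simp only []; rw [norm_mul, hnorm x, one_mul]
  simp_rw [e1, e2] at key
  exact key


lemma sq_le_three (x a b c : ℝ) (hx : 0 ≤ x) (h : x ≤ a + b + c) :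
    x^2 ≤ 3*a^2 + 3*b^2 + 3*c^2 := by
  have h2 := mul_self_le_mul_self hx h
  nlinarith [sq_nonneg (a-b), sq_nonneg (a-c), sq_nonneg (b-c)]

lemma sq_le_two (x a b : ℝ) (hx : 0 ≤ x) (h : x ≤ a + b) :
    x^2 ≤ 2*a^2 + 2*b^2 := by
  have h2 := mul_self_le_mul_self hx h
  nlinarith [sq_nonneg (a-b)]

lemma par_lower (a b p q : ℝ) (h : p*p + q*q = 2*(a*a + b*b)) :
    a^2 + b^2 ≤ p^2 + q^2 := by nlinarith

lemma coeff_lower (m k1 k2 k3 x y z : ℝ) (h1 : m ≤ k1) (h2 : m ≤ k2) (h3 : m ≤ k3)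
    (hx : 0 ≤ x) (hy : 0 ≤ y) (hz : 0 ≤ z) :
    m*x + m*y + m*z ≤ k1*x + k2*y + k3*z :=
  add_le_add (add_le_add (mul_le_mul_of_nonneg_right h1 hx)
    (mul_le_mul_of_nonneg_right h2 hy)) (mul_le_mul_of_nonneg_right h3 hz)

set_option maxHeartbeats 1000000

/-- Coercivity of the static Bresse form on Dirichlet functions. -/
theorem bresse_form_coercive
    (k₁ k₂ k₃ l L : ℝ)
    (hk1 : 0 < k₁) (hk2 : 0 < k₂) (hk3 : 0 < k₃) (hl : 0 < l) (hL : 0 < L) :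
    ∃ c > 0, ∀ v1 v3 v5 : ℝ → ℂ,
      ContDiffOn ℝ 1 v1 (Icc 0 L) → ContDiffOn ℝ 1 v3 (Icc 0 L) →
      ContDiffOn ℝ 1 v5 (Icc 0 L) →
      v1 0 = 0 → v1 L = 0 → v3 0 = 0 → v3 L = 0 → v5 0 = 0 → v5 L = 0 →
      (∫ x in (0 : ℝ)..L,
        (k₁ * ‖deriv v1 x + v3 x + (l : ℂ) * v5 x‖ ^ 2 + k₂ * ‖deriv v3 x‖ ^ 2
          + k₃ * ‖deriv v5 x - (l : ℂ) * v1 x‖ ^ 2))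
      ≥ c * ∫ x in (0 : ℝ)..L,
        (‖deriv v1 x‖ ^ 2 + ‖deriv v3 x‖ ^ 2 + ‖deriv v5 x‖ ^ 2
          + ‖v1 x‖ ^ 2 + ‖v3 x‖ ^ 2 + ‖v5 x‖ ^ 2) := by
  have hK : (0:ℝ) < 6 + 4*L^2 + (1 + 5*l^2)*(12*L^2 + 6*L^4) := by positivity
  set K : ℝ := 6 + 4*L^2 + (1 + 5*l^2)*(12*L^2 + 6*L^4) with hKdef
  set m : ℝ := min k₁ (min k₂ k₃) with hmdef
  have hm : 0 < m := lt_min hk1 (lt_min hk2 hk3)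
  have hmk1 : m ≤ k₁ := min_le_left _ _
  have hmk2 : m ≤ k₂ := le_trans (min_le_right _ _) (min_le_left _ _)
  have hmk3 : m ≤ k₃ := le_trans (min_le_right _ _) (min_le_right _ _)
  refine ⟨m / K, div_pos hm hK, ?_⟩
  intro v1 v3 v5 hv1 hv3 hv5 h10 h1L h30 h3L h50 h5L
  have hL' : (0:ℝ) ≤ L := hL.le
  set d1 : ℝ → ℂ := derivWithin v1 (Icc 0 L) with hd1def
  set d3 : ℝ → ℂ := derivWithin v3 (Icc 0 L) with hd3def
  set d5 : ℝ → ℂ := derivWithin v5 (Icc 0 L) with hd5def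
  have hU : UniqueDiffOn ℝ (Icc (0:ℝ) L) := uniqueDiffOn_Icc hL
  have hc1 : ContinuousOn v1 (Icc 0 L) := hv1.continuousOn
  have hc3 : ContinuousOn v3 (Icc 0 L) := hv3.continuousOn
  have hc5 : ContinuousOn v5 (Icc 0 L) := hv5.continuousOn
  have hd1c : ContinuousOn d1 (Icc 0 L) := hv1.continuousOn_derivWithin hU le_rfl
  have hd3c : ContinuousOn d3 (Icc 0 L) := hv3.continuousOn_derivWithin hU le_rfl
  have hd5c : ContinuousOn d5 (Icc 0 L) := hv5.continuousOn_derivWithin hU le_rfl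
  have hmem : ∀ x ∈ Ioo (0:ℝ) L, Icc (0:ℝ) L ∈ nhds x := fun x hx => Icc_mem_nhds hx.1 hx.2
  have heq1 : ∀ x ∈ Ioo (0:ℝ) L, deriv v1 x = d1 x := fun x hx =>
    (derivWithin_of_mem_nhds (hmem x hx)).symm
  have heq3 : ∀ x ∈ Ioo (0:ℝ) L, deriv v3 x = d3 x := fun x hx =>
    (derivWithin_of_mem_nhds (hmem x hx)).symm
  have heq5 : ∀ x ∈ Ioo (0:ℝ) L, deriv v5 x = d5 x := fun x hx =>
    (derivWithin_of_mem_nhds (hmem x hx)).symm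
  have hder1 : ∀ x ∈ Ioo (0:ℝ) L, HasDerivAt v1 (d1 x) x := by
    intro x hx
    rw [← heq1 x hx]
    exact ((hv1.differentiableOn one_ne_zero x (Ioo_subset_Icc_self hx)).differentiableAt
      (hmem x hx)).hasDerivAt
  have hder3 : ∀ x ∈ Ioo (0:ℝ) L, HasDerivAt v3 (d3 x) x := by
    intro x hx
    rw [← heq3 x hx]
    exact ((hv3.differentiableOn one_ne_zero x (Ioo_subset_Icc_self hx)).differentiableAt
      (hmem x hx)).hasDerivAt
  have hder5 : ∀ x ∈ Ioo (0:ℝ) L, HasDerivAt v5 (d5 x) x := by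
    intro x hx
    rw [← heq5 x hx]
    exact ((hv5.differentiableOn one_ne_zero x (Ioo_subset_Icc_self hx)).differentiableAt
      (hmem x hx)).hasDerivAt
  set A : ℝ → ℂ := fun x => d1 x + v3 x + (l:ℂ) * v5 x with hAdef
  set C : ℝ → ℂ := fun x => d5 x - (l:ℂ) * v1 x with hCdef
  have hcA : ContinuousOn A (Icc 0 L) := (hd1c.add hc3).add (continuousOn_const.mul hc5)
  have hcC : ContinuousOn C (Icc 0 L) := hd5c.sub (continuousOn_const.mul hc1)
  -- a.e. equality to replace deriv by derivWithin in both integrals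
  have haeL : ∀ᵐ (x:ℝ), x ≠ L := by
    rw [ae_iff]
    have : {x : ℝ | ¬ x ≠ L} = {L} := by ext x; simp
    rw [this]; exact Real.volume_singleton
  have hIoo : ∀ᵐ (x:ℝ), x ∈ uIoc (0:ℝ) L → x ∈ Ioo (0:ℝ) L := by
    filter_upwards [haeL] with x hxL hxI
    rw [uIoc_of_le hL'] at hxI
    exact ⟨hxI.1, lt_of_le_of_ne hxI.2 hxL⟩
  have hgoalL : (∫ x in (0:ℝ)..L,
        (k₁ * ‖deriv v1 x + v3 x + (l : ℂ) * v5 x‖ ^ 2 + k₂ * ‖deriv v3 x‖ ^ 2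
          + k₃ * ‖deriv v5 x - (l : ℂ) * v1 x‖ ^ 2))
      = ∫ x in (0:ℝ)..L, (k₁ * ‖A x‖^2 + k₂ * ‖d3 x‖^2 + k₃ * ‖C x‖^2) := by
    apply intervalIntegral.integral_congr_ae
    filter_upwards [hIoo] with x hx hxI
    rw [heq1 x (hx hxI), heq3 x (hx hxI), heq5 x (hx hxI)]
  have hgoalR : (∫ x in (0:ℝ)..L,
        (‖deriv v1 x‖ ^ 2 + ‖deriv v3 x‖ ^ 2 + ‖deriv v5 x‖ ^ 2
          + ‖v1 x‖ ^ 2 + ‖v3 x‖ ^ 2 + ‖v5 x‖ ^ 2))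
      = ∫ x in (0:ℝ)..L, (‖d1 x‖^2 + ‖d3 x‖^2 + ‖d5 x‖^2
          + ‖v1 x‖^2 + ‖v3 x‖^2 + ‖v5 x‖^2) := by
    apply intervalIntegral.integral_congr_ae
    filter_upwards [hIoo] with x hx hxI
    rw [heq1 x (hx hxI), heq3 x (hx hxI), heq5 x (hx hxI)]
  rw [ge_iff_le, hgoalL, hgoalR]
  -- named integrals
  set IA : ℝ := ∫ x in (0:ℝ)..L, ‖A x‖^2 with hIAdef
  set IB : ℝ := ∫ x in (0:ℝ)..L, ‖d3 x‖^2 with hIBdef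
  set IC : ℝ := ∫ x in (0:ℝ)..L, ‖C x‖^2 with hICdef
  set D1 : ℝ := ∫ x in (0:ℝ)..L, ‖d1 x‖^2 with hD1def
  set D5 : ℝ := ∫ x in (0:ℝ)..L, ‖d5 x‖^2 with hD5def
  set J1 : ℝ := ∫ x in (0:ℝ)..L, ‖v1 x‖^2 with hJ1def
  set J3 : ℝ := ∫ x in (0:ℝ)..L, ‖v3 x‖^2 with hJ3def
  set J5 : ℝ := ∫ x in (0:ℝ)..L, ‖v5 x‖^2 with hJ5def
  -- integrability bank
  have iiA : IntervalIntegrable (fun x => ‖A x‖^2) volume 0 L := my_ii hL' (hcA.norm.pow 2)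
  have iiB : IntervalIntegrable (fun x => ‖d3 x‖^2) volume 0 L := my_ii hL' (hd3c.norm.pow 2)
  have iiC : IntervalIntegrable (fun x => ‖C x‖^2) volume 0 L := my_ii hL' (hcC.norm.pow 2)
  have ii1 : IntervalIntegrable (fun x => ‖d1 x‖^2) volume 0 L := my_ii hL' (hd1c.norm.pow 2)
  have ii5 : IntervalIntegrable (fun x => ‖d5 x‖^2) volume 0 L := my_ii hL' (hd5c.norm.pow 2)
  have jj1 : IntervalIntegrable (fun x => ‖v1 x‖^2) volume 0 L := my_ii hL' (hc1.norm.pow 2)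
  have jj3 : IntervalIntegrable (fun x => ‖v3 x‖^2) volume 0 L := my_ii hL' (hc3.norm.pow 2)
  have jj5 : IntervalIntegrable (fun x => ‖v5 x‖^2) volume 0 L := my_ii hL' (hc5.norm.pow 2)
  -- nonnegativity
  have nnIA : 0 ≤ IA := intervalIntegral.integral_nonneg hL' (fun x _ => sq_nonneg _)
  have nnIB : 0 ≤ IB := intervalIntegral.integral_nonneg hL' (fun x _ => sq_nonneg _)
  have nnIC : 0 ≤ IC := intervalIntegral.integral_nonneg hL' (fun x _ => sq_nonneg _)
  have nnJ1 : 0 ≤ J1 := intervalIntegral.integral_nonneg hL' (fun x _ => sq_nonneg _)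
  have nnJ3 : 0 ≤ J3 := intervalIntegral.integral_nonneg hL' (fun x _ => sq_nonneg _)
  have nnJ5 : 0 ≤ J5 := intervalIntegral.integral_nonneg hL' (fun x _ => sq_nonneg _)
  -- Poincaré for v3
  have hP3 : J3 ≤ L^2 * IB := poincare_aux hL v3 d3 hc3 hd3c hder3 h30
  -- rotation estimates
  have hrot1 : (∫ x in (0:ℝ)..L, ‖v1 x + Complex.I * v5 x‖^2)
      ≤ L^2 * ∫ x in (0:ℝ)..L, ‖(d1 x + Complex.I * d5 x) - ((l:ℂ)*Complex.I) * (v1 x + Complex.I * v5 x)‖^2 := by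
    apply rot_aux hL ((l:ℂ)*Complex.I) (by simp) _ _
      (hc1.add (continuousOn_const.mul hc5)) (hd1c.add (continuousOn_const.mul hd5c))
      (fun x hx => (hder1 x hx).add ((hder5 x hx).const_mul Complex.I))
      (by simp [h10, h50])
  have hrot2 : (∫ x in (0:ℝ)..L, ‖v1 x - Complex.I * v5 x‖^2)
      ≤ L^2 * ∫ x in (0:ℝ)..L, ‖(d1 x - Complex.I * d5 x) - (-(l:ℂ)*Complex.I) * (v1 x - Complex.I * v5 x)‖^2 := by
    apply rot_aux hL (-(l:ℂ)*Complex.I) (by simp) _ _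
      (hc1.sub (continuousOn_const.mul hc5)) (hd1c.sub (continuousOn_const.mul hd5c))
      (fun x hx => (hder1 x hx).sub ((hder5 x hx).const_mul Complex.I))
      (by simp [h10, h50])
  -- identify the rotated derivatives
  have hid1 : ∀ x : ℝ, (d1 x + Complex.I * d5 x) - ((l:ℂ)*Complex.I) * (v1 x + Complex.I * v5 x)
      = (A x - v3 x) + Complex.I * C x := by
    intro x
    rw [hAdef, hCdef]
    linear_combination (-(l:ℂ) * v5 x) * Complex.I_mul_I
  have hid2 : ∀ x : ℝ, (d1 x - Complex.I * d5 x) - (-(l:ℂ)*Complex.I) * (v1 x - Complex.I * v5 x)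
      = (A x - v3 x) - Complex.I * C x := by
    intro x
    rw [hAdef, hCdef]
    linear_combination (-(l:ℂ) * v5 x) * Complex.I_mul_I
  -- pointwise bounds for the rotated derivatives
  have hptE1 : ∀ x : ℝ, ‖(A x - v3 x) + Complex.I * C x‖^2
      ≤ 3*‖A x‖^2 + 3*‖v3 x‖^2 + 3*‖C x‖^2 := by
    intro x
    have h1 : ‖(A x - v3 x) + Complex.I * C x‖ ≤ ‖A x‖ + ‖v3 x‖ + ‖C x‖ := by
      calc ‖(A x - v3 x) + Complex.I * C x‖ ≤ ‖A x - v3 x‖ + ‖Complex.I * C x‖ := norm_add_le _ _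
        _ ≤ (‖A x‖ + ‖v3 x‖) + ‖C x‖ := by
            refine add_le_add (norm_sub_le _ _) ?_
            rw [norm_mul, Complex.norm_I, one_mul]
        _ = ‖A x‖ + ‖v3 x‖ + ‖C x‖ := by ring
    exact sq_le_three _ _ _ _ (norm_nonneg _) h1
  have hptE2 : ∀ x : ℝ, ‖(A x - v3 x) - Complex.I * C x‖^2
      ≤ 3*‖A x‖^2 + 3*‖v3 x‖^2 + 3*‖C x‖^2 := by
    intro x
    have h1 : ‖(A x - v3 x) - Complex.I * C x‖ ≤ ‖A x‖ + ‖v3 x‖ + ‖C x‖ := by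
      calc ‖(A x - v3 x) - Complex.I * C x‖ ≤ ‖A x - v3 x‖ + ‖Complex.I * C x‖ := norm_sub_le _ _
        _ ≤ (‖A x‖ + ‖v3 x‖) + ‖C x‖ := by
            refine add_le_add (norm_sub_le _ _) ?_
            rw [norm_mul, Complex.norm_I, one_mul]
        _ = ‖A x‖ + ‖v3 x‖ + ‖C x‖ := by ring
    exact sq_le_three _ _ _ _ (norm_nonneg _) h1
  -- integral of 3‖A‖²+3‖v3‖²+3‖C‖²
  have hsplit3 : (∫ x in (0:ℝ)..L, (3*‖A x‖^2 + 3*‖v3 x‖^2 + 3*‖C x‖^2))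
      = 3*IA + 3*J3 + 3*IC := by
    rw [intervalIntegral.integral_add ((iiA.const_mul 3).add (jj3.const_mul 3)) (iiC.const_mul 3),
      intervalIntegral.integral_add (iiA.const_mul 3) (jj3.const_mul 3),
      intervalIntegral.integral_const_mul, intervalIntegral.integral_const_mul,
      intervalIntegral.integral_const_mul]
  have hE1int : (∫ x in (0:ℝ)..L, ‖(A x - v3 x) + Complex.I * C x‖^2) ≤ 3*IA + 3*J3 + 3*IC := by
    rw [← hsplit3]
    apply intervalIntegral.integral_mono_on hL'
      (my_ii hL' (((hcA.sub hc3).add (continuousOn_const.mul hcC)).norm.pow 2))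
      (my_ii hL' (((continuousOn_const.mul (hcA.norm.pow 2)).add
        (continuousOn_const.mul (hc3.norm.pow 2))).add (continuousOn_const.mul (hcC.norm.pow 2))))
    exact fun x _ => hptE1 x
  have hE2int : (∫ x in (0:ℝ)..L, ‖(A x - v3 x) - Complex.I * C x‖^2) ≤ 3*IA + 3*J3 + 3*IC := by
    rw [← hsplit3]
    apply intervalIntegral.integral_mono_on hL'
      (my_ii hL' (((hcA.sub hc3).sub (continuousOn_const.mul hcC)).norm.pow 2))
      (my_ii hL' (((continuousOn_const.mul (hcA.norm.pow 2)).add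
        (continuousOn_const.mul (hc3.norm.pow 2))).add (continuousOn_const.mul (hcC.norm.pow 2))))
    exact fun x _ => hptE2 x
  simp_rw [hid1] at hrot1
  simp_rw [hid2] at hrot2
  -- parallelogram: J1 + J5 ≤ ∫‖v1+Iv5‖² + ∫‖v1-Iv5‖²
  have hpar : J1 + J5 ≤ (∫ x in (0:ℝ)..L, ‖v1 x + Complex.I * v5 x‖^2)
      + (∫ x in (0:ℝ)..L, ‖v1 x - Complex.I * v5 x‖^2) := by
    have hpt : ∀ x ∈ Icc (0:ℝ) L, ‖v1 x‖^2 + ‖v5 x‖^2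
        ≤ ‖v1 x + Complex.I * v5 x‖^2 + ‖v1 x - Complex.I * v5 x‖^2 := by
      intro x _
      have hlaw := parallelogram_law_with_norm ℂ (v1 x) (Complex.I * v5 x)
      have hI : ‖Complex.I * v5 x‖ = ‖v5 x‖ := by rw [norm_mul, Complex.norm_I, one_mul]
      rw [hI] at hlaw
      exact par_lower _ _ _ _ (by simpa only [sq] using hlaw)
    have hmono := intervalIntegral.integral_mono_on hL' (jj1.add jj5)
      ((my_ii hL' ((hc1.add (continuousOn_const.mul hc5)).norm.pow 2)).add
        (my_ii hL' ((hc1.sub (continuousOn_const.mul hc5)).norm.pow 2))) hpt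
    rw [intervalIntegral.integral_add jj1 jj5,
      intervalIntegral.integral_add
        (my_ii hL' ((hc1.add (continuousOn_const.mul hc5)).norm.pow 2))
        (my_ii hL' ((hc1.sub (continuousOn_const.mul hc5)).norm.pow 2))] at hmono
    exact hmono
  -- combined: J1 + J5 ≤ 2 L² (3IA+3J3+3IC)
  have hW : J1 + J5 ≤ 2 * L^2 * (3*IA + 3*J3 + 3*IC) := by
    have b1 := le_trans hrot1 (mul_le_mul_of_nonneg_left hE1int (sq_nonneg L))
    have b2 := le_trans hrot2 (mul_le_mul_of_nonneg_left hE2int (sq_nonneg L))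
    linarith
  -- pointwise bounds for d1 and d5
  have hD1b : D1 ≤ 3*IA + 3*J3 + 3*l^2*J5 := by
    have hsplit : (∫ x in (0:ℝ)..L, (3*‖A x‖^2 + 3*‖v3 x‖^2 + 3*l^2*‖v5 x‖^2))
        = 3*IA + 3*J3 + 3*l^2*J5 := by
      rw [intervalIntegral.integral_add ((iiA.const_mul 3).add (jj3.const_mul 3)) (jj5.const_mul _),
        intervalIntegral.integral_add (iiA.const_mul 3) (jj3.const_mul 3),
        intervalIntegral.integral_const_mul, intervalIntegral.integral_const_mul,
        intervalIntegral.integral_const_mul]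
    rw [← hsplit]
    apply intervalIntegral.integral_mono_on hL' ii1
      (my_ii hL' (((continuousOn_const.mul (hcA.norm.pow 2)).add
        (continuousOn_const.mul (hc3.norm.pow 2))).add (continuousOn_const.mul (hc5.norm.pow 2))))
    intro x _
    have hid : d1 x = A x - v3 x - (l:ℂ) * v5 x := by rw [hAdef]; ring
    have h1 : ‖d1 x‖ ≤ ‖A x‖ + ‖v3 x‖ + l * ‖v5 x‖ := by
      rw [hid]
      calc ‖A x - v3 x - (l:ℂ) * v5 x‖ ≤ ‖A x - v3 x‖ + ‖(l:ℂ) * v5 x‖ := norm_sub_le _ _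
        _ ≤ (‖A x‖ + ‖v3 x‖) + l * ‖v5 x‖ := by
            refine add_le_add (norm_sub_le _ _) ?_
            rw [norm_mul, Complex.norm_real, Real.norm_eq_abs, abs_of_pos hl]
        _ = ‖A x‖ + ‖v3 x‖ + l * ‖v5 x‖ := by ring
    have h2 := sq_le_three (‖d1 x‖) (‖A x‖) (‖v3 x‖) (l*‖v5 x‖) (norm_nonneg _) h1
    have h3 : 3*(l*‖v5 x‖)^2 = 3*l^2*‖v5 x‖^2 := by ring
    show ‖d1 x‖^2 ≤ 3*‖A x‖^2 + 3*‖v3 x‖^2 + 3*l^2*‖v5 x‖^2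
    linarith [h3 ▸ h2]
  have hD5b : D5 ≤ 2*IC + 2*l^2*J1 := by
    have hsplit : (∫ x in (0:ℝ)..L, (2*‖C x‖^2 + 2*l^2*‖v1 x‖^2)) = 2*IC + 2*l^2*J1 := by
      rw [intervalIntegral.integral_add (iiC.const_mul 2) (jj1.const_mul _),
        intervalIntegral.integral_const_mul, intervalIntegral.integral_const_mul]
    rw [← hsplit]
    apply intervalIntegral.integral_mono_on hL' ii5
      (my_ii hL' ((continuousOn_const.mul (hcC.norm.pow 2)).add
        (continuousOn_const.mul (hc1.norm.pow 2))))
    intro x _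
    have hid : d5 x = C x + (l:ℂ) * v1 x := by rw [hCdef]; ring
    have h1 : ‖d5 x‖ ≤ ‖C x‖ + l * ‖v1 x‖ := by
      rw [hid]
      calc ‖C x + (l:ℂ) * v1 x‖ ≤ ‖C x‖ + ‖(l:ℂ) * v1 x‖ := norm_add_le _ _
        _ ≤ ‖C x‖ + l * ‖v1 x‖ := by
            refine add_le_add le_rfl ?_
            rw [norm_mul, Complex.norm_real, Real.norm_eq_abs, abs_of_pos hl]
    have h2 := sq_le_two (‖d5 x‖) (‖C x‖) (l*‖v1 x‖) (norm_nonneg _) h1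
    have h3 : 2*(l*‖v1 x‖)^2 = 2*l^2*‖v1 x‖^2 := by ring
    show ‖d5 x‖^2 ≤ 2*‖C x‖^2 + 2*l^2*‖v1 x‖^2
    linarith [h3 ▸ h2]
  -- split RHS
  have hRHS : (∫ x in (0:ℝ)..L, (‖d1 x‖^2 + ‖d3 x‖^2 + ‖d5 x‖^2
      + ‖v1 x‖^2 + ‖v3 x‖^2 + ‖v5 x‖^2)) = D1 + IB + D5 + J1 + J3 + J5 := by
    rw [intervalIntegral.integral_add ((((ii1.add iiB).add ii5).add jj1).add jj3) jj5,
      intervalIntegral.integral_add (((ii1.add iiB).add ii5).add jj1) jj3,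
      intervalIntegral.integral_add ((ii1.add iiB).add ii5) jj1,
      intervalIntegral.integral_add (ii1.add iiB) ii5,
      intervalIntegral.integral_add ii1 iiB]
  -- lower bound for LHS
  have hLHS : m * (IA + IB + IC) ≤ ∫ x in (0:ℝ)..L,
      (k₁ * ‖A x‖^2 + k₂ * ‖d3 x‖^2 + k₃ * ‖C x‖^2) := by
    have hsplit : (∫ x in (0:ℝ)..L, (m*‖A x‖^2 + m*‖d3 x‖^2 + m*‖C x‖^2))
        = m * (IA + IB + IC) := by
      rw [intervalIntegral.integral_add ((iiA.const_mul m).add (iiB.const_mul m)) (iiC.const_mul m),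
        intervalIntegral.integral_add (iiA.const_mul m) (iiB.const_mul m),
        intervalIntegral.integral_const_mul, intervalIntegral.integral_const_mul,
        intervalIntegral.integral_const_mul]
      ring
    rw [← hsplit]
    apply intervalIntegral.integral_mono_on hL'
      (my_ii hL' (((continuousOn_const.mul (hcA.norm.pow 2)).add
        (continuousOn_const.mul (hd3c.norm.pow 2))).add (continuousOn_const.mul (hcC.norm.pow 2))))
      (my_ii hL' (((continuousOn_const.mul (hcA.norm.pow 2)).add
        (continuousOn_const.mul (hd3c.norm.pow 2))).add (continuousOn_const.mul (hcC.norm.pow 2))))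
    intro x _
    exact coeff_lower m k₁ k₂ k₃ _ _ _ hmk1 hmk2 hmk3 (sq_nonneg _) (sq_nonneg _) (sq_nonneg _)
  -- final arithmetic
  set S1 : ℝ := IA + IB + IC with hS1def
  have nnS1 : 0 ≤ S1 := by positivity
  have hIAS : IA ≤ S1 := by rw [hS1def]; linarith
  have hIBS : IB ≤ S1 := by rw [hS1def]; linarith
  have hICS : IC ≤ S1 := by rw [hS1def]; linarith
  have hJ3S : J3 ≤ L^2 * S1 := le_trans hP3 (mul_le_mul_of_nonneg_left hIBS (sq_nonneg L))
  have hWS : J1 + J5 ≤ (12*L^2 + 6*L^4) * S1 := by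
    have h1 : 3*IA + 3*J3 + 3*IC ≤ 3*S1 + 3*(L^2*S1) + 3*S1 := by
      have := mul_le_mul_of_nonneg_left hJ3S (by norm_num : (0:ℝ) ≤ 1)
      linarith
    have h2 := mul_le_mul_of_nonneg_left h1 (by positivity : (0:ℝ) ≤ 2*L^2)
    calc J1 + J5 ≤ 2*L^2 * (3*IA + 3*J3 + 3*IC) := hW
      _ ≤ 2*L^2 * (3*S1 + 3*(L^2*S1) + 3*S1) := h2
      _ = (12*L^2 + 6*L^4) * S1 := by ring
  have hRHSbound : D1 + IB + D5 + J1 + J3 + J5 ≤ K * S1 := by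
    have hJ1S : J1 ≤ (12*L^2 + 6*L^4) * S1 := by linarith
    have hJ5S : J5 ≤ (12*L^2 + 6*L^4) * S1 := by linarith
    have hD1S : D1 ≤ 3*S1 + 3*(L^2*S1) + 3*l^2*((12*L^2 + 6*L^4) * S1) := by
      have h5 := mul_le_mul_of_nonneg_left hJ5S (by positivity : (0:ℝ) ≤ 3*l^2)
      have h3 := mul_le_mul_of_nonneg_left hJ3S (by norm_num : (0:ℝ) ≤ 3)
      linarith
    have hD5S : D5 ≤ 2*S1 + 2*l^2*((12*L^2 + 6*L^4) * S1) := by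
      have h1 := mul_le_mul_of_nonneg_left hJ1S (by positivity : (0:ℝ) ≤ 2*l^2)
      linarith
    have hKexp : K * S1 = 6*S1 + 4*(L^2*S1) + (12*L^2 + 6*L^4)*S1
        + 5*l^2*((12*L^2 + 6*L^4) * S1) := by rw [hKdef]; ring
    rw [hKexp]
    linarith
  rw [hRHS]
  calc m / K * (D1 + IB + D5 + J1 + J3 + J5) ≤ m / K * (K * S1) := by
        apply mul_le_mul_of_nonneg_left hRHSbound (le_of_lt (div_pos hm hK))
    _ = m * S1 := by field_simp
    _ ≤ _ := hLHS
end
end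

section
/- Let λ be a nonzero real number. Suppose v¹, v³ : [0,L] → ℂ are C², v⁵ : [0,L] → ℂ is C¹ and twice continuously differentiable on [0,β] and on [β,L], all three vanish at x = 0 and x = L, and for all x ∈ (0,β) ∪ (β,L): λ² ρ₁ v¹ + k₁ (v¹′ + v³ + l v⁵)′ + l k₃ (v⁵′ − l v¹) = 0, λ² ρ₂ v³ + k₂ v³′′ − k₁ (v¹′ + v³ + l v⁵) = 0, and λ² ρ₁ v⁵ + k₃ (v⁵′ − l v¹)′ − l k₁ (v¹′ + v³ + l v⁵) − i λ a(x) v⁵ = 0 (′ denoting d/dx). Then v¹ ≡ 0, v³ ≡ 0 and v⁵ ≡ 0 on [0,L]. (This says the Bresse generator has no purely imaginary eigenvalues iλ, λ ≠ 0, which yields strong stability of the semigroup.) -/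
open Set Filter MeasureTheory Topology ComplexConjugate

noncomputable section

lemma gronwall_zero {E : Type*} [NormedAddCommGroup E] [NormedSpace ℝ E]
    {f f' : ℝ → E} {a b K : ℝ} (hK : 0 ≤ K)
    (hcont : ContinuousOn f (Icc a b))
    (hderiv : ∀ t ∈ Ioo a b, HasDerivAt f (f' t) t)
    (hbound : ∀ t ∈ Ioo a b, ‖f' t‖ ≤ K * ‖f t‖)
    (ha : f a = 0) : ∀ t ∈ Icc a b, f t = 0 := by
  intro t ht
  rcases eq_or_lt_of_le ht.1 with rfl | hat
  · exact ha
  have key : ∀ s ∈ Ioo a t, ‖f t‖ ≤ ‖f s‖ * Real.exp (K * (b - a)) := by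
    intro s hs
    have hsab : s ∈ Icc a b := ⟨hs.1.le, hs.2.le.trans ht.2⟩
    have h1 : ∀ x ∈ Icc s b, ‖f x‖ ≤ gronwallBound ‖f s‖ K 0 (x - s) :=
      norm_le_gronwallBound_of_norm_deriv_right_le
        (hcont.mono (Icc_subset_Icc hsab.1 le_rfl))
        (fun x hx => (hderiv x ⟨hs.1.trans_le hx.1, hx.2⟩).hasDerivWithinAt)
        le_rfl
        (fun x hx => by
          simpa using hbound x ⟨hs.1.trans_le hx.1, hx.2⟩)
    have h2 := h1 t ⟨hs.2.le, ht.2⟩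
    rw [gronwallBound_ε0] at h2
    refine h2.trans (mul_le_mul_of_nonneg_left ?_ (norm_nonneg _))
    exact Real.exp_le_exp.2 (mul_le_mul_of_nonneg_left (by linarith [hsab.1, ht.2, hs.2]) hK)
  have hne : (𝓝[Ioo a t] a).NeBot := by
    refine mem_closure_iff_nhdsWithin_neBot.1 ?_
    rw [closure_Ioo hat.ne]
    exact ⟨le_rfl, hat.le⟩
  have htend : Tendsto (fun s => ‖f s‖ * Real.exp (K * (b - a))) (𝓝[Ioo a t] a)
      (𝓝 (‖f a‖ * Real.exp (K * (b - a)))) := by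
    refine Tendsto.mul ?_ tendsto_const_nhds
    have : ContinuousWithinAt f (Icc a b) a := hcont a ⟨le_rfl, hat.le.trans ht.2⟩
    exact (this.mono (fun x hx => ⟨hx.1.le, hx.2.le.trans ht.2⟩)).norm
  have h0 : ‖f a‖ * Real.exp (K * (b - a)) = 0 := by simp [ha]
  rw [h0] at htend
  have : ‖f t‖ ≤ 0 :=
    ge_of_tendsto htend (eventually_nhdsWithin_of_forall key)
  simpa using norm_le_zero_iff.1 this

lemma hasDerivAt_of_C1 {f : ℝ → ℂ} {c d x : ℝ}
    (hf : ContDiffOn ℝ 1 f (Icc c d)) (hx : x ∈ Ioo c d) :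
    HasDerivAt f (deriv f x) x := by
  have h := (hf.mono Ioo_subset_Icc_self).differentiableOn one_ne_zero
  exact (h.differentiableAt (isOpen_Ioo.mem_nhds hx)).hasDerivAt

lemma hasDerivAt_deriv_of_C2 {f : ℝ → ℂ} {c d x : ℝ}
    (hf : ContDiffOn ℝ 2 f (Icc c d)) (hx : x ∈ Ioo c d) :
    HasDerivAt (deriv f) (deriv (deriv f) x) x := by
  have hd : ContDiffOn ℝ 1 (deriv f) (Ioo c d) :=
    (hf.mono Ioo_subset_Icc_self).deriv_of_isOpen isOpen_Ioo (by norm_num)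
  exact ((hd.differentiableOn one_ne_zero).differentiableAt (isOpen_Ioo.mem_nhds hx)).hasDerivAt

lemma hasDerivAt_im {g : ℝ → ℂ} {g' : ℂ} {x : ℝ} (h : HasDerivAt g g' x) :
    HasDerivAt (fun y => (g y).im) g'.im x := by
  have := Complex.imCLM.hasFDerivAt.comp_hasDerivAt x h
  simp at this
  exact this

lemma hasDerivAt_conj {g : ℝ → ℂ} {g' : ℂ} {x : ℝ} (h : HasDerivAt g g' x) :
    HasDerivAt (fun y => conj (g y)) (conj g') x := h.star

lemma hasDerivAt_normSq {g : ℝ → ℂ} {g' : ℂ} {x : ℝ} (h : HasDerivAt g g' x) :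
    HasDerivAt (fun y => Complex.normSq (g y))
      (2 * (g x).re * g'.re + 2 * (g x).im * g'.im) x := by
  have hre : HasDerivAt (fun y => (g y).re) g'.re x := by
    have := Complex.reCLM.hasFDerivAt.comp_hasDerivAt x h
    simp at this
    exact this
  have him : HasDerivAt (fun y => (g y).im) g'.im x := hasDerivAt_im h
  have h2 := (hre.mul hre).add (him.mul him)
  have heq : (fun y => (g y).re * (g y).re + (g y).im * (g y).im)
      = fun y => Complex.normSq (g y) := by
    funext y; rw [Complex.normSq_apply]
  replace h2 : HasDerivAt (fun y => (g y).re * (g y).re + (g y).im * (g y).im)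
      (g'.re * (g x).re + (g x).re * g'.re + (g'.im * (g x).im + (g x).im * g'.im)) x := h2
  rw [heq] at h2
  convert h2 using 1
  ring

lemma zero_on_Icc_of_zero_on_Ioo {E : Type*} [NormedAddCommGroup E]
    {g : ℝ → E} {c d : ℝ} (hcd : c < d)
    (hg : ContinuousOn g (Icc c d)) (h0 : ∀ x ∈ Ioo c d, g x = 0) :
    ∀ x ∈ Icc c d, g x = 0 := by
  have hend : ∀ y, y ∈ Icc c d → (𝓝[Ioo c d] y).NeBot → g y = 0 := by
    intro y hy hne
    have h1 : Tendsto g (𝓝[Ioo c d] y) (𝓝 (g y)) :=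
      (hg y hy).mono Ioo_subset_Icc_self
    have h2 : Tendsto g (𝓝[Ioo c d] y) (𝓝 0) :=
      tendsto_const_nhds.congr' (by
        filter_upwards [self_mem_nhdsWithin] with z hz using (h0 z hz).symm)
    exact tendsto_nhds_unique h1 h2
  intro x hx
  rcases eq_or_lt_of_le hx.1 with h1 | h1
  · refine hend x hx (mem_closure_iff_nhdsWithin_neBot.1 ?_)
    rw [closure_Ioo hcd.ne]
    exact ⟨hx.1, hx.2⟩
  rcases eq_or_lt_of_le hx.2 with h2 | h2
  · refine hend x hx (mem_closure_iff_nhdsWithin_neBot.1 ?_)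
    rw [closure_Ioo hcd.ne]
    exact ⟨hx.1, hx.2⟩
  · exact h0 x ⟨h1, h2⟩

lemma norm_lin3 {α₁ α₂ α₃ z1 z2 z3 : ℂ} {N : ℝ}
    (h1 : ‖z1‖ ≤ N) (h2 : ‖z2‖ ≤ N) (h3 : ‖z3‖ ≤ N) (hN : 0 ≤ N) :
    ‖α₁ * z1 + α₂ * z2 + α₃ * z3‖ ≤ (‖α₁‖ + ‖α₂‖ + ‖α₃‖) * N := by
  calc ‖α₁ * z1 + α₂ * z2 + α₃ * z3‖ ≤ ‖α₁ * z1 + α₂ * z2‖ + ‖α₃ * z3‖ := norm_add_le _ _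
    _ ≤ ‖α₁ * z1‖ + ‖α₂ * z2‖ + ‖α₃ * z3‖ := by
        have := norm_add_le (α₁ * z1) (α₂ * z2); linarith
    _ ≤ ‖α₁‖ * N + ‖α₂‖ * N + ‖α₃‖ * N := by
        rw [norm_mul, norm_mul, norm_mul]
        gcongr
    _ = (‖α₁‖ + ‖α₂‖ + ‖α₃‖) * N := by ring

lemma bresse_alg (ρ₁ ρ₂ k₁ k₂ k₃ l lam a : ℝ)
    (V1 V3 V5 D1 D3 D5 DD1 DD3 DD5 : ℂ)
    (e1 : ((lam ^ 2 * ρ₁ : ℝ) : ℂ) * V1 + (k₁ : ℂ) * (DD1 + D3 + (l:ℂ) * D5)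
        + ((l * k₃ : ℝ) : ℂ) * (D5 - (l:ℂ) * V1) = 0)
    (e2 : ((lam ^ 2 * ρ₂ : ℝ) : ℂ) * V3 + (k₂ : ℂ) * DD3 - (k₁ : ℂ) * (D1 + V3 + (l:ℂ) * V5) = 0)
    (e3 : ((lam ^ 2 * ρ₁ : ℝ) : ℂ) * V5 + (k₃ : ℂ) * (DD5 - (l:ℂ) * D1)
        - ((l * k₁ : ℝ) : ℂ) * (D1 + V3 + (l:ℂ) * V5) - Complex.I * (lam:ℂ) * (a:ℂ) * V5 = 0) :
    lam * ((k₁:ℂ) * ((DD1 + D3 + (l:ℂ)*D5) * conj V1 + (D1 + V3 + (l:ℂ)*V5) * conj D1)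
      + (k₂:ℂ) * (DD3 * conj V3 + D3 * conj D3)
      + (k₃:ℂ) * ((DD5 - (l:ℂ)*D1) * conj V5 + (D5 - (l:ℂ)*V1) * conj D5)).im
      = lam^2 * a * Complex.normSq V5 := by
  have key : (k₁:ℂ) * ((DD1 + D3 + (l:ℂ)*D5) * conj V1 + (D1 + V3 + (l:ℂ)*V5) * conj D1)
      + (k₂:ℂ) * (DD3 * conj V3 + D3 * conj D3)
      + (k₃:ℂ) * ((DD5 - (l:ℂ)*D1) * conj V5 + (D5 - (l:ℂ)*V1) * conj D5)
      = (k₁:ℂ) * ((D1 + V3 + (l:ℂ)*V5) * conj (D1 + V3 + (l:ℂ)*V5))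
        + (k₂:ℂ) * (D3 * conj D3)
        + (k₃:ℂ) * ((D5 - (l:ℂ)*V1) * conj (D5 - (l:ℂ)*V1))
        - ((lam^2 : ℝ):ℂ) * ((ρ₁:ℂ) * (V1 * conj V1 + V5 * conj V5) + (ρ₂:ℂ) * (V3 * conj V3))
        + Complex.I * (lam:ℂ) * (a:ℂ) * (V5 * conj V5) := by
    simp only [map_add, map_sub, map_mul, Complex.conj_ofReal]
    push_cast at e1 e2 e3 ⊢
    linear_combination (conj V1) * e1 + (conj V3) * e2 + (conj V5) * e3
  rw [key]
  rw [Complex.mul_conj, Complex.mul_conj, Complex.mul_conj, Complex.mul_conj,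
    Complex.mul_conj, Complex.mul_conj]
  simp [Complex.add_im, Complex.sub_im, Complex.mul_im, ← Complex.ofReal_pow]
  ring

set_option maxHeartbeats 2000000 in
/-- The Bresse generator has no purely imaginary eigenvalues `iλ`, `λ ≠ 0`. -/
theorem bresse_no_imaginary_eigenvalues
    (ρ₁ ρ₂ k₁ k₂ k₃ l L β a₀ : ℝ)
    (hrho1 : 0 < ρ₁) (hrho2 : 0 < ρ₂) (hk1 : 0 < k₁) (hk2 : 0 < k₂) (hk3 : 0 < k₃)
    (hl : 0 < l) (hL : 0 < L) (ha0 : 0 < a₀) (hbeta : 0 < β) (hbetaL : β < L)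
    (lam : ℝ) (hlam : lam ≠ 0)
    (v1 v3 v5 : ℝ → ℂ)
    (hv1 : ContDiffOn ℝ 2 v1 (Icc 0 L)) (hv3 : ContDiffOn ℝ 2 v3 (Icc 0 L))
    (hv5 : ContDiffOn ℝ 1 v5 (Icc 0 L))
    (hv5l : ContDiffOn ℝ 2 v5 (Icc 0 β)) (hv5r : ContDiffOn ℝ 2 v5 (Icc β L))
    (hbc : v1 0 = 0 ∧ v1 L = 0 ∧ v3 0 = 0 ∧ v3 L = 0 ∧ v5 0 = 0 ∧ v5 L = 0)
    (heq1 : ∀ x ∈ Ioo (0 : ℝ) β ∪ Ioo β L,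
      ((lam ^ 2 * ρ₁ : ℝ) : ℂ) * v1 x
        + (k₁ : ℂ) * deriv (fun y => deriv v1 y + v3 y + (l : ℂ) * v5 y) x
        + ((l * k₃ : ℝ) : ℂ) * (deriv v5 x - (l : ℂ) * v1 x) = 0)
    (heq2 : ∀ x ∈ Ioo (0 : ℝ) β ∪ Ioo β L,
      ((lam ^ 2 * ρ₂ : ℝ) : ℂ) * v3 x + (k₂ : ℂ) * deriv (deriv v3) x
        - (k₁ : ℂ) * (deriv v1 x + v3 x + (l : ℂ) * v5 x) = 0)
    (heq3 : ∀ x ∈ Ioo (0 : ℝ) β ∪ Ioo β L,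
      ((lam ^ 2 * ρ₁ : ℝ) : ℂ) * v5 x
        + (k₃ : ℂ) * deriv (fun y => deriv v5 y - (l : ℂ) * v1 y) x
        - ((l * k₁ : ℝ) : ℂ) * (deriv v1 x + v3 x + (l : ℂ) * v5 x)
        - Complex.I * (lam : ℂ) * ((if x < β then a₀ else 0 : ℝ) : ℂ) * v5 x = 0) :
    ∀ x ∈ Icc (0 : ℝ) L, v1 x = 0 ∧ v3 x = 0 ∧ v5 x = 0 := by
  obtain ⟨hb10, hb1L, hb30, hb3L, hb50, hb5L⟩ := hbc
  have hUD : UniqueDiffOn ℝ (Icc (0:ℝ) L) := uniqueDiffOn_Icc hL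
  have hIccβ : Icc (0:ℝ) β ⊆ Icc 0 L := Icc_subset_Icc le_rfl hbetaL.le
  have hIccβ' : Icc β L ⊆ Icc (0:ℝ) L := Icc_subset_Icc hbeta.le le_rfl
  have hsub1 : Ioo (0:ℝ) β ⊆ Ioo 0 L := Ioo_subset_Ioo le_rfl hbetaL.le
  have hsub2 : Ioo β L ⊆ Ioo (0:ℝ) L := Ioo_subset_Ioo hbeta.le le_rfl
  have hSsub : Ioo (0:ℝ) β ∪ Ioo β L ⊆ Ioo 0 L := union_subset hsub1 hsub2
  set d1 : ℝ → ℂ := derivWithin v1 (Icc 0 L) with hd1def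
  set d3 : ℝ → ℂ := derivWithin v3 (Icc 0 L) with hd3def
  set d5 : ℝ → ℂ := derivWithin v5 (Icc 0 L) with hd5def
  have hc1 : ContinuousOn v1 (Icc 0 L) := hv1.continuousOn
  have hc3 : ContinuousOn v3 (Icc 0 L) := hv3.continuousOn
  have hc5 : ContinuousOn v5 (Icc 0 L) := hv5.continuousOn
  have hcd1 : ContinuousOn d1 (Icc 0 L) := hv1.continuousOn_derivWithin hUD one_le_two
  have hcd3 : ContinuousOn d3 (Icc 0 L) := hv3.continuousOn_derivWithin hUD one_le_two
  have hcd5 : ContinuousOn d5 (Icc 0 L) := hv5.continuousOn_derivWithin hUD le_rfl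
  have hd1eq : ∀ x ∈ Ioo (0:ℝ) L, d1 x = deriv v1 x := fun x hx =>
    derivWithin_of_mem_nhds (Icc_mem_nhds hx.1 hx.2)
  have hd3eq : ∀ x ∈ Ioo (0:ℝ) L, d3 x = deriv v3 x := fun x hx =>
    derivWithin_of_mem_nhds (Icc_mem_nhds hx.1 hx.2)
  have hd5eq : ∀ x ∈ Ioo (0:ℝ) L, d5 x = deriv v5 x := fun x hx =>
    derivWithin_of_mem_nhds (Icc_mem_nhds hx.1 hx.2)
  have hD1 : ∀ x ∈ Ioo (0:ℝ) L, HasDerivAt v1 (deriv v1 x) x := fun x hx =>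
    hasDerivAt_of_C1 (hv1.of_le one_le_two) hx
  have hD3 : ∀ x ∈ Ioo (0:ℝ) L, HasDerivAt v3 (deriv v3 x) x := fun x hx =>
    hasDerivAt_of_C1 (hv3.of_le one_le_two) hx
  have hD5 : ∀ x ∈ Ioo (0:ℝ) L, HasDerivAt v5 (deriv v5 x) x := fun x hx =>
    hasDerivAt_of_C1 hv5 hx
  have hDD1 : ∀ x ∈ Ioo (0:ℝ) L, HasDerivAt (deriv v1) (deriv (deriv v1) x) x := fun x hx =>
    hasDerivAt_deriv_of_C2 hv1 hx
  have hDD3 : ∀ x ∈ Ioo (0:ℝ) L, HasDerivAt (deriv v3) (deriv (deriv v3) x) x := fun x hx =>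
    hasDerivAt_deriv_of_C2 hv3 hx
  have hDD5 : ∀ x ∈ Ioo (0:ℝ) β ∪ Ioo β L, HasDerivAt (deriv v5) (deriv (deriv v5) x) x := by
    rintro x (hx | hx)
    · exact hasDerivAt_deriv_of_C2 hv5l hx
    · exact hasDerivAt_deriv_of_C2 hv5r hx
  -- Step 1: the energy flux F and v5 = 0 on [0, β]
  set F : ℝ → ℝ := fun x => lam * ((k₁:ℂ) * ((d1 x + v3 x + (l:ℂ) * v5 x) * conj (v1 x))
      + (k₂:ℂ) * (d3 x * conj (v3 x))
      + (k₃:ℂ) * ((d5 x - (l:ℂ) * v1 x) * conj (v5 x))).im with hFdef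
  have hFcont : ContinuousOn F (Icc 0 L) := by
    apply continuousOn_const.mul
    apply Complex.continuous_im.comp_continuousOn
    exact ((continuousOn_const.mul (((hcd1.add hc3).add (continuousOn_const.mul hc5)).mul
        (Complex.continuous_conj.comp_continuousOn hc1))).add
      (continuousOn_const.mul (hcd3.mul (Complex.continuous_conj.comp_continuousOn hc3)))).add
      (continuousOn_const.mul ((hcd5.sub (continuousOn_const.mul hc1)).mul
        (Complex.continuous_conj.comp_continuousOn hc5)))
  have hF0 : F 0 = 0 := by simp [hFdef, hb10, hb30, hb50]
  have hFL : F L = 0 := by simp [hFdef, hb1L, hb3L, hb5L]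
  have hFderiv : ∀ x ∈ Ioo (0:ℝ) β ∪ Ioo β L,
      HasDerivAt F (lam^2 * (if x < β then a₀ else 0) * Complex.normSq (v5 x)) x := by
    intro x hxS
    have hx : x ∈ Ioo (0:ℝ) L := hSsub hxS
    have h1 := hD1 x hx; have h3 := hD3 x hx; have h5 := hD5 x hx
    have h11 := hDD1 x hx; have h33 := hDD3 x hx; have h55 := hDD5 x hxS
    have hH : HasDerivAt (fun y => (k₁:ℂ) * ((deriv v1 y + v3 y + (l:ℂ) * v5 y) * conj (v1 y))
        + (k₂:ℂ) * (deriv v3 y * conj (v3 y))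
        + (k₃:ℂ) * ((deriv v5 y - (l:ℂ) * v1 y) * conj (v5 y)))
        ((k₁:ℂ) * ((deriv (deriv v1) x + deriv v3 x + (l:ℂ) * deriv v5 x) * conj (v1 x)
            + (deriv v1 x + v3 x + (l:ℂ) * v5 x) * conj (deriv v1 x))
          + (k₂:ℂ) * (deriv (deriv v3) x * conj (v3 x) + deriv v3 x * conj (deriv v3 x))
          + (k₃:ℂ) * ((deriv (deriv v5) x - (l:ℂ) * deriv v1 x) * conj (v5 x)
            + (deriv v5 x - (l:ℂ) * v1 x) * conj (deriv v5 x))) x :=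
      (((((h11.add h3).add (h5.const_mul (l:ℂ))).mul (hasDerivAt_conj h1)).const_mul (k₁:ℂ)).add
        ((h33.mul (hasDerivAt_conj h3)).const_mul (k₂:ℂ))).add
        (((h55.sub (h1.const_mul (l:ℂ))).mul (hasDerivAt_conj h5)).const_mul (k₃:ℂ))
    have hG := (hasDerivAt_im hH).const_mul lam
    have hFG : F =ᶠ[𝓝 x] (fun y => lam * ((k₁:ℂ) * ((deriv v1 y + v3 y + (l:ℂ) * v5 y) * conj (v1 y))
        + (k₂:ℂ) * (deriv v3 y * conj (v3 y))
        + (k₃:ℂ) * ((deriv v5 y - (l:ℂ) * v1 y) * conj (v5 y))).im) := by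
      filter_upwards [isOpen_Ioo.mem_nhds hx] with y hy
      rw [hFdef]
      simp only
      rw [hd1eq y hy, hd3eq y hy, hd5eq y hy]
    have hF' := hG.congr_of_eventuallyEq hFG
    have e1 := heq1 x hxS; have e2 := heq2 x hxS; have e3 := heq3 x hxS
    have hT' : deriv (fun y => deriv v1 y + v3 y + (l:ℂ) * v5 y) x
        = deriv (deriv v1) x + deriv v3 x + (l:ℂ) * deriv v5 x :=
      (((h11.add h3).add (h5.const_mul (l:ℂ)))).deriv
    have hS' : deriv (fun y => deriv v5 y - (l:ℂ) * v1 y) x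
        = deriv (deriv v5) x - (l:ℂ) * deriv v1 x :=
      ((h55.sub (h1.const_mul (l:ℂ)))).deriv
    rw [hT'] at e1
    rw [hS'] at e3
    have hval := bresse_alg ρ₁ ρ₂ k₁ k₂ k₃ l lam (if x < β then a₀ else 0)
      (v1 x) (v3 x) (v5 x) (deriv v1 x) (deriv v3 x) (deriv v5 x)
      (deriv (deriv v1) x) (deriv (deriv v3) x) (deriv (deriv v5) x) e1 e2 e3
    rw [hval] at hF'
    exact hF'
  have hmono : MonotoneOn F (Icc 0 β) := by
    apply monotoneOn_of_deriv_nonneg (convex_Icc 0 β) (hFcont.mono hIccβ)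
    · intro x hx
      rw [interior_Icc] at hx
      exact ((hFderiv x (Or.inl hx)).differentiableAt).differentiableWithinAt
    · intro x hx
      rw [interior_Icc] at hx
      rw [(hFderiv x (Or.inl hx)).deriv, if_pos hx.2]
      exact mul_nonneg (mul_nonneg (sq_nonneg _) ha0.le) (Complex.normSq_nonneg _)
  have hconst : ∀ t ∈ Icc β L, F t - F β = 0 := by
    apply gronwall_zero (f' := fun _ => (0:ℝ)) (le_refl (0:ℝ))
    · exact (hFcont.mono hIccβ').sub continuousOn_const
    · intro t ht
      have hd := hFderiv t (Or.inr ht)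
      rw [if_neg (not_lt.2 ht.1.le)] at hd
      simpa using hd.sub_const (F β)
    · intro t ht; simp
    · simp
  have hFβ : F β = 0 := by
    have h := hconst L ⟨hbetaL.le, le_rfl⟩
    rw [hFL] at h; linarith
  have hF0onβ : ∀ x ∈ Icc (0:ℝ) β, F x = 0 := by
    intro x hx
    have hle := hmono hx (right_mem_Icc.2 hbeta.le) hx.2
    have hge := hmono (left_mem_Icc.2 hbeta.le) hx hx.1
    rw [hFβ] at hle; rw [hF0] at hge; linarith
  have hv5Ioo : ∀ x ∈ Ioo (0:ℝ) β, v5 x = 0 := by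
    intro x hx
    have hd := hFderiv x (Or.inl hx)
    have hzero : HasDerivAt F 0 x := by
      refine (hasDerivAt_const x (0:ℝ)).congr_of_eventuallyEq ?_
      filter_upwards [isOpen_Ioo.mem_nhds hx] with y hy
      exact hF0onβ y (Ioo_subset_Icc_self hy)
    have huniq := hd.unique hzero
    rw [if_pos hx.2] at huniq
    have hpos : (0:ℝ) < lam^2 * a₀ :=
      mul_pos (lt_of_le_of_ne (sq_nonneg lam) (Ne.symm (pow_ne_zero 2 hlam))) ha0
    have hns : Complex.normSq (v5 x) = 0 :=
      (mul_eq_zero.1 huniq).resolve_left hpos.ne'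
    exact Complex.normSq_eq_zero.1 hns
  have hv5Icc : ∀ x ∈ Icc (0:ℝ) β, v5 x = 0 :=
    zero_on_Icc_of_zero_on_Ioo hbeta (hc5.mono hIccβ) hv5Ioo
  -- Step 2: v1 = v3 = 0 on [0, β]
  have hDv5Ioo : ∀ x ∈ Ioo (0:ℝ) β, deriv v5 x = 0 := by
    intro x hx
    have h : v5 =ᶠ[𝓝 x] (fun _ => (0:ℂ)) := by
      filter_upwards [isOpen_Ioo.mem_nhds hx] with y hy using hv5Ioo y hy
    rw [h.deriv_eq, deriv_const]
  have hrel : ∀ x ∈ Ioo (0:ℝ) β, (k₁:ℂ) * v3 x + ((k₃ + k₁ : ℝ):ℂ) * deriv v1 x = 0 := by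
    intro x hx
    have e3 := heq3 x (Or.inl hx)
    have hS' : deriv (fun y => deriv v5 y - (l:ℂ) * v1 y) x = -((l:ℂ) * deriv v1 x) := by
      have hfun : (fun y => deriv v5 y - (l:ℂ) * v1 y) =ᶠ[𝓝 x] (fun y => -((l:ℂ) * v1 y)) := by
        filter_upwards [isOpen_Ioo.mem_nhds hx] with y hy
        rw [hDv5Ioo y hy, zero_sub]
      rw [hfun.deriv_eq]
      exact (((hD1 x (hsub1 hx)).const_mul (l:ℂ)).neg).deriv
    rw [hS', hv5Ioo x hx] at e3
    have hl0 : (l:ℂ) ≠ 0 := Complex.ofReal_ne_zero.2 hl.ne'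
    have hmul : (l:ℂ) * ((k₁:ℂ) * v3 x + ((k₃ + k₁:ℝ):ℂ) * deriv v1 x) = 0 := by
      push_cast at e3 ⊢
      linear_combination -e3
    exact (mul_eq_zero.1 hmul).resolve_left hl0
  have hcomb0 : ∀ x ∈ Icc (0:ℝ) β, (k₁:ℂ) * v3 x + ((k₃ + k₁:ℝ):ℂ) * d1 x = 0 := by
    apply zero_on_Icc_of_zero_on_Ioo hbeta
    · exact (continuousOn_const.mul (hc3.mono hIccβ)).add
        (continuousOn_const.mul (hcd1.mono hIccβ))
    · intro x hx
      rw [hd1eq x (hsub1 hx)]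
      exact hrel x hx
  have hd10 : d1 0 = 0 := by
    have h := hcomb0 0 ⟨le_rfl, hbeta.le⟩
    rw [hb30, mul_zero, zero_add] at h
    exact (mul_eq_zero.1 h).resolve_left
      (Complex.ofReal_ne_zero.2 (add_pos hk3 hk1).ne')
  have hdd1rel : ∀ x ∈ Ioo (0:ℝ) β,
      (k₃:ℂ) * deriv (deriv v1) x = ((lam^2*ρ₁ - l^2*k₃ : ℝ):ℂ) * v1 x := by
    intro x hx
    have e1 := heq1 x (Or.inl hx)
    have hT' : deriv (fun y => deriv v1 y + v3 y + (l:ℂ) * v5 y) x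
        = deriv (deriv v1) x + deriv v3 x := by
      have hfun : (fun y => deriv v1 y + v3 y + (l:ℂ) * v5 y)
          =ᶠ[𝓝 x] (fun y => deriv v1 y + v3 y) := by
        filter_upwards [isOpen_Ioo.mem_nhds hx] with y hy
        rw [hv5Ioo y hy, mul_zero, add_zero]
      rw [hfun.deriv_eq]
      exact ((hDD1 x (hsub1 hx)).add (hD3 x (hsub1 hx))).deriv
    rw [hT', hDv5Ioo x hx] at e1
    have hrel' : (k₁:ℂ) * deriv v3 x + ((k₃ + k₁:ℝ):ℂ) * deriv (deriv v1) x = 0 := by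
      have hfun : (fun y => (k₁:ℂ) * v3 y + ((k₃ + k₁:ℝ):ℂ) * deriv v1 y)
          =ᶠ[𝓝 x] (fun _ => (0:ℂ)) := by
        filter_upwards [isOpen_Ioo.mem_nhds hx] with y hy using hrel y hy
      have hD : HasDerivAt (fun y => (k₁:ℂ) * v3 y + ((k₃ + k₁:ℝ):ℂ) * deriv v1 y)
          ((k₁:ℂ) * deriv v3 x + ((k₃ + k₁:ℝ):ℂ) * deriv (deriv v1) x) x :=
        ((hD3 x (hsub1 hx)).const_mul _).add ((hDD1 x (hsub1 hx)).const_mul _)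
      exact hD.unique ((hasDerivAt_const x (0:ℂ)).congr_of_eventuallyEq hfun)
    push_cast at e1 hrel' ⊢
    linear_combination hrel' - e1
  set ν : ℝ := lam^2*ρ₁ - l^2*k₃ with hνdef
  have hEcont : ContinuousOn (fun x => k₃ * Complex.normSq (d1 x) - ν * Complex.normSq (v1 x))
      (Icc 0 β) :=
    (continuousOn_const.mul (Complex.continuous_normSq.comp_continuousOn (hcd1.mono hIccβ))).sub
      (continuousOn_const.mul (Complex.continuous_normSq.comp_continuousOn (hc1.mono hIccβ)))
  have hEderiv : ∀ x ∈ Ioo (0:ℝ) β,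
      HasDerivAt (fun x => k₃ * Complex.normSq (d1 x) - ν * Complex.normSq (v1 x)) 0 x := by
    intro x hx
    have h1 := hD1 x (hsub1 hx)
    have h11 := hDD1 x (hsub1 hx)
    have hE1 : HasDerivAt (fun y => k₃ * Complex.normSq (deriv v1 y) - ν * Complex.normSq (v1 y))
        (k₃ * (2*(deriv v1 x).re*(deriv (deriv v1) x).re + 2*(deriv v1 x).im*(deriv (deriv v1) x).im)
         - ν * (2*(v1 x).re*(deriv v1 x).re + 2*(v1 x).im*(deriv v1 x).im)) x :=
      ((hasDerivAt_normSq h11).const_mul k₃).sub ((hasDerivAt_normSq h1).const_mul ν)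
    have hEeq : (fun x => k₃ * Complex.normSq (d1 x) - ν * Complex.normSq (v1 x))
        =ᶠ[𝓝 x] (fun y => k₃ * Complex.normSq (deriv v1 y) - ν * Complex.normSq (v1 y)) := by
      filter_upwards [isOpen_Ioo.mem_nhds (hsub1 hx)] with y hy
      rw [hd1eq y hy]
    have hE2 := hE1.congr_of_eventuallyEq hEeq
    refine hE2.congr_deriv (Eq.symm ?_)
    have hc := hdd1rel x hx
    have hre : k₃ * (deriv (deriv v1) x).re = ν * (v1 x).re := by
      have h := congrArg Complex.re hc
      simpa [Complex.re_ofReal_mul] using h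
    have him : k₃ * (deriv (deriv v1) x).im = ν * (v1 x).im := by
      have h := congrArg Complex.im hc
      simpa [Complex.im_ofReal_mul] using h
    linear_combination (-2*(deriv v1 x).re) * hre + (-2*(deriv v1 x).im) * him
  have hE0 : k₃ * Complex.normSq (d1 0) - ν * Complex.normSq (v1 0) = 0 := by
    rw [hd10, hb10]; simp
  have hEzero : ∀ x ∈ Icc (0:ℝ) β,
      k₃ * Complex.normSq (d1 x) - ν * Complex.normSq (v1 x) = 0 := by
    have := gronwall_zero (f' := fun _ => (0:ℝ)) (le_refl (0:ℝ)) hEcont hEderiv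
      (fun t _ => by simp) hE0
    simpa using this
  have hK2nn : (0:ℝ) ≤ Real.sqrt (|ν| / k₃) := Real.sqrt_nonneg _
  have hbound1 : ∀ t ∈ Ioo (0:ℝ) β, ‖deriv v1 t‖ ≤ Real.sqrt (|ν| / k₃) * ‖v1 t‖ := by
    intro t ht
    have hE := hEzero t (Ioo_subset_Icc_self ht)
    rw [hd1eq t (hsub1 ht)] at hE
    have h1 : ‖deriv v1 t‖^2 = (ν / k₃) * ‖v1 t‖^2 := by
      rw [Complex.sq_norm, Complex.sq_norm]
      field_simp
      linarith
    have h2 : ‖deriv v1 t‖^2 ≤ (Real.sqrt (|ν| / k₃) * ‖v1 t‖)^2 := by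
      rw [h1, mul_pow, Real.sq_sqrt (by positivity)]
      apply mul_le_mul_of_nonneg_right _ (sq_nonneg _)
      exact div_le_div_of_nonneg_right (le_abs_self ν) hk3.le
    have h3 := Real.sqrt_le_sqrt h2
    rwa [Real.sqrt_sq (norm_nonneg _), Real.sqrt_sq (by positivity)] at h3
  have hv1Icc : ∀ t ∈ Icc (0:ℝ) β, v1 t = 0 :=
    gronwall_zero hK2nn (hc1.mono hIccβ) (fun t ht => hD1 t (hsub1 ht)) hbound1 hb10
  have hDv1Ioo : ∀ x ∈ Ioo (0:ℝ) β, deriv v1 x = 0 := by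
    intro x hx
    have h : v1 =ᶠ[𝓝 x] (fun _ => (0:ℂ)) := by
      filter_upwards [isOpen_Ioo.mem_nhds hx] with y hy
      exact hv1Icc y (Ioo_subset_Icc_self hy)
    rw [h.deriv_eq, deriv_const]
  have hv3Ioo : ∀ x ∈ Ioo (0:ℝ) β, v3 x = 0 := by
    intro x hx
    have h := hrel x hx
    rw [hDv1Ioo x hx, mul_zero, add_zero] at h
    exact (mul_eq_zero.1 h).resolve_left (Complex.ofReal_ne_zero.2 hk1.ne')
  have hv3Icc : ∀ x ∈ Icc (0:ℝ) β, v3 x = 0 :=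
    zero_on_Icc_of_zero_on_Ioo hbeta (hc3.mono hIccβ) hv3Ioo
  have hDv3Ioo : ∀ x ∈ Ioo (0:ℝ) β, deriv v3 x = 0 := by
    intro x hx
    have h : v3 =ᶠ[𝓝 x] (fun _ => (0:ℂ)) := by
      filter_upwards [isOpen_Ioo.mem_nhds hx] with y hy using hv3Ioo y hy
    rw [h.deriv_eq, deriv_const]
  have hd1β : d1 β = 0 :=
    zero_on_Icc_of_zero_on_Ioo hbeta (hcd1.mono hIccβ)
      (fun x hx => by rw [hd1eq x (hsub1 hx)]; exact hDv1Ioo x hx) β ⟨hbeta.le, le_rfl⟩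
  have hd3β : d3 β = 0 :=
    zero_on_Icc_of_zero_on_Ioo hbeta (hcd3.mono hIccβ)
      (fun x hx => by rw [hd3eq x (hsub1 hx)]; exact hDv3Ioo x hx) β ⟨hbeta.le, le_rfl⟩
  have hd5β : d5 β = 0 :=
    zero_on_Icc_of_zero_on_Ioo hbeta (hcd5.mono hIccβ)
      (fun x hx => by rw [hd5eq x (hsub1 hx)]; exact hDv5Ioo x hx) β ⟨hbeta.le, le_rfl⟩
  -- Step 3: everything vanishes on [β, L]
  have hdd1r : ∀ t ∈ Ioo β L, (k₁:ℂ) * deriv (deriv v1) t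
      = ((l^2*k₃ - lam^2*ρ₁ : ℝ):ℂ) * v1 t + ((-k₁ : ℝ):ℂ) * deriv v3 t
        + ((-(l*k₁) - l*k₃ : ℝ):ℂ) * deriv v5 t := by
    intro t ht
    have e1 := heq1 t (Or.inr ht)
    have hT' : deriv (fun y => deriv v1 y + v3 y + (l:ℂ) * v5 y) t
        = deriv (deriv v1) t + deriv v3 t + (l:ℂ) * deriv v5 t :=
      (((hDD1 t (hsub2 ht)).add (hD3 t (hsub2 ht))).add
        ((hD5 t (hsub2 ht)).const_mul (l:ℂ))).deriv
    rw [hT'] at e1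
    push_cast at e1 ⊢
    linear_combination e1
  have hdd3r : ∀ t ∈ Ioo β L, (k₂:ℂ) * deriv (deriv v3) t
      = ((k₁ - lam^2*ρ₂ : ℝ):ℂ) * v3 t + ((k₁:ℝ):ℂ) * deriv v1 t
        + ((k₁*l : ℝ):ℂ) * v5 t := by
    intro t ht
    have e2 := heq2 t (Or.inr ht)
    push_cast at e2 ⊢
    linear_combination e2
  have hdd5r : ∀ t ∈ Ioo β L, (k₃:ℂ) * deriv (deriv v5) t
      = ((k₃*l + l*k₁ : ℝ):ℂ) * deriv v1 t + ((l*k₁:ℝ):ℂ) * v3 t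
        + ((l^2*k₁ - lam^2*ρ₁ : ℝ):ℂ) * v5 t := by
    intro t ht
    have e3 := heq3 t (Or.inr ht)
    have hS' : deriv (fun y => deriv v5 y - (l:ℂ) * v1 y) t
        = deriv (deriv v5) t - (l:ℂ) * deriv v1 t :=
      ((hDD5 t (Or.inr ht)).sub ((hD1 t (hsub2 ht)).const_mul (l:ℂ))).deriv
    rw [hS', if_neg (not_lt.2 ht.1.le)] at e3
    push_cast at e3 ⊢
    linear_combination e3
  have hWcont : ContinuousOn (fun t => (v1 t, d1 t, v3 t, d3 t, v5 t, d5 t)) (Icc β L) :=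
    (hc1.mono hIccβ').prodMk ((hcd1.mono hIccβ').prodMk ((hc3.mono hIccβ').prodMk
      ((hcd3.mono hIccβ').prodMk ((hc5.mono hIccβ').prodMk (hcd5.mono hIccβ')))))
  have hWβ : (v1 β, d1 β, v3 β, d3 β, v5 β, d5 β) = ((0:ℂ),(0:ℂ),(0:ℂ),(0:ℂ),(0:ℂ),(0:ℂ)) := by
    rw [hv1Icc β ⟨hbeta.le, le_rfl⟩, hv3Icc β ⟨hbeta.le, le_rfl⟩, hv5Icc β ⟨hbeta.le, le_rfl⟩,
      hd1β, hd3β, hd5β]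
  have hWderiv : ∀ t ∈ Ioo β L,
      HasDerivAt (fun t => (v1 t, d1 t, v3 t, d3 t, v5 t, d5 t))
        (deriv v1 t, deriv (deriv v1) t, deriv v3 t, deriv (deriv v3) t,
          deriv v5 t, deriv (deriv v5) t) t := by
    intro t ht
    have hmem := isOpen_Ioo.mem_nhds (hsub2 ht)
    have hh1 : HasDerivAt d1 (deriv (deriv v1) t) t :=
      (hDD1 t (hsub2 ht)).congr_of_eventuallyEq
        (by filter_upwards [hmem] with y hy using hd1eq y hy)
    have hh3 : HasDerivAt d3 (deriv (deriv v3) t) t :=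
      (hDD3 t (hsub2 ht)).congr_of_eventuallyEq
        (by filter_upwards [hmem] with y hy using hd3eq y hy)
    have hh5 : HasDerivAt d5 (deriv (deriv v5) t) t :=
      (hDD5 t (Or.inr ht)).congr_of_eventuallyEq
        (by filter_upwards [hmem] with y hy using hd5eq y hy)
    exact (hD1 t (hsub2 ht)).prodMk (hh1.prodMk ((hD3 t (hsub2 ht)).prodMk (hh3.prodMk
      ((hD5 t (hsub2 ht)).prodMk hh5))))
  set B1 : ℝ := (‖((l^2*k₃ - lam^2*ρ₁ : ℝ):ℂ)‖ + ‖((-k₁:ℝ):ℂ)‖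
      + ‖((-(l*k₁) - l*k₃ : ℝ):ℂ)‖) / k₁ with hB1
  set B3 : ℝ := (‖((k₁ - lam^2*ρ₂ : ℝ):ℂ)‖ + ‖((k₁:ℝ):ℂ)‖ + ‖((k₁*l:ℝ):ℂ)‖) / k₂ with hB3
  set B5 : ℝ := (‖((k₃*l + l*k₁ : ℝ):ℂ)‖ + ‖((l*k₁:ℝ):ℂ)‖
      + ‖((l^2*k₁ - lam^2*ρ₁:ℝ):ℂ)‖) / k₃ with hB5
  have hB1nn : 0 ≤ B1 := by rw [hB1]; positivity
  have hB3nn : 0 ≤ B3 := by rw [hB3]; positivity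
  have hB5nn : 0 ≤ B5 := by rw [hB5]; positivity
  have hKK1 : (1:ℝ) ≤ 1 + B1 + B3 + B5 := by linarith
  have hKKnn : (0:ℝ) ≤ 1 + B1 + B3 + B5 := by linarith
  have hWbound : ∀ t ∈ Ioo β L,
      ‖(deriv v1 t, deriv (deriv v1) t, deriv v3 t, deriv (deriv v3) t,
        deriv v5 t, deriv (deriv v5) t)‖
        ≤ (1 + B1 + B3 + B5) * ‖(v1 t, d1 t, v3 t, d3 t, v5 t, d5 t)‖ := by
    intro t ht
    rw [hd1eq t (hsub2 ht), hd3eq t (hsub2 ht), hd5eq t (hsub2 ht)]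
    set N : ℝ := ‖(v1 t, deriv v1 t, v3 t, deriv v3 t, v5 t, deriv v5 t)‖ with hN
    have hNdef : N = max ‖v1 t‖ (max ‖deriv v1 t‖ (max ‖v3 t‖ (max ‖deriv v3 t‖
        (max ‖v5 t‖ ‖deriv v5 t‖)))) := by
      rw [hN]; simp [Prod.norm_def]
    have hNnn : 0 ≤ N := norm_nonneg _
    have n1 : ‖v1 t‖ ≤ N := by rw [hNdef]; exact le_max_left _ _
    have n2 : ‖deriv v1 t‖ ≤ N := by
      rw [hNdef]; exact (le_max_left _ _).trans (le_max_right _ _)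
    have n3 : ‖v3 t‖ ≤ N := by
      rw [hNdef]
      exact ((le_max_left _ _).trans (le_max_right _ _)).trans (le_max_right _ _)
    have n4 : ‖deriv v3 t‖ ≤ N := by
      rw [hNdef]
      exact (((le_max_left _ _).trans (le_max_right _ _)).trans
        (le_max_right _ _)).trans (le_max_right _ _)
    have n5 : ‖v5 t‖ ≤ N := by
      rw [hNdef]
      exact ((((le_max_left _ _).trans (le_max_right _ _)).trans
        (le_max_right _ _)).trans (le_max_right _ _)).trans (le_max_right _ _)
    have n6 : ‖deriv v5 t‖ ≤ N := by
      rw [hNdef]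
      exact ((((le_max_right _ _).trans (le_max_right _ _)).trans
        (le_max_right _ _)).trans (le_max_right _ _)).trans (le_max_right _ _)
    have bb1 : ‖deriv (deriv v1) t‖ ≤ B1 * N := by
      have hnorm := congrArg norm (hdd1r t ht)
      rw [norm_mul, Complex.norm_real, Real.norm_eq_abs, abs_of_pos hk1] at hnorm
      have hle : k₁ * ‖deriv (deriv v1) t‖ ≤ (‖((l^2*k₃ - lam^2*ρ₁ : ℝ):ℂ)‖ + ‖((-k₁:ℝ):ℂ)‖
          + ‖((-(l*k₁) - l*k₃ : ℝ):ℂ)‖) * N := by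
        rw [hnorm]; exact norm_lin3 n1 n4 n6 hNnn
      rw [hB1, div_mul_eq_mul_div, le_div_iff₀ hk1]
      linarith
    have bb3 : ‖deriv (deriv v3) t‖ ≤ B3 * N := by
      have hnorm := congrArg norm (hdd3r t ht)
      rw [norm_mul, Complex.norm_real, Real.norm_eq_abs, abs_of_pos hk2] at hnorm
      have hle : k₂ * ‖deriv (deriv v3) t‖ ≤ (‖((k₁ - lam^2*ρ₂ : ℝ):ℂ)‖ + ‖((k₁:ℝ):ℂ)‖
          + ‖((k₁*l:ℝ):ℂ)‖) * N := by
        rw [hnorm]; exact norm_lin3 n3 n2 n5 hNnn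
      rw [hB3, div_mul_eq_mul_div, le_div_iff₀ hk2]
      linarith
    have bb5 : ‖deriv (deriv v5) t‖ ≤ B5 * N := by
      have hnorm := congrArg norm (hdd5r t ht)
      rw [norm_mul, Complex.norm_real, Real.norm_eq_abs, abs_of_pos hk3] at hnorm
      have hle : k₃ * ‖deriv (deriv v5) t‖ ≤ (‖((k₃*l + l*k₁ : ℝ):ℂ)‖ + ‖((l*k₁:ℝ):ℂ)‖
          + ‖((l^2*k₁ - lam^2*ρ₁:ℝ):ℂ)‖) * N := by
        rw [hnorm]; exact norm_lin3 n2 n3 n5 hNnn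
      rw [hB5, div_mul_eq_mul_div, le_div_iff₀ hk3]
      linarith
    have hgoal : ‖(deriv v1 t, deriv (deriv v1) t, deriv v3 t, deriv (deriv v3) t,
        deriv v5 t, deriv (deriv v5) t)‖
        = max ‖deriv v1 t‖ (max ‖deriv (deriv v1) t‖ (max ‖deriv v3 t‖
          (max ‖deriv (deriv v3) t‖ (max ‖deriv v5 t‖ ‖deriv (deriv v5) t‖)))) := by
      simp [Prod.norm_def]
    rw [hgoal]
    have hmul : ∀ Bc : ℝ, 0 ≤ Bc → Bc ≤ 1 + B1 + B3 + B5 →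
        ∀ z : ℝ, z ≤ Bc * N → z ≤ (1 + B1 + B3 + B5) * N := by
      intro Bc hBc hBc2 z hz
      exact hz.trans (mul_le_mul_of_nonneg_right hBc2 hNnn)
    refine max_le ?_ (max_le ?_ (max_le ?_ (max_le ?_ (max_le ?_ ?_))))
    · exact n2.trans (le_mul_of_one_le_left hNnn hKK1)
    · exact hmul B1 hB1nn (by linarith) _ bb1
    · exact n4.trans (le_mul_of_one_le_left hNnn hKK1)
    · exact hmul B3 hB3nn (by linarith) _ bb3
    · exact n6.trans (le_mul_of_one_le_left hNnn hKK1)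
    · exact hmul B5 hB5nn (by linarith) _ bb5
  have hWzero : ∀ t ∈ Icc β L,
      (v1 t, d1 t, v3 t, d3 t, v5 t, d5 t) = ((0:ℂ),(0:ℂ),(0:ℂ),(0:ℂ),(0:ℂ),(0:ℂ)) := by
    have h := gronwall_zero (f := fun t => (v1 t, d1 t, v3 t, d3 t, v5 t, d5 t))
      (f' := fun t => (deriv v1 t, deriv (deriv v1) t, deriv v3 t, deriv (deriv v3) t,
        deriv v5 t, deriv (deriv v5) t)) hKKnn hWcont hWderiv hWbound hWβ
    exact h
  intro x hx
  rcases le_total x β with hxβ | hxβ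
  · exact ⟨hv1Icc x ⟨hx.1, hxβ⟩, hv3Icc x ⟨hx.1, hxβ⟩, hv5Icc x ⟨hx.1, hxβ⟩⟩
  · have h := hWzero x ⟨hxβ, hx.2⟩
    rw [Prod.ext_iff] at h
    obtain ⟨h1, h'⟩ := h
    rw [Prod.ext_iff] at h'
    obtain ⟨_, h'⟩ := h'
    rw [Prod.ext_iff] at h'
    obtain ⟨h3, h'⟩ := h'
    rw [Prod.ext_iff] at h'
    obtain ⟨_, h'⟩ := h'
    rw [Prod.ext_iff] at h'
    obtain ⟨h5, _⟩ := h'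
    exact ⟨h1, h3, h5⟩
end
end

section
/- Let λ be a real number and let v¹, v³ : [0,β] → ℂ be C² functions such that for all x ∈ (0,β): (λ² − l²k₃/ρ₁) v¹ + (k₁/ρ₁)(v¹′ + v³)′ = 0, (λ² − k₁/ρ₂) v³ + (k₂/ρ₂) v³′′ − (k₁/ρ₂) v¹′ = 0, and k₁ (v¹′ + v³) = − k₃ v¹′ (′ denoting d/dx), with v¹(0) = 0 and v³(0) = 0. Then v¹ ≡ 0 and v³ ≡ 0 on [0,β]. (This covers the three cases λ² = l²k₃/ρ₁, λ² > l²k₃/ρ₁ and λ² < l²k₃/ρ₁ arising in the strong stability proof.) -/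
open Set Filter MeasureTheory

open Topology

noncomputable section

/-- Vanishing of eigenfunction components on the damped region `(0,β)`. -/
theorem bresse_eigen_vanish_damped
    (ρ₁ ρ₂ k₁ k₂ k₃ l β : ℝ)
    (hrho1 : 0 < ρ₁) (hrho2 : 0 < ρ₂) (hk1 : 0 < k₁) (hk2 : 0 < k₂) (hk3 : 0 < k₃)
    (hl : 0 < l) (hbeta : 0 < β)
    (lam : ℝ)
    (v1 v3 : ℝ → ℂ)
    (hv1 : ContDiffOn ℝ 2 v1 (Icc 0 β)) (hv3 : ContDiffOn ℝ 2 v3 (Icc 0 β))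
    (heq1 : ∀ x ∈ Ioo (0 : ℝ) β,
      ((lam ^ 2 - l ^ 2 * k₃ / ρ₁ : ℝ) : ℂ) * v1 x
        + ((k₁ / ρ₁ : ℝ) : ℂ) * deriv (fun y => deriv v1 y + v3 y) x = 0)
    (heq2 : ∀ x ∈ Ioo (0 : ℝ) β,
      ((lam ^ 2 - k₁ / ρ₂ : ℝ) : ℂ) * v3 x
        + ((k₂ / ρ₂ : ℝ) : ℂ) * deriv (deriv v3) x
        - ((k₁ / ρ₂ : ℝ) : ℂ) * deriv v1 x = 0)
    (heq3 : ∀ x ∈ Ioo (0 : ℝ) β,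
      (k₁ : ℂ) * (deriv v1 x + v3 x) = -(k₃ : ℂ) * deriv v1 x)
    (hbc : v1 0 = 0 ∧ v3 0 = 0) :
    ∀ x ∈ Icc (0 : ℝ) β, v1 x = 0 ∧ v3 x = 0 := by
  obtain ⟨hb1, hb3⟩ := hbc
  set a : ℝ := lam ^ 2 - l ^ 2 * k₃ / ρ₁ with ha
  set c : ℝ := -(k₁ / (k₁ + k₃)) with hc
  set d : ℝ := -(a * ρ₁ * (k₁ + k₃) / (k₁ * k₃)) with hd
  have hsum : (0:ℝ) < k₁ + k₃ := by linarith
  have hsumC : ((k₁ : ℂ) + (k₃ : ℂ)) ≠ 0 := by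
    exact_mod_cast (show ((k₁ + k₃ : ℝ) : ℂ) ≠ 0 from by exact_mod_cast hsum.ne')
  -- c as a complex identity
  have hcC : ((k₁:ℂ) + (k₃:ℂ)) * (c:ℂ) = -(k₁:ℂ) := by
    have h : (k₁ + k₃) * c = -k₁ := by
      rw [hc]; field_simp
    exact_mod_cast h
  -- step 1: deriv v1 = c * v3 on Ioo
  have hD1 : ∀ x ∈ Ioo (0:ℝ) β, deriv v1 x = (c:ℂ) * v3 x := by
    intro x hx
    have h := heq3 x hx
    have key : ((k₁:ℂ) + (k₃:ℂ)) * deriv v1 x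
        = ((k₁:ℂ) + (k₃:ℂ)) * ((c:ℂ) * v3 x) := by
      linear_combination h - v3 x * hcC
    exact mul_left_cancel₀ hsumC key
  -- step 2: deriv v3 = d * v1 on Ioo
  have hDiffAt3 : ∀ x ∈ Ioo (0:ℝ) β, DifferentiableAt ℝ v3 x := by
    intro x hx
    exact ((hv3.differentiableOn two_ne_zero) x ⟨hx.1.le, hx.2.le⟩).differentiableAt
      (Icc_mem_nhds hx.1 hx.2)
  have hD3 : ∀ x ∈ Ioo (0:ℝ) β, deriv v3 x = (d:ℂ) * v1 x := by
    intro x hx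
    have h1 := heq1 x hx
    -- rewrite the second derivative term
    have hev : (fun y => deriv v1 y + v3 y) =ᶠ[𝓝 x] (fun y => ((c:ℂ) + 1) * v3 y) := by
      filter_upwards [isOpen_Ioo.mem_nhds hx] with y hy
      rw [hD1 y hy]; ring
    have hder : deriv (fun y => deriv v1 y + v3 y) x = ((c:ℂ) + 1) * deriv v3 x := by
      rw [hev.deriv_eq, deriv_const_mul _ (hDiffAt3 x hx)]
    rw [hder] at h1
    -- constant identity
    have hdC : ((k₁ / ρ₁ : ℝ):ℂ) * (((c:ℂ) + 1) * (d:ℂ)) = -((a:ℝ):ℂ) := by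
      have h : (k₁ / ρ₁) * ((c + 1) * d) = -a := by
        rw [hc, hd]; field_simp
        ring
      exact_mod_cast h
    have hfac : ((k₁ / ρ₁ : ℝ):ℂ) * ((c:ℂ) + 1) ≠ 0 := by
      have hr : c + 1 = k₃ / (k₁ + k₃) := by
        rw [hc]; field_simp
        ring
      have hc1 : (c:ℂ) + 1 = ((k₃ / (k₁ + k₃) : ℝ):ℂ) := by
        rw [← hr]; push_cast; ring
      rw [hc1]
      apply mul_ne_zero
      · exact_mod_cast (div_pos hk1 hrho1).ne'
      · exact_mod_cast (div_pos hk3 hsum).ne'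
    have key : ((k₁ / ρ₁ : ℝ):ℂ) * ((c:ℂ) + 1) * deriv v3 x
        = ((k₁ / ρ₁ : ℝ):ℂ) * ((c:ℂ) + 1) * ((d:ℂ) * v1 x) := by
      linear_combination h1 - v1 x * hdC
    exact mul_left_cancel₀ hfac key
  -- derivatives within Icc
  have hud : UniqueDiffOn ℝ (Icc (0:ℝ) β) := uniqueDiffOn_Icc hbeta
  have hclo : closure (Ioo (0:ℝ) β) = Icc 0 β := closure_Ioo hbeta.ne
  have hcont1 : ContinuousOn (derivWithin v1 (Icc 0 β)) (Icc (0:ℝ) β) :=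
    hv1.continuousOn_derivWithin hud one_le_two
  have hcont3 : ContinuousOn (derivWithin v3 (Icc 0 β)) (Icc (0:ℝ) β) :=
    hv3.continuousOn_derivWithin hud one_le_two
  have hq1 : EqOn (derivWithin v1 (Icc 0 β)) (fun t => (c:ℂ) * v3 t) (Icc (0:ℝ) β) := by
    apply Set.EqOn.of_subset_closure (s := Ioo (0:ℝ) β) (fun x hx => ?_) hcont1
      (continuous_const.continuousOn.mul hv3.continuousOn) Ioo_subset_Icc_self hclo.ge
    rw [derivWithin_of_mem_nhds (Icc_mem_nhds hx.1 hx.2)]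
    exact hD1 x hx
  have hq3 : EqOn (derivWithin v3 (Icc 0 β)) (fun t => (d:ℂ) * v1 t) (Icc (0:ℝ) β) := by
    apply Set.EqOn.of_subset_closure (s := Ioo (0:ℝ) β) (fun x hx => ?_) hcont3
      (continuous_const.continuousOn.mul hv1.continuousOn) Ioo_subset_Icc_self hclo.ge
    rw [derivWithin_of_mem_nhds (Icc_mem_nhds hx.1 hx.2)]
    exact hD3 x hx
  have hpair : ∀ t ∈ Icc (0:ℝ) β, HasDerivWithinAt (fun x => (v1 x, v3 x))
      ((c:ℂ) * v3 t, (d:ℂ) * v1 t) (Icc 0 β) t := by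
    intro t ht
    have h1 : HasDerivWithinAt v1 (derivWithin v1 (Icc 0 β) t) (Icc 0 β) t :=
      ((hv1.differentiableOn two_ne_zero) t ht).hasDerivWithinAt
    have h3 : HasDerivWithinAt v3 (derivWithin v3 (Icc 0 β) t) (Icc 0 β) t :=
      ((hv3.differentiableOn two_ne_zero) t ht).hasDerivWithinAt
    rw [hq1 ht] at h1
    rw [hq3 ht] at h3
    exact h1.prodMk h3
  -- ODE uniqueness setup
  set F : ℝ → ℂ × ℂ → ℂ × ℂ := fun _ p => ((c:ℂ) * p.2, (d:ℂ) * p.1) with hF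
  set Kr : ℝ := max |c| |d| with hKr
  have hKr0 : 0 ≤ Kr := le_trans (abs_nonneg c) (le_max_left _ _)
  set K : NNReal := ⟨Kr, hKr0⟩ with hK
  have hlip : ∀ t, LipschitzWith K (F t) := by
    intro t
    apply LipschitzWith.of_dist_le_mul
    intro p q
    have e2 : dist ((c:ℂ) * p.2) ((c:ℂ) * q.2) = |c| * dist p.2 q.2 := by
      rw [dist_eq_norm, dist_eq_norm, ← mul_sub, norm_mul, Complex.norm_real,
        Real.norm_eq_abs]
    have e1 : dist ((d:ℂ) * p.1) ((d:ℂ) * q.1) = |d| * dist p.1 q.1 := by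
      rw [dist_eq_norm, dist_eq_norm, ← mul_sub, norm_mul, Complex.norm_real,
        Real.norm_eq_abs]
    have hKc : (K : ℝ) = Kr := rfl
    rw [hF]
    simp only [Prod.dist_eq, hKc]
    rw [e1, e2]
    apply max_le
    · calc |c| * dist p.2 q.2 ≤ Kr * dist p.2 q.2 := by
            apply mul_le_mul_of_nonneg_right (le_max_left _ _) dist_nonneg
        _ ≤ Kr * max (dist p.1 q.1) (dist p.2 q.2) := by
            apply mul_le_mul_of_nonneg_left (le_max_right _ _) hKr0
    · calc |d| * dist p.1 q.1 ≤ Kr * dist p.1 q.1 := by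
            apply mul_le_mul_of_nonneg_right (le_max_right _ _) dist_nonneg
        _ ≤ Kr * max (dist p.1 q.1) (dist p.2 q.2) := by
            apply mul_le_mul_of_nonneg_left (le_max_left _ _) hKr0
  have hIci : ∀ t ∈ Ico (0:ℝ) β, HasDerivWithinAt (fun x => (v1 x, v3 x))
      (F t (v1 t, v3 t)) (Ici t) t := by
    intro t ht
    have h := (hpair t ⟨ht.1, ht.2.le⟩).mono (Icc_subset_Icc ht.1 le_rfl)
    have hmem : Icc t β ∈ 𝓝[Ici t] t := by
      have : Ici t ∩ Iic β ∈ 𝓝[Ici t] t :=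
        inter_mem_nhdsWithin (Ici t) (Iic_mem_nhds ht.2)
      rwa [Ici_inter_Iic] at this
    exact h.mono_of_mem_nhdsWithin hmem
  have hg' : ∀ t ∈ Ico (0:ℝ) β, HasDerivWithinAt (fun _ : ℝ => ((0:ℂ), (0:ℂ)))
      (F t ((0:ℂ), (0:ℂ))) (Ici t) t := by
    intro t ht
    have : F t ((0:ℂ), (0:ℂ)) = ((0:ℂ), (0:ℂ)) := by simp [hF]
    rw [this]
    exact hasDerivWithinAt_const t _ _
  have huniq : EqOn (fun x => (v1 x, v3 x)) (fun _ => ((0:ℂ), (0:ℂ))) (Icc (0:ℝ) β) := by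
    apply ODE_solution_unique_of_mem_Icc_right
      (v := F) (s := fun _ => (univ : Set (ℂ × ℂ))) (K := K)
      (fun t _ => (hlip t).lipschitzOnWith)
      ((hv1.continuousOn.prodMk hv3.continuousOn)) hIci (fun t _ => mem_univ _)
      continuousOn_const hg' (fun t _ => mem_univ _)
    simp [hb1, hb3]
  intro x hx
  have := huniq hx
  simp only [Prod.mk.injEq] at this
  exact this
end
end

section
/- In the resolvent-sequence setting, if (H1) or (H2) or (H3) holds, then λₙ^ℓ ∫₀^β |v⁶ₙ|² dx → 0 and λₙ^{ℓ+2} ∫₀^β |v⁵ₙ|² dx → 0 as n → ∞. -/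
open Set Filter MeasureTheory

noncomputable section

/-- The resolvent-sequence setting for the locally damped Bresse system with
parameter `ℓ`: a sequence of nonzero frequencies `lam n` with `|lam n| → ∞`,
solutions `Uₙ = (v1,…,v6)` and right-hand sides `Fₙ = (f1,…,f6)` of the resolvent
equations `(lam n)^ℓ (i (lam n) I − 𝒜) Uₙ = Fₙ`, with `‖Uₙ‖_H = 1` and `‖Fₙ‖_H → 0`. -/
structure BresseSetting (ρ₁ ρ₂ k₁ k₂ k₃ l L β a₀ : ℝ) (ℓ : ℕ) where
  lam : ℕ → ℝ
  v1 : ℕ → ℝ → ℂ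
  v2 : ℕ → ℝ → ℂ
  v3 : ℕ → ℝ → ℂ
  v4 : ℕ → ℝ → ℂ
  v5 : ℕ → ℝ → ℂ
  v6 : ℕ → ℝ → ℂ
  f1 : ℕ → ℝ → ℂ
  f2 : ℕ → ℝ → ℂ
  f3 : ℕ → ℝ → ℂ
  f4 : ℕ → ℝ → ℂ
  f5 : ℕ → ℝ → ℂ
  f6 : ℕ → ℝ → ℂ
  lam_ne : ∀ n, lam n ≠ 0
  lam_tendsto : Tendsto (fun n => |lam n|) atTop atTop
  reg_v1 : ∀ n, ContDiffOn ℝ 2 (v1 n) (Icc 0 L)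
  reg_v3 : ∀ n, ContDiffOn ℝ 2 (v3 n) (Icc 0 L)
  reg_v5 : ∀ n, ContDiffOn ℝ 1 (v5 n) (Icc 0 L)
  reg_v5_left : ∀ n, ContDiffOn ℝ 2 (v5 n) (Icc 0 β)
  reg_v5_right : ∀ n, ContDiffOn ℝ 2 (v5 n) (Icc β L)
  reg_v2 : ∀ n, ContDiffOn ℝ 1 (v2 n) (Icc 0 L)
  reg_v4 : ∀ n, ContDiffOn ℝ 1 (v4 n) (Icc 0 L)
  reg_v6 : ∀ n, ContDiffOn ℝ 1 (v6 n) (Icc 0 L)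
  reg_f1 : ∀ n, ContDiffOn ℝ 1 (f1 n) (Icc 0 L)
  reg_f3 : ∀ n, ContDiffOn ℝ 1 (f3 n) (Icc 0 L)
  reg_f5 : ∀ n, ContDiffOn ℝ 1 (f5 n) (Icc 0 L)
  reg_f2 : ∀ n, ContinuousOn (f2 n) (Icc 0 L)
  reg_f4 : ∀ n, ContinuousOn (f4 n) (Icc 0 L)
  reg_f6 : ∀ n, ContinuousOn (f6 n) (Icc 0 L)
  bc_zero : ∀ n, v1 n 0 = 0 ∧ v2 n 0 = 0 ∧ v3 n 0 = 0 ∧ v4 n 0 = 0 ∧ v5 n 0 = 0 ∧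
      v6 n 0 = 0 ∧ f1 n 0 = 0 ∧ f3 n 0 = 0 ∧ f5 n 0 = 0
  bc_L : ∀ n, v1 n L = 0 ∧ v2 n L = 0 ∧ v3 n L = 0 ∧ v4 n L = 0 ∧ v5 n L = 0 ∧
      v6 n L = 0 ∧ f1 n L = 0 ∧ f3 n L = 0 ∧ f5 n L = 0
  eq1 : ∀ n, ∀ x ∈ Ioo (0 : ℝ) β ∪ Ioo β L,
      Complex.I * (lam n : ℂ) * v1 n x - v2 n x = (lam n : ℂ) ^ (-(ℓ : ℤ)) * f1 n x
  eq2 : ∀ n, ∀ x ∈ Ioo (0 : ℝ) β ∪ Ioo β L,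
      Complex.I * (lam n : ℂ) * (ρ₁ : ℂ) * v2 n x
        - (k₁ : ℂ) * deriv (fun y => deriv (v1 n) y + v3 n y + (l : ℂ) * v5 n y) x
        - (l : ℂ) * (k₃ : ℂ) * (deriv (v5 n) x - (l : ℂ) * v1 n x)
        = (ρ₁ : ℂ) * (lam n : ℂ) ^ (-(ℓ : ℤ)) * f2 n x
  eq3 : ∀ n, ∀ x ∈ Ioo (0 : ℝ) β ∪ Ioo β L,
      Complex.I * (lam n : ℂ) * v3 n x - v4 n x = (lam n : ℂ) ^ (-(ℓ : ℤ)) * f3 n x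
  eq4 : ∀ n, ∀ x ∈ Ioo (0 : ℝ) β ∪ Ioo β L,
      Complex.I * (lam n : ℂ) * (ρ₂ : ℂ) * v4 n x
        - (k₂ : ℂ) * deriv (deriv (v3 n)) x
        + (k₁ : ℂ) * (deriv (v1 n) x + v3 n x + (l : ℂ) * v5 n x)
        = (ρ₂ : ℂ) * (lam n : ℂ) ^ (-(ℓ : ℤ)) * f4 n x
  eq5 : ∀ n, ∀ x ∈ Ioo (0 : ℝ) β ∪ Ioo β L,
      Complex.I * (lam n : ℂ) * v5 n x - v6 n x = (lam n : ℂ) ^ (-(ℓ : ℤ)) * f5 n x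
  eq6 : ∀ n, ∀ x ∈ Ioo (0 : ℝ) β ∪ Ioo β L,
      Complex.I * (lam n : ℂ) * (ρ₁ : ℂ) * v6 n x
        - (k₃ : ℂ) * deriv (fun y => deriv (v5 n) y - (l : ℂ) * v1 n y) x
        + (l : ℂ) * (k₁ : ℂ) * (deriv (v1 n) x + v3 n x + (l : ℂ) * v5 n x)
        + (if x < β then (a₀ : ℂ) else 0) * v6 n x
        = (ρ₁ : ℂ) * (lam n : ℂ) ^ (-(ℓ : ℤ)) * f6 n x
  normU : ∀ n, (∫ x in (0 : ℝ)..L,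
      (k₁ * ‖deriv (v1 n) x + v3 n x + (l : ℂ) * v5 n x‖ ^ 2 + ρ₁ * ‖v2 n x‖ ^ 2
        + k₂ * ‖deriv (v3 n) x‖ ^ 2 + ρ₂ * ‖v4 n x‖ ^ 2
        + k₃ * ‖deriv (v5 n) x - (l : ℂ) * v1 n x‖ ^ 2 + ρ₁ * ‖v6 n x‖ ^ 2)) = 1
  normF : Tendsto (fun n => ∫ x in (0 : ℝ)..L,
      (k₁ * ‖deriv (f1 n) x + f3 n x + (l : ℂ) * f5 n x‖ ^ 2 + ρ₁ * ‖f2 n x‖ ^ 2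
        + k₂ * ‖deriv (f3 n) x‖ ^ 2 + ρ₂ * ‖f4 n x‖ ^ 2
        + k₃ * ‖deriv (f5 n) x - (l : ℂ) * f1 n x‖ ^ 2 + ρ₁ * ‖f6 n x‖ ^ 2))
      atTop (nhds 0)


section BresseAux
open Complex
local notation "conj'" => (starRingEnd ℂ)

lemma bresse_amgm2 {c a b : ℝ} (ha : 0 ≤ a) (hb : 0 ≤ b)
    (h : ∀ t > 0, c ≤ a / t + b * t) : c ≤ 2 * Real.sqrt (a * b) := by
  have hc0 : c ≤ 0 ∨ 0 < c := le_or_gt c 0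
  rcases eq_or_lt_of_le hb with hb0 | hb0
  · have hc : c ≤ 0 := by
      by_contra hc
      push_neg at hc
      rcases eq_or_lt_of_le ha with ha0 | ha0
      · have := h 1 one_pos; rw [← ha0, ← hb0] at this; simp at this; linarith
      · have ht : (0:ℝ) < 2 * a / c := by positivity
        have h1 := h (2 * a / c) ht
        rw [← hb0, zero_mul, add_zero] at h1
        have h2 : a / (2 * a / c) = c / 2 := by
          field_simp
        rw [h2] at h1
        linarith
    calc c ≤ 0 := hc
      _ ≤ 2 * Real.sqrt (a * b) := by positivity
  · rcases eq_or_lt_of_le ha with ha0 | ha0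
    · have hc : c ≤ 0 := by
        by_contra hc
        push_neg at hc
        have ht : (0:ℝ) < c / (2 * b) := by positivity
        have h1 := h _ ht
        rw [← ha0, zero_div, zero_add] at h1
        have h2 : b * (c / (2 * b)) = c / 2 := by
          field_simp
        rw [h2] at h1
        linarith
      calc c ≤ 0 := hc
        _ ≤ 2 * Real.sqrt (a * b) := by positivity
    · have hsa := Real.sqrt_pos.mpr ha0
      have hsb := Real.sqrt_pos.mpr hb0
      have ht : (0:ℝ) < Real.sqrt a / Real.sqrt b := by positivity
      have hval := h _ ht
      have hra : Real.sqrt a * Real.sqrt a = a := Real.mul_self_sqrt ha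
      have hrb : Real.sqrt b * Real.sqrt b = b := Real.mul_self_sqrt hb
      have h1 : a / (Real.sqrt a / Real.sqrt b) = Real.sqrt a * Real.sqrt b := by
        rw [div_div_eq_mul_div, div_eq_iff hsa.ne']
        linear_combination Real.sqrt b * hra.symm
      have h2 : b * (Real.sqrt a / Real.sqrt b) = Real.sqrt a * Real.sqrt b := by
        rw [mul_div_assoc', div_eq_iff hsb.ne']
        linear_combination Real.sqrt a * hrb.symm
      rw [h1, h2, ← Real.sqrt_mul ha] at hval
      linarith

lemma bresse_re_term_le (c : ℝ) (hc : 0 ≤ c) (u v : ℂ) : ((c:ℂ) * u * conj' v).re ≤ c * (‖u‖ * ‖v‖) := by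
  calc ((c:ℂ) * u * conj' v).re ≤ ‖(c:ℂ) * u * conj' v‖ := by
        exact Complex.re_le_norm _
    _ = c * (‖u‖ * ‖v‖) := by
        simp only [norm_mul, Complex.norm_conj,
          Complex.norm_real, Real.norm_eq_abs, _root_.abs_of_nonneg hc]
        ring

lemma bresse_prod_sq_bound (c δ a b : ℝ) (hc : 0 ≤ c) (hδ : 0 < δ) :
    c * (a * b) ≤ δ / 2 * (c * b ^ 2) + 1 / (2 * δ) * (c * a ^ 2) := by
  have h1 : 0 ≤ c * (δ * b - a) ^ 2 := mul_nonneg hc (sq_nonneg _)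
  have h2 : 1 / (2 * δ) * (c * (δ * b - a) ^ 2) ≥ 0 := by positivity
  have h3 : 1 / (2 * δ) * (c * (δ * b - a) ^ 2)
      = δ / 2 * (c * b ^ 2) + 1 / (2 * δ) * (c * a ^ 2) - c * (a * b) := by
    field_simp
    ring
  linarith

lemma bresse_hasDerivAt_of_contDiffOn_nhds {f : ℝ → ℂ} {s : Set ℝ} {x : ℝ} {n : ℕ}
    (hn : 1 ≤ n) (hs : s ∈ nhds x) (h : ContDiffOn ℝ n f s) :
    HasDerivAt f (deriv f x) x := by
  refine ((h.contDiffAt hs).differentiableAt ?_).hasDerivAt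
  exact_mod_cast (show n ≠ 0 by omega)

lemma bresse_hasDerivAt_deriv_of_contDiffOn_nhds {f : ℝ → ℂ} {s : Set ℝ} {x : ℝ}
    (hs : s ∈ nhds x) (h : ContDiffOn ℝ 2 f s) :
    HasDerivAt (deriv f) (deriv (deriv f) x) x := by
  obtain ⟨u, hus, huo, hxu⟩ := mem_nhds_iff.mp hs
  have h2 : ContDiffOn ℝ 1 (deriv f) u := (h.mono hus).deriv_of_isOpen huo (by norm_num)
  exact ((h2.contDiffAt (huo.mem_nhds hxu)).differentiableAt one_ne_zero).hasDerivAt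

lemma bresse_key_alg (lam ε aa ρ₁ ρ₂ k₁ k₂ k₃ l : ℝ)
    (A A' A2 B B' C C' C2 D D' E E' E2 Z Z' F1 F1' F2 F3 F3' F4 F5 F5' F6 : ℂ)
    (h1 : I * lam * A - B = ε * F1)
    (h1' : I * lam * A' - B' = ε * F1')
    (h2 : I * lam * ρ₁ * B - k₁ * (A2 + C' + l * E') - l * k₃ * (E' - l * A) = ρ₁ * ε * F2)
    (h3 : I * lam * C - D = ε * F3)
    (h3' : I * lam * C' - D' = ε * F3')
    (h4 : I * lam * ρ₂ * D - k₂ * C2 + k₁ * (A' + C + l * E) = ρ₂ * ε * F4)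
    (h5 : I * lam * E - Z = ε * F5)
    (h5' : I * lam * E' - Z' = ε * F5')
    (h6 : I * lam * ρ₁ * Z - k₃ * (E2 - l * A') + l * k₁ * (A' + C + l * E) + aa * Z
        = ρ₁ * ε * F6) :
    ((k₁:ℂ) * (B' * conj' (A' + C + l * E) + B * conj' (A2 + C' + l * E'))
      + (k₂:ℂ) * (D' * conj' C' + D * conj' C2)
      + (k₃:ℂ) * (Z' * conj' (E' - l * A) + Z * conj' (E2 - l * A'))).re
    = (aa * Complex.normSq Z : ℝ)
      - ((ε:ℂ) * ((k₁:ℂ) * (F1' + F3 + l * F5) * conj' (A' + C + l * E)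
          + (ρ₁:ℂ) * F2 * conj' B + (k₂:ℂ) * F3' * conj' C' + (ρ₂:ℂ) * F4 * conj' D
          + (k₃:ℂ) * (F5' - l * F1) * conj' (E' - l * A) + (ρ₁:ℂ) * F6 * conj' Z)).re := by
  have hc2 := congrArg conj' h2
  have hc4 := congrArg conj' h4
  have hc6 := congrArg conj' h6
  simp only [map_sub, map_add, map_mul, Complex.conj_I, Complex.conj_ofReal] at hc2 hc4 hc6
  set S1 : ℂ := A' + C + (l:ℂ) * E with hS1
  set S5 : ℂ := E' - (l:ℂ) * A with hS5
  set S1c : ℂ := conj' A' + conj' C + (l:ℂ) * conj' E with hS1c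
  set S5c : ℂ := conj' E' - (l:ℂ) * conj' A with hS5c
  have hS1conj : conj' S1 = S1c := by simp [hS1, hS1c, map_add, map_mul, Complex.conj_ofReal]
  have hS5conj : conj' S5 = S5c := by simp [hS5, hS5c, map_sub, map_mul, Complex.conj_ofReal]
  have hX : (k₁:ℂ) * (B' * conj' S1 + B * conj' (A2 + C' + l * E'))
      + (k₂:ℂ) * (D' * conj' C' + D * conj' C2)
      + (k₃:ℂ) * (Z' * conj' S5 + Z * conj' (E2 - l * A'))
      = (aa:ℂ) * (Z * conj' Z)
        - ((ε:ℂ) * ((k₁:ℂ) * (F1' + F3 + l * F5) * conj' S1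
          + (ρ₁:ℂ) * F2 * conj' B + (k₂:ℂ) * F3' * conj' C' + (ρ₂:ℂ) * F4 * conj' D
          + (k₃:ℂ) * (F5' - l * F1) * conj' S5 + (ρ₁:ℂ) * F6 * conj' Z))
        + (Complex.I * lam * ((k₁:ℂ) * (S1 * S1c) + (k₂:ℂ) * (C' * conj' C')
            + (k₃:ℂ) * (S5 * S5c) - (ρ₁:ℂ) * (B * conj' B) - (ρ₂:ℂ) * (D * conj' D)
            - (ρ₁:ℂ) * (Z * conj' Z))
          + (ρ₁:ℂ) * ε * (F2 * conj' B - B * conj' F2)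
          + (ρ₂:ℂ) * ε * (F4 * conj' D - D * conj' F4)
          + (ρ₁:ℂ) * ε * (F6 * conj' Z - Z * conj' F6)) := by
    rw [hS1conj, hS5conj]
    simp only [map_sub, map_add, map_mul, Complex.conj_I, Complex.conj_ofReal]
    linear_combination (-(k₁:ℂ) * S1c) * h1' + (-(k₂:ℂ) * conj' C') * h3'
      + (-(k₃:ℂ) * S5c) * h5' - B * hc2 - D * hc4 - Z * hc6
      - ((k₁:ℂ) * S1c) * h3 - ((l:ℂ) * k₁ * S1c) * h5
      + ((l:ℂ) * k₃ * S5c) * h1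
  rw [hX]
  rw [← hS1conj, ← hS5conj]
  simp only [Complex.mul_conj, Complex.add_re, Complex.sub_re, Complex.mul_re, Complex.mul_im,
    Complex.I_re, Complex.I_im, Complex.ofReal_re, Complex.ofReal_im, Complex.conj_re,
    Complex.conj_im, Complex.add_im, Complex.sub_im, Complex.neg_im, Complex.neg_re]
  ring

variable {ρ₁ ρ₂ k₁ k₂ k₃ l L β a₀ : ℝ} {ℓ : ℕ}

/-- derivWithin on [0,L] agrees with deriv at interior points -/
lemma bresse_dw_eq {f : ℝ → ℂ} {x : ℝ} (hx : x ∈ Ioo (0:ℝ) L) :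
    derivWithin f (Icc 0 L) x = deriv f x :=
  derivWithin_of_mem_nhds (Icc_mem_nhds hx.1 hx.2)

lemma bresse_cont_dw {f : ℝ → ℂ} {n : ℕ} (hn : 1 ≤ n) (hL : 0 < L)
    (h : ContDiffOn ℝ n f (Icc 0 L)) :
    ContinuousOn (derivWithin f (Icc 0 L)) (Icc 0 L) :=
  h.continuousOn_derivWithin (uniqueDiffOn_Icc hL) (by exact_mod_cast hn)

def bS1 (S : BresseSetting ρ₁ ρ₂ k₁ k₂ k₃ l L β a₀ ℓ) (n : ℕ) (x : ℝ) : ℂ :=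
  derivWithin (S.v1 n) (Icc 0 L) x + S.v3 n x + (l:ℂ) * S.v5 n x

def bS5 (S : BresseSetting ρ₁ ρ₂ k₁ k₂ k₃ l L β a₀ ℓ) (n : ℕ) (x : ℝ) : ℂ :=
  derivWithin (S.v5 n) (Icc 0 L) x - (l:ℂ) * S.v1 n x

def bsF (S : BresseSetting ρ₁ ρ₂ k₁ k₂ k₃ l L β a₀ ℓ) (n : ℕ) (x : ℝ) : ℂ :=
  derivWithin (S.f1 n) (Icc 0 L) x + S.f3 n x + (l:ℂ) * S.f5 n x

def bgF (S : BresseSetting ρ₁ ρ₂ k₁ k₂ k₃ l L β a₀ ℓ) (n : ℕ) (x : ℝ) : ℂ :=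
  derivWithin (S.f5 n) (Icc 0 L) x - (l:ℂ) * S.f1 n x

def bG (S : BresseSetting ρ₁ ρ₂ k₁ k₂ k₃ l L β a₀ ℓ) (n : ℕ) (x : ℝ) : ℝ :=
  ((k₁:ℂ) * (S.v2 n x * conj' (bS1 S n x))
    + (k₂:ℂ) * (S.v4 n x * conj' (derivWithin (S.v3 n) (Icc 0 L) x))
    + (k₃:ℂ) * (S.v6 n x * conj' (bS5 S n x))).re

def bP (S : BresseSetting ρ₁ ρ₂ k₁ k₂ k₃ l L β a₀ ℓ) (n : ℕ) (x : ℝ) : ℂ :=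
  (k₁:ℂ) * bsF S n x * conj' (bS1 S n x)
    + (ρ₁:ℂ) * S.f2 n x * conj' (S.v2 n x)
    + (k₂:ℂ) * derivWithin (S.f3 n) (Icc 0 L) x * conj' (derivWithin (S.v3 n) (Icc 0 L) x)
    + (ρ₂:ℂ) * S.f4 n x * conj' (S.v4 n x)
    + (k₃:ℂ) * bgF S n x * conj' (bS5 S n x)
    + (ρ₁:ℂ) * S.f6 n x * conj' (S.v6 n x)

def bDU (S : BresseSetting ρ₁ ρ₂ k₁ k₂ k₃ l L β a₀ ℓ) (n : ℕ) (x : ℝ) : ℝ :=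
  k₁ * ‖bS1 S n x‖ ^ 2 + ρ₁ * ‖S.v2 n x‖ ^ 2
    + k₂ * ‖derivWithin (S.v3 n) (Icc 0 L) x‖ ^ 2 + ρ₂ * ‖S.v4 n x‖ ^ 2
    + k₃ * ‖bS5 S n x‖ ^ 2 + ρ₁ * ‖S.v6 n x‖ ^ 2

def bDF (S : BresseSetting ρ₁ ρ₂ k₁ k₂ k₃ l L β a₀ ℓ) (n : ℕ) (x : ℝ) : ℝ :=
  k₁ * ‖bsF S n x‖ ^ 2 + ρ₁ * ‖S.f2 n x‖ ^ 2
    + k₂ * ‖derivWithin (S.f3 n) (Icc 0 L) x‖ ^ 2 + ρ₂ * ‖S.f4 n x‖ ^ 2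
    + k₃ * ‖bgF S n x‖ ^ 2 + ρ₁ * ‖S.f6 n x‖ ^ 2

def bE (S : BresseSetting ρ₁ ρ₂ k₁ k₂ k₃ l L β a₀ ℓ) (n : ℕ) : ℝ :=
  ∫ x in (0:ℝ)..L, bDF S n x

lemma cont_conj {f : ℝ → ℂ} {s : Set ℝ} (h : ContinuousOn f s) :
    ContinuousOn (fun x => conj' (f x)) s := by
  simpa only [starRingEnd_apply] using h.star

section conts
variable (S : BresseSetting ρ₁ ρ₂ k₁ k₂ k₃ l L β a₀ ℓ) (n : ℕ)
variable (hL : 0 < L)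
include hL

lemma cont_bS1 : ContinuousOn (bS1 S n) (Icc 0 L) := by
  exact ((bresse_cont_dw (by norm_num) hL (S.reg_v1 n)).add
    (S.reg_v3 n).continuousOn).add (continuousOn_const.mul (S.reg_v5 n).continuousOn)

lemma cont_bS5 : ContinuousOn (bS5 S n) (Icc 0 L) := by
  exact (bresse_cont_dw le_rfl hL (S.reg_v5 n)).sub
    (continuousOn_const.mul (S.reg_v1 n).continuousOn)

lemma cont_bsF : ContinuousOn (bsF S n) (Icc 0 L) := by
  exact ((bresse_cont_dw le_rfl hL (S.reg_f1 n)).add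
    (S.reg_f3 n).continuousOn).add (continuousOn_const.mul (S.reg_f5 n).continuousOn)

lemma cont_bgF : ContinuousOn (bgF S n) (Icc 0 L) := by
  exact (bresse_cont_dw le_rfl hL (S.reg_f5 n)).sub
    (continuousOn_const.mul (S.reg_f1 n).continuousOn)

lemma cont_bG : ContinuousOn (bG S n) (Icc 0 L) := by
  apply Complex.continuous_re.comp_continuousOn
  exact ((continuousOn_const.mul ((S.reg_v2 n).continuousOn.mul
      (cont_conj (cont_bS1 S n hL)))).add
    (continuousOn_const.mul ((S.reg_v4 n).continuousOn.mul
      (cont_conj (bresse_cont_dw (by norm_num) hL (S.reg_v3 n)))))).add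
    (continuousOn_const.mul ((S.reg_v6 n).continuousOn.mul
      (cont_conj (cont_bS5 S n hL))))

lemma cont_bP : ContinuousOn (bP S n) (Icc 0 L) := by
  have t1 := ((continuousOn_const (c := (k₁:ℂ))).mul (cont_bsF S n hL)).mul
      (cont_conj (cont_bS1 S n hL))
  have t2 := ((continuousOn_const (c := (ρ₁:ℂ))).mul (S.reg_f2 n)).mul
      (cont_conj (S.reg_v2 n).continuousOn)
  have t3 := ((continuousOn_const (c := (k₂:ℂ))).mul (bresse_cont_dw le_rfl hL (S.reg_f3 n))).mul
      (cont_conj (bresse_cont_dw (n := 2) (by norm_num) hL (S.reg_v3 n)))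
  have t4 := ((continuousOn_const (c := (ρ₂:ℂ))).mul (S.reg_f4 n)).mul
      (cont_conj (S.reg_v4 n).continuousOn)
  have t5 := ((continuousOn_const (c := (k₃:ℂ))).mul (cont_bgF S n hL)).mul
      (cont_conj (cont_bS5 S n hL))
  have t6 := ((continuousOn_const (c := (ρ₁:ℂ))).mul (S.reg_f6 n)).mul
      (cont_conj (S.reg_v6 n).continuousOn)
  exact ((((t1.add t2).add t3).add t4).add t5).add t6

lemma cont_bDU : ContinuousOn (bDU S n) (Icc 0 L) := by
  exact ((((((continuousOn_const.mul ((cont_bS1 S n hL).norm.pow 2)).add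
    (continuousOn_const.mul ((S.reg_v2 n).continuousOn.norm.pow 2))).add
    (continuousOn_const.mul ((bresse_cont_dw (by norm_num) hL (S.reg_v3 n)).norm.pow 2))).add
    (continuousOn_const.mul ((S.reg_v4 n).continuousOn.norm.pow 2))).add
    (continuousOn_const.mul ((cont_bS5 S n hL).norm.pow 2))).add
    (continuousOn_const.mul ((S.reg_v6 n).continuousOn.norm.pow 2)))

lemma cont_bDF : ContinuousOn (bDF S n) (Icc 0 L) := by
  exact ((((((continuousOn_const.mul ((cont_bsF S n hL).norm.pow 2)).add
    (continuousOn_const.mul ((S.reg_f2 n).norm.pow 2))).add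
    (continuousOn_const.mul ((bresse_cont_dw le_rfl hL (S.reg_f3 n)).norm.pow 2))).add
    (continuousOn_const.mul ((S.reg_f4 n).norm.pow 2))).add
    (continuousOn_const.mul ((cont_bgF S n hL).norm.pow 2))).add
    (continuousOn_const.mul ((S.reg_f6 n).norm.pow 2)))

end conts


lemma bresse_gg_hasDeriv (hbeta : 0 < β) (hbetaL : β < L)
    (S : BresseSetting ρ₁ ρ₂ k₁ k₂ k₃ l L β a₀ ℓ) (n : ℕ) {x : ℝ}
    (hx : x ∈ Ioo (0:ℝ) β ∪ Ioo β L) :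
    HasDerivAt (bG S n)
      ((if x < β then a₀ else 0) * ‖S.v6 n x‖ ^ 2
        - (S.lam n) ^ (-(ℓ:ℤ)) * (bP S n x).re) x := by
  have hx' : x ∈ Ioo (0:ℝ) L := by
    rcases hx with h | h
    · exact ⟨h.1, h.2.trans hbetaL⟩
    · exact ⟨hbeta.trans h.1, h.2⟩
  have hnb : Icc (0:ℝ) L ∈ nhds x := Icc_mem_nhds hx'.1 hx'.2
  have hUnb : (Ioo (0:ℝ) β ∪ Ioo β L) ∈ nhds x :=
    (isOpen_Ioo.union isOpen_Ioo).mem_nhds hx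
  obtain ⟨s5s, hs5nb, hreg5⟩ : ∃ s ∈ nhds x, ContDiffOn ℝ 2 (S.v5 n) s := by
    rcases hx with h | h
    · exact ⟨Icc 0 β, Icc_mem_nhds h.1 h.2, S.reg_v5_left n⟩
    · exact ⟨Icc β L, Icc_mem_nhds h.1 h.2, S.reg_v5_right n⟩
  have hv1 : HasDerivAt (S.v1 n) (deriv (S.v1 n) x) x :=
    bresse_hasDerivAt_of_contDiffOn_nhds (n := 2) (by norm_num) hnb (S.reg_v1 n)
  have hv1' : HasDerivAt (deriv (S.v1 n)) (deriv (deriv (S.v1 n)) x) x :=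
    bresse_hasDerivAt_deriv_of_contDiffOn_nhds hnb (S.reg_v1 n)
  have hv3 : HasDerivAt (S.v3 n) (deriv (S.v3 n) x) x :=
    bresse_hasDerivAt_of_contDiffOn_nhds (n := 2) (by norm_num) hnb (S.reg_v3 n)
  have hv3' : HasDerivAt (deriv (S.v3 n)) (deriv (deriv (S.v3 n)) x) x :=
    bresse_hasDerivAt_deriv_of_contDiffOn_nhds hnb (S.reg_v3 n)
  have hv5 : HasDerivAt (S.v5 n) (deriv (S.v5 n) x) x :=
    bresse_hasDerivAt_of_contDiffOn_nhds (n := 2) (by norm_num) hs5nb hreg5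
  have hv5' : HasDerivAt (deriv (S.v5 n)) (deriv (deriv (S.v5 n)) x) x :=
    bresse_hasDerivAt_deriv_of_contDiffOn_nhds hs5nb hreg5
  have hv2 : HasDerivAt (S.v2 n) (deriv (S.v2 n) x) x :=
    bresse_hasDerivAt_of_contDiffOn_nhds le_rfl hnb (S.reg_v2 n)
  have hv4 : HasDerivAt (S.v4 n) (deriv (S.v4 n) x) x :=
    bresse_hasDerivAt_of_contDiffOn_nhds le_rfl hnb (S.reg_v4 n)
  have hv6 : HasDerivAt (S.v6 n) (deriv (S.v6 n) x) x :=
    bresse_hasDerivAt_of_contDiffOn_nhds le_rfl hnb (S.reg_v6 n)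
  have hf1 : HasDerivAt (S.f1 n) (deriv (S.f1 n) x) x :=
    bresse_hasDerivAt_of_contDiffOn_nhds le_rfl hnb (S.reg_f1 n)
  have hf3 : HasDerivAt (S.f3 n) (deriv (S.f3 n) x) x :=
    bresse_hasDerivAt_of_contDiffOn_nhds le_rfl hnb (S.reg_f3 n)
  have hf5 : HasDerivAt (S.f5 n) (deriv (S.f5 n) x) x :=
    bresse_hasDerivAt_of_contDiffOn_nhds le_rfl hnb (S.reg_f5 n)
  set lc : ℂ := (S.lam n : ℂ) with hlc
  set εc : ℂ := (S.lam n : ℂ) ^ (-(ℓ:ℤ)) with hεc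
  -- auxiliary HasDerivAt for the composite functions appearing in eq2/eq6
  have hS1d : HasDerivAt (fun y => deriv (S.v1 n) y + S.v3 n y + (l:ℂ) * S.v5 n y)
      (deriv (deriv (S.v1 n)) x + deriv (S.v3 n) x + (l:ℂ) * deriv (S.v5 n) x) x :=
    (hv1'.add hv3).add (hv5.const_mul _)
  have hS5d : HasDerivAt (fun y => deriv (S.v5 n) y - (l:ℂ) * S.v1 n y)
      (deriv (deriv (S.v5 n)) x - (l:ℂ) * deriv (S.v1 n) x) x :=
    hv5'.sub (hv1.const_mul _)
  -- derivatives of the first-order resolvent equations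
  have h1' : Complex.I * lc * deriv (S.v1 n) x - deriv (S.v2 n) x = εc * deriv (S.f1 n) x := by
    have hLd : HasDerivAt (fun y => Complex.I * lc * S.v1 n y - S.v2 n y)
        (Complex.I * lc * deriv (S.v1 n) x - deriv (S.v2 n) x) x := (hv1.const_mul _).sub hv2
    have hRd : HasDerivAt (fun y => εc * S.f1 n y) (εc * deriv (S.f1 n) x) x := hf1.const_mul _
    have hEq : (fun y => Complex.I * lc * S.v1 n y - S.v2 n y) =ᶠ[nhds x]
        (fun y => εc * S.f1 n y) := eventually_of_mem hUnb (fun y hy => S.eq1 n y hy)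
    exact (hLd.congr_of_eventuallyEq hEq.symm).unique hRd
  have h3' : Complex.I * lc * deriv (S.v3 n) x - deriv (S.v4 n) x = εc * deriv (S.f3 n) x := by
    have hLd : HasDerivAt (fun y => Complex.I * lc * S.v3 n y - S.v4 n y)
        (Complex.I * lc * deriv (S.v3 n) x - deriv (S.v4 n) x) x := (hv3.const_mul _).sub hv4
    have hRd : HasDerivAt (fun y => εc * S.f3 n y) (εc * deriv (S.f3 n) x) x := hf3.const_mul _
    have hEq : (fun y => Complex.I * lc * S.v3 n y - S.v4 n y) =ᶠ[nhds x]
        (fun y => εc * S.f3 n y) := eventually_of_mem hUnb (fun y hy => S.eq3 n y hy)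
    exact (hLd.congr_of_eventuallyEq hEq.symm).unique hRd
  have h5' : Complex.I * lc * deriv (S.v5 n) x - deriv (S.v6 n) x = εc * deriv (S.f5 n) x := by
    have hLd : HasDerivAt (fun y => Complex.I * lc * S.v5 n y - S.v6 n y)
        (Complex.I * lc * deriv (S.v5 n) x - deriv (S.v6 n) x) x := (hv5.const_mul _).sub hv6
    have hRd : HasDerivAt (fun y => εc * S.f5 n y) (εc * deriv (S.f5 n) x) x := hf5.const_mul _
    have hEq : (fun y => Complex.I * lc * S.v5 n y - S.v6 n y) =ᶠ[nhds x]
        (fun y => εc * S.f5 n y) := eventually_of_mem hUnb (fun y hy => S.eq5 n y hy)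
    exact (hLd.congr_of_eventuallyEq hEq.symm).unique hRd
  -- the derivative of the (deriv-version of the) flux function
  have hqd : HasDerivAt (fun y => (k₁:ℂ) * (S.v2 n y
        * conj' (deriv (S.v1 n) y + S.v3 n y + (l:ℂ) * S.v5 n y))
      + (k₂:ℂ) * (S.v4 n y * conj' (deriv (S.v3 n) y))
      + (k₃:ℂ) * (S.v6 n y * conj' (deriv (S.v5 n) y - (l:ℂ) * S.v1 n y)))
      ((k₁:ℂ) * (deriv (S.v2 n) x
          * conj' (deriv (S.v1 n) x + S.v3 n x + (l:ℂ) * S.v5 n x)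
          + S.v2 n x * conj' (deriv (deriv (S.v1 n)) x + deriv (S.v3 n) x
            + (l:ℂ) * deriv (S.v5 n) x))
        + (k₂:ℂ) * (deriv (S.v4 n) x * conj' (deriv (S.v3 n) x)
          + S.v4 n x * conj' (deriv (deriv (S.v3 n)) x))
        + (k₃:ℂ) * (deriv (S.v6 n) x * conj' (deriv (S.v5 n) x - (l:ℂ) * S.v1 n x)
          + S.v6 n x * conj' (deriv (deriv (S.v5 n)) x - (l:ℂ) * deriv (S.v1 n) x))) x := by
    have t1 : HasDerivAt (fun y => S.v2 n y
        * conj' (deriv (S.v1 n) y + S.v3 n y + (l:ℂ) * S.v5 n y))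
        (deriv (S.v2 n) x * conj' (deriv (S.v1 n) x + S.v3 n x + (l:ℂ) * S.v5 n x)
          + S.v2 n x * conj' (deriv (deriv (S.v1 n)) x + deriv (S.v3 n) x
            + (l:ℂ) * deriv (S.v5 n) x)) x := by
      simp only [starRingEnd_apply]; exact hv2.mul hS1d.star
    have t2 : HasDerivAt (fun y => S.v4 n y * conj' (deriv (S.v3 n) y))
        (deriv (S.v4 n) x * conj' (deriv (S.v3 n) x)
          + S.v4 n x * conj' (deriv (deriv (S.v3 n)) x)) x := by
      simp only [starRingEnd_apply]; exact hv4.mul hv3'.star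
    have t3 : HasDerivAt (fun y => S.v6 n y
        * conj' (deriv (S.v5 n) y - (l:ℂ) * S.v1 n y))
        (deriv (S.v6 n) x * conj' (deriv (S.v5 n) x - (l:ℂ) * S.v1 n x)
          + S.v6 n x * conj' (deriv (deriv (S.v5 n)) x - (l:ℂ) * deriv (S.v1 n) x)) x := by
      simp only [starRingEnd_apply]; exact hv6.mul hS5d.star
    exact ((t1.const_mul _).add (t2.const_mul _)).add (t3.const_mul _)
  have hgd : HasDerivAt (bG S n)
      (((k₁:ℂ) * (deriv (S.v2 n) x
          * conj' (deriv (S.v1 n) x + S.v3 n x + (l:ℂ) * S.v5 n x)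
          + S.v2 n x * conj' (deriv (deriv (S.v1 n)) x + deriv (S.v3 n) x
            + (l:ℂ) * deriv (S.v5 n) x))
        + (k₂:ℂ) * (deriv (S.v4 n) x * conj' (deriv (S.v3 n) x)
          + S.v4 n x * conj' (deriv (deriv (S.v3 n)) x))
        + (k₃:ℂ) * (deriv (S.v6 n) x * conj' (deriv (S.v5 n) x - (l:ℂ) * S.v1 n x)
          + S.v6 n x * conj' (deriv (deriv (S.v5 n)) x - (l:ℂ) * deriv (S.v1 n) x))).re) x := by
    have hre := Complex.reCLM.hasFDerivAt.comp_hasDerivAt x hqd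
    have hEqG : bG S n =ᶠ[nhds x] (fun y => ((k₁:ℂ) * (S.v2 n y
          * conj' (deriv (S.v1 n) y + S.v3 n y + (l:ℂ) * S.v5 n y))
        + (k₂:ℂ) * (S.v4 n y * conj' (deriv (S.v3 n) y))
        + (k₃:ℂ) * (S.v6 n y * conj' (deriv (S.v5 n) y - (l:ℂ) * S.v1 n y))).re) := by
      refine eventually_of_mem (isOpen_Ioo.mem_nhds hx') (fun y hy => ?_)
      simp only [bG, bS1, bS5, bresse_dw_eq hy]
    exact (hre.congr_of_eventuallyEq hEqG)
  -- now identify the derivative value using the resolvent equations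
  have heq2 := S.eq2 n x hx
  have heq4 := S.eq4 n x hx
  have heq6 := S.eq6 n x hx
  rw [hS1d.deriv] at heq2
  rw [hS5d.deriv] at heq6
  have hεreal : εc = ((S.lam n ^ (-(ℓ:ℤ)) : ℝ) : ℂ) := by
    rw [hεc, Complex.ofReal_zpow]
  have haaval : (if x < β then (a₀:ℂ) else 0) = (((if x < β then a₀ else 0) : ℝ) : ℂ) := by
    split_ifs <;> simp
  rw [haaval] at heq6
  have hkey := bresse_key_alg (S.lam n) (S.lam n ^ (-(ℓ:ℤ))) (if x < β then a₀ else 0)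
    ρ₁ ρ₂ k₁ k₂ k₃ l
    (S.v1 n x) (deriv (S.v1 n) x) (deriv (deriv (S.v1 n)) x)
    (S.v2 n x) (deriv (S.v2 n) x)
    (S.v3 n x) (deriv (S.v3 n) x) (deriv (deriv (S.v3 n)) x)
    (S.v4 n x) (deriv (S.v4 n) x)
    (S.v5 n x) (deriv (S.v5 n) x) (deriv (deriv (S.v5 n)) x)
    (S.v6 n x) (deriv (S.v6 n) x)
    (S.f1 n x) (deriv (S.f1 n) x) (S.f2 n x) (S.f3 n x) (deriv (S.f3 n) x)
    (S.f4 n x) (S.f5 n x) (deriv (S.f5 n) x) (S.f6 n x)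
    (by rw [← hεreal]; exact S.eq1 n x hx)
    (by rw [← hεreal]; exact h1')
    (by rw [← hεreal]; exact heq2)
    (by rw [← hεreal]; exact S.eq3 n x hx)
    (by rw [← hεreal]; exact h3')
    (by rw [← hεreal]; exact heq4)
    (by rw [← hεreal]; exact S.eq5 n x hx)
    (by rw [← hεreal]; exact h5')
    (by rw [← hεreal]; exact heq6)
  rw [hkey] at hgd
  have hPval : (bP S n x).re = ((k₁:ℂ) * (deriv (S.f1 n) x + S.f3 n x + (l:ℂ) * S.f5 n x)
        * conj' (deriv (S.v1 n) x + S.v3 n x + (l:ℂ) * S.v5 n x)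
      + (ρ₁:ℂ) * S.f2 n x * conj' (S.v2 n x)
      + (k₂:ℂ) * deriv (S.f3 n) x * conj' (deriv (S.v3 n) x)
      + (ρ₂:ℂ) * S.f4 n x * conj' (S.v4 n x)
      + (k₃:ℂ) * (deriv (S.f5 n) x - (l:ℂ) * S.f1 n x)
        * conj' (deriv (S.v5 n) x - (l:ℂ) * S.v1 n x)
      + (ρ₁:ℂ) * S.f6 n x * conj' (S.v6 n x)).re := by
    simp only [bP, bsF, bgF, bS1, bS5, bresse_dw_eq hx']
  have hnormsq : (Complex.normSq (S.v6 n x) : ℝ) = ‖S.v6 n x‖ ^ 2 := by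
    rw [Complex.normSq_eq_norm_sq]
  have hfinal : ((if x < β then a₀ else 0) * Complex.normSq (S.v6 n x) : ℝ)
      - (((S.lam n ^ (-(ℓ:ℤ)) : ℝ) : ℂ) * ((k₁:ℂ)
          * (deriv (S.f1 n) x + S.f3 n x + (l:ℂ) * S.f5 n x)
          * conj' (deriv (S.v1 n) x + S.v3 n x + (l:ℂ) * S.v5 n x)
        + (ρ₁:ℂ) * S.f2 n x * conj' (S.v2 n x)
        + (k₂:ℂ) * deriv (S.f3 n) x * conj' (deriv (S.v3 n) x)
        + (ρ₂:ℂ) * S.f4 n x * conj' (S.v4 n x)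
        + (k₃:ℂ) * (deriv (S.f5 n) x - (l:ℂ) * S.f1 n x)
          * conj' (deriv (S.v5 n) x - (l:ℂ) * S.v1 n x)
        + (ρ₁:ℂ) * S.f6 n x * conj' (S.v6 n x))).re
      = (if x < β then a₀ else 0) * ‖S.v6 n x‖ ^ 2
        - (S.lam n) ^ (-(ℓ:ℤ)) * (bP S n x).re := by
    rw [hnormsq, Complex.re_ofReal_mul, hPval]
  rw [hfinal] at hgd
  exact hgd


lemma bresse_II {E : Type*} [NormedAddCommGroup E] {f : ℝ → E} {a b : ℝ} (hab : a ≤ b)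
    (h : ContinuousOn f (Icc a b)) : IntervalIntegrable f volume a b := by
  apply ContinuousOn.intervalIntegrable
  rwa [uIcc_of_le hab]

lemma bresse_integral_mono_Ioo {f g : ℝ → ℝ} {a b : ℝ} (hab : a ≤ b)
    (hf : IntervalIntegrable f volume a b) (hg : IntervalIntegrable g volume a b)
    (h : ∀ x ∈ Set.Ioo a b, f x ≤ g x) :
    ∫ x in a..b, f x ≤ ∫ x in a..b, g x := by
  apply intervalIntegral.integral_mono_ae_restrict hab hf hg
  rw [Filter.EventuallyLE, ae_restrict_iff' measurableSet_Icc]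
  have hae : ∀ᵐ (x : ℝ), x ≠ a ∧ x ≠ b := by
    have h1 : ∀ᵐ (x : ℝ), x ≠ a := by
      rw [MeasureTheory.ae_iff]
      simp only [ne_eq, not_not, Set.setOf_eq_eq_singleton]
      exact Real.volume_singleton
    have h2 : ∀ᵐ (x : ℝ), x ≠ b := by
      rw [MeasureTheory.ae_iff]
      simp only [ne_eq, not_not, Set.setOf_eq_eq_singleton]
      exact Real.volume_singleton
    exact h1.and h2
  filter_upwards [hae] with x hx hxI
  exact h x ⟨lt_of_le_of_ne hxI.1 (Ne.symm hx.1), lt_of_le_of_ne hxI.2 hx.2⟩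

lemma bresse_integral_congr_Ioo {f g : ℝ → ℝ} {a b : ℝ} (hab : a ≤ b)
    (h : ∀ x ∈ Set.Ioo a b, f x = g x) :
    ∫ x in a..b, f x = ∫ x in a..b, g x := by
  apply intervalIntegral.integral_congr_ae
  have hae : ∀ᵐ (x : ℝ), x ≠ b := by
    rw [MeasureTheory.ae_iff]
    simp only [ne_eq, not_not, Set.setOf_eq_eq_singleton]
    exact Real.volume_singleton
  filter_upwards [hae] with x hx hxI
  rw [Set.uIoc_of_le hab] at hxI
  exact h x ⟨hxI.1, lt_of_le_of_ne hxI.2 hx⟩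

lemma bresse_identity (hbeta : 0 < β) (hbetaL : β < L)
    (S : BresseSetting ρ₁ ρ₂ k₁ k₂ k₃ l L β a₀ ℓ) (n : ℕ) :
    a₀ * ∫ x in (0:ℝ)..β, ‖S.v6 n x‖ ^ 2
      = (S.lam n) ^ (-(ℓ:ℤ)) * ∫ x in (0:ℝ)..L, (bP S n x).re := by
  have hL : (0:ℝ) < L := hbeta.trans hbetaL
  have hPcont : ContinuousOn (fun x => (bP S n x).re) (Icc 0 L) :=
    Complex.continuous_re.comp_continuousOn (cont_bP S n hL)
  have hv6cont : ContinuousOn (fun x => ‖S.v6 n x‖ ^ 2) (Icc 0 L) :=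
    (S.reg_v6 n).continuousOn.norm.pow 2
  have hIntP1 : IntervalIntegrable (fun x => (bP S n x).re) volume 0 β :=
    bresse_II hbeta.le (hPcont.mono (Icc_subset_Icc le_rfl hbetaL.le))
  have hIntP2 : IntervalIntegrable (fun x => (bP S n x).re) volume β L :=
    bresse_II hbetaL.le (hPcont.mono (Icc_subset_Icc hbeta.le le_rfl))
  have hIntv6 : IntervalIntegrable (fun x => a₀ * ‖S.v6 n x‖ ^ 2) volume 0 β :=
    bresse_II hbeta.le ((continuousOn_const.mul hv6cont).mono
      (Icc_subset_Icc le_rfl hbetaL.le))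
  have hftc1 : ∫ x in (0:ℝ)..β,
      (a₀ * ‖S.v6 n x‖ ^ 2 - (S.lam n) ^ (-(ℓ:ℤ)) * (bP S n x).re)
      = bG S n β - bG S n 0 := by
    apply intervalIntegral.integral_eq_sub_of_hasDeriv_right_of_le hbeta.le
    · exact (cont_bG S n hL).mono (Icc_subset_Icc le_rfl hbetaL.le)
    · intro x hx
      have h := bresse_gg_hasDeriv hbeta hbetaL S n (Or.inl hx)
      rw [if_pos hx.2] at h
      exact h.hasDerivWithinAt
    · exact hIntv6.sub (hIntP1.const_mul _)
  have hftc2 : ∫ x in β..L, (0 - (S.lam n) ^ (-(ℓ:ℤ)) * (bP S n x).re)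
      = bG S n L - bG S n β := by
    apply intervalIntegral.integral_eq_sub_of_hasDeriv_right_of_le hbetaL.le
    · exact (cont_bG S n hL).mono (Icc_subset_Icc hbeta.le le_rfl)
    · intro x hx
      have h := bresse_gg_hasDeriv hbeta hbetaL S n (Or.inr hx)
      rw [if_neg (not_lt.mpr hx.1.le)] at h
      rw [show (0:ℝ) * ‖S.v6 n x‖ ^ 2 = 0 by ring] at h
      exact h.hasDerivWithinAt
    · exact ((intervalIntegrable_const (c := (0:ℝ))).sub (hIntP2.const_mul _))
  obtain ⟨b1, b2, b3, b4, b5, b6, -, -, -⟩ := S.bc_zero n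
  obtain ⟨c1, c2, c3, c4, c5, c6, -, -, -⟩ := S.bc_L n
  have hG0 : bG S n 0 = 0 := by simp [bG, b2, b4, b6]
  have hGL : bG S n L = 0 := by simp [bG, c2, c4, c6]
  rw [intervalIntegral.integral_sub hIntv6 (hIntP1.const_mul _)] at hftc1
  rw [intervalIntegral.integral_sub (intervalIntegrable_const (c := (0:ℝ)))
    (hIntP2.const_mul _)] at hftc2
  have hadd : (∫ x in (0:ℝ)..β, (bP S n x).re) + ∫ x in β..L, (bP S n x).re
      = ∫ x in (0:ℝ)..L, (bP S n x).re :=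
    intervalIntegral.integral_add_adjacent_intervals hIntP1 hIntP2
  rw [hG0] at hftc1
  rw [hGL] at hftc2
  simp only [intervalIntegral.integral_zero, intervalIntegral.integral_const_mul]
    at hftc1 hftc2
  rw [← hadd]
  linarith [hftc1, hftc2]


lemma bresse_DU_eq_one (hbeta : 0 < β) (hbetaL : β < L)
    (S : BresseSetting ρ₁ ρ₂ k₁ k₂ k₃ l L β a₀ ℓ) (n : ℕ) :
    ∫ x in (0:ℝ)..L, bDU S n x = 1 := by
  have hL : (0:ℝ) < L := hbeta.trans hbetaL
  rw [← S.normU n]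
  apply bresse_integral_congr_Ioo hL.le
  intro x hx
  simp only [bDU, bS1, bS5, bresse_dw_eq hx]

lemma bresse_bE_eq (hbeta : 0 < β) (hbetaL : β < L)
    (S : BresseSetting ρ₁ ρ₂ k₁ k₂ k₃ l L β a₀ ℓ) (n : ℕ) :
    bE S n = ∫ x in (0:ℝ)..L,
      (k₁ * ‖deriv (S.f1 n) x + S.f3 n x + (l : ℂ) * S.f5 n x‖ ^ 2 + ρ₁ * ‖S.f2 n x‖ ^ 2
        + k₂ * ‖deriv (S.f3 n) x‖ ^ 2 + ρ₂ * ‖S.f4 n x‖ ^ 2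
        + k₃ * ‖deriv (S.f5 n) x - (l : ℂ) * S.f1 n x‖ ^ 2 + ρ₁ * ‖S.f6 n x‖ ^ 2) := by
  have hL : (0:ℝ) < L := hbeta.trans hbetaL
  apply bresse_integral_congr_Ioo hL.le
  intro x hx
  simp only [bDF, bsF, bgF, bresse_dw_eq hx]

lemma bresse_P_pointwise (hk1 : 0 < k₁) (hk2 : 0 < k₂) (hk3 : 0 < k₃)
    (hrho1 : 0 < ρ₁) (hrho2 : 0 < ρ₂) {δ : ℝ} (hδ : 0 < δ)
    (S : BresseSetting ρ₁ ρ₂ k₁ k₂ k₃ l L β a₀ ℓ) (n : ℕ) (x : ℝ) :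
    (bP S n x).re ≤ δ / 2 * bDU S n x + 1 / (2 * δ) * bDF S n x := by
  have r1 := bresse_re_term_le k₁ hk1.le (bsF S n x) (bS1 S n x)
  have r2 := bresse_re_term_le ρ₁ hrho1.le (S.f2 n x) (S.v2 n x)
  have r3 := bresse_re_term_le k₂ hk2.le (derivWithin (S.f3 n) (Icc 0 L) x)
    (derivWithin (S.v3 n) (Icc 0 L) x)
  have r4 := bresse_re_term_le ρ₂ hrho2.le (S.f4 n x) (S.v4 n x)
  have r5 := bresse_re_term_le k₃ hk3.le (bgF S n x) (bS5 S n x)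
  have r6 := bresse_re_term_le ρ₁ hrho1.le (S.f6 n x) (S.v6 n x)
  have q1 := bresse_prod_sq_bound k₁ δ ‖bsF S n x‖ ‖bS1 S n x‖ hk1.le hδ
  have q2 := bresse_prod_sq_bound ρ₁ δ ‖S.f2 n x‖ ‖S.v2 n x‖ hrho1.le hδ
  have q3 := bresse_prod_sq_bound k₂ δ ‖derivWithin (S.f3 n) (Icc 0 L) x‖
    ‖derivWithin (S.v3 n) (Icc 0 L) x‖ hk2.le hδ
  have q4 := bresse_prod_sq_bound ρ₂ δ ‖S.f4 n x‖ ‖S.v4 n x‖ hrho2.le hδ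
  have q5 := bresse_prod_sq_bound k₃ δ ‖bgF S n x‖ ‖bS5 S n x‖ hk3.le hδ
  have q6 := bresse_prod_sq_bound ρ₁ δ ‖S.f6 n x‖ ‖S.v6 n x‖ hrho1.le hδ
  have e : (bP S n x).re = ((k₁:ℂ) * bsF S n x * conj' (bS1 S n x)).re
      + ((ρ₁:ℂ) * S.f2 n x * conj' (S.v2 n x)).re
      + ((k₂:ℂ) * derivWithin (S.f3 n) (Icc 0 L) x
          * conj' (derivWithin (S.v3 n) (Icc 0 L) x)).re
      + ((ρ₂:ℂ) * S.f4 n x * conj' (S.v4 n x)).re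
      + ((k₃:ℂ) * bgF S n x * conj' (bS5 S n x)).re
      + ((ρ₁:ℂ) * S.f6 n x * conj' (S.v6 n x)).re := by
    simp only [bP, Complex.add_re]
  have expand : δ / 2 * bDU S n x + 1 / (2 * δ) * bDF S n x
      = (δ / 2 * (k₁ * ‖bS1 S n x‖ ^ 2) + 1 / (2 * δ) * (k₁ * ‖bsF S n x‖ ^ 2))
      + (δ / 2 * (ρ₁ * ‖S.v2 n x‖ ^ 2) + 1 / (2 * δ) * (ρ₁ * ‖S.f2 n x‖ ^ 2))
      + (δ / 2 * (k₂ * ‖derivWithin (S.v3 n) (Icc 0 L) x‖ ^ 2)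
          + 1 / (2 * δ) * (k₂ * ‖derivWithin (S.f3 n) (Icc 0 L) x‖ ^ 2))
      + (δ / 2 * (ρ₂ * ‖S.v4 n x‖ ^ 2) + 1 / (2 * δ) * (ρ₂ * ‖S.f4 n x‖ ^ 2))
      + (δ / 2 * (k₃ * ‖bS5 S n x‖ ^ 2) + 1 / (2 * δ) * (k₃ * ‖bgF S n x‖ ^ 2))
      + (δ / 2 * (ρ₁ * ‖S.v6 n x‖ ^ 2) + 1 / (2 * δ) * (ρ₁ * ‖S.f6 n x‖ ^ 2)) := by
    simp only [bDU, bDF]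
    ring
  rw [e, expand]
  linarith [r1, r2, r3, r4, r5, r6, q1, q2, q3, q4, q5, q6]

lemma bresse_part1_bound (hk1 : 0 < k₁) (hk2 : 0 < k₂) (hk3 : 0 < k₃)
    (hrho1 : 0 < ρ₁) (hrho2 : 0 < ρ₂) (hbeta : 0 < β) (hbetaL : β < L)
    (hEven : Even ℓ)
    (S : BresseSetting ρ₁ ρ₂ k₁ k₂ k₃ l L β a₀ ℓ) (n : ℕ) :
    a₀ * ((S.lam n) ^ ℓ * ∫ x in (0:ℝ)..β, ‖S.v6 n x‖ ^ 2) ≤ Real.sqrt (bE S n) := by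
  have hL : (0:ℝ) < L := hbeta.trans hbetaL
  have hlam := S.lam_ne n
  have hEn0 : 0 ≤ bE S n := by
    apply intervalIntegral.integral_nonneg hL.le
    intro x _
    unfold bDF
    positivity
  have hpow : (S.lam n) ^ ℓ * (S.lam n) ^ (-(ℓ:ℤ)) = 1 := by
    rw [zpow_neg, zpow_natCast]
    field_simp
  have hPint : IntervalIntegrable (fun x => (bP S n x).re) volume 0 L :=
    bresse_II hL.le (Complex.continuous_re.comp_continuousOn (cont_bP S n hL))
  have hDUint : IntervalIntegrable (bDU S n) volume 0 L :=
    bresse_II hL.le (cont_bDU S n hL)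
  have hDFint : IntervalIntegrable (bDF S n) volume 0 L :=
    bresse_II hL.le (cont_bDF S n hL)
  have hδb : ∀ δ > 0, a₀ * ((S.lam n) ^ ℓ * ∫ x in (0:ℝ)..β, ‖S.v6 n x‖ ^ 2)
      ≤ (bE S n / 2) / δ + (1 / 2) * δ := by
    intro δ hδ
    have hc : a₀ * ((S.lam n) ^ ℓ * ∫ x in (0:ℝ)..β, ‖S.v6 n x‖ ^ 2)
        = ∫ x in (0:ℝ)..L, (bP S n x).re := by
      have := bresse_identity hbeta hbetaL S n
      calc a₀ * ((S.lam n) ^ ℓ * ∫ x in (0:ℝ)..β, ‖S.v6 n x‖ ^ 2)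
          = (S.lam n) ^ ℓ * (a₀ * ∫ x in (0:ℝ)..β, ‖S.v6 n x‖ ^ 2) := by ring
        _ = (S.lam n) ^ ℓ * ((S.lam n) ^ (-(ℓ:ℤ)) * ∫ x in (0:ℝ)..L, (bP S n x).re) := by
            rw [this]
        _ = ∫ x in (0:ℝ)..L, (bP S n x).re := by rw [← mul_assoc, hpow, one_mul]
    rw [hc]
    have hmono : ∫ x in (0:ℝ)..L, (bP S n x).re
        ≤ ∫ x in (0:ℝ)..L, (δ / 2 * bDU S n x + 1 / (2 * δ) * bDF S n x) := by
      apply intervalIntegral.integral_mono_on hL.le hPint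
        ((hDUint.const_mul _).add (hDFint.const_mul _))
      intro x _
      exact bresse_P_pointwise hk1 hk2 hk3 hrho1 hrho2 hδ S n x
    have hsplit : ∫ x in (0:ℝ)..L, (δ / 2 * bDU S n x + 1 / (2 * δ) * bDF S n x)
        = δ / 2 * (∫ x in (0:ℝ)..L, bDU S n x) + 1 / (2 * δ) * bE S n := by
      rw [intervalIntegral.integral_add (hDUint.const_mul _) (hDFint.const_mul _),
        intervalIntegral.integral_const_mul, intervalIntegral.integral_const_mul]
      rfl
    rw [hsplit, bresse_DU_eq_one hbeta hbetaL S n] at hmono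
    calc ∫ x in (0:ℝ)..L, (bP S n x).re ≤ δ / 2 * 1 + 1 / (2 * δ) * bE S n := hmono
      _ = (bE S n / 2) / δ + (1 / 2) * δ := by
          field_simp
          ring
  have h2 := bresse_amgm2 (by positivity) (by norm_num : (0:ℝ) ≤ 1 / 2) hδb
  have h3 : 2 * Real.sqrt (bE S n / 2 * (1 / 2)) = Real.sqrt (bE S n) := by
    rw [show bE S n / 2 * (1 / 2) = bE S n * (1 / 2) ^ 2 by ring,
      Real.sqrt_mul hEn0, Real.sqrt_sq (by norm_num : (0:ℝ) ≤ 1 / 2)]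
    ring
  linarith [h2, h3.le, h3.ge]


lemma bresse_norm_int_bound {f : ℝ → ℂ} (hL : 0 < L)
    (hf : ContinuousOn f (Icc 0 L)) {t : ℝ} (ht : 0 < t) :
    ∫ s in (0:ℝ)..L, ‖f s‖ ≤ L / (2 * t) + t / 2 * ∫ s in (0:ℝ)..L, ‖f s‖ ^ 2 := by
  have h1 : ∫ s in (0:ℝ)..L, ‖f s‖
      ≤ ∫ s in (0:ℝ)..L, (1 / (2 * t) + t / 2 * ‖f s‖ ^ 2) := by
    apply intervalIntegral.integral_mono_on hL.le
      (bresse_II hL.le hf.norm)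
      ((intervalIntegrable_const).add ((bresse_II hL.le (hf.norm.pow 2)).const_mul _))
    intro x _
    have hd := div_nonneg (sq_nonneg (t * ‖f x‖ - 1)) (by positivity : (0:ℝ) ≤ 2 * t)
    have he : (t * ‖f x‖ - 1) ^ 2 / (2 * t)
        = 1 / (2 * t) + t / 2 * ‖f x‖ ^ 2 - ‖f x‖ := by
      field_simp
      ring
    show ‖f x‖ ≤ 1 / (2 * t) + t / 2 * ‖f x‖ ^ 2
    linarith
  have h2 : ∫ s in (0:ℝ)..L, (1 / (2 * t) + t / 2 * ‖f s‖ ^ 2)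
      = L / (2 * t) + t / 2 * ∫ s in (0:ℝ)..L, ‖f s‖ ^ 2 := by
    rw [intervalIntegral.integral_add (f := fun _ => 1 / (2 * t)) (g := fun s => t / 2 * ‖f s‖ ^ 2) (intervalIntegrable_const)
      ((bresse_II hL.le (hf.norm.pow 2)).const_mul _),
      intervalIntegral.integral_const_mul, intervalIntegral.integral_const]
    simp [smul_eq_mul]
    ring
  linarith

lemma bresse_comp_sq_le (hk1 : 0 < k₁) (hk2 : 0 < k₂) (hk3 : 0 < k₃)
    (hrho1 : 0 < ρ₁) (hrho2 : 0 < ρ₂) (hL : 0 < L)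
    (S : BresseSetting ρ₁ ρ₂ k₁ k₂ k₃ l L β a₀ ℓ) (n : ℕ) :
    (∫ s in (0:ℝ)..L, ‖bsF S n s‖ ^ 2) ≤ bE S n / k₁
    ∧ (∫ s in (0:ℝ)..L, ‖derivWithin (S.f3 n) (Icc 0 L) s‖ ^ 2) ≤ bE S n / k₂
    ∧ (∫ s in (0:ℝ)..L, ‖bgF S n s‖ ^ 2) ≤ bE S n / k₃ := by
  have hDFint : IntervalIntegrable (bDF S n) volume 0 L := bresse_II hL.le (cont_bDF S n hL)
  have key : ∀ (g : ℝ → ℂ) (c : ℝ), 0 < c → ContinuousOn g (Icc 0 L) →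
      (∀ x, c * ‖g x‖ ^ 2 ≤ bDF S n x) →
      (∫ s in (0:ℝ)..L, ‖g s‖ ^ 2) ≤ bE S n / c := by
    intro g c hc hg hpt
    rw [le_div_iff₀ hc, mul_comm]
    calc c * ∫ s in (0:ℝ)..L, ‖g s‖ ^ 2 = ∫ s in (0:ℝ)..L, c * ‖g s‖ ^ 2 :=
        (intervalIntegral.integral_const_mul _ _).symm
      _ ≤ ∫ s in (0:ℝ)..L, bDF S n s := by
          apply intervalIntegral.integral_mono_on hL.le
            ((bresse_II hL.le (hg.norm.pow 2)).const_mul _) hDFint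
          intro x _
          exact hpt x
      _ = bE S n := rfl
  refine ⟨key _ k₁ hk1 (cont_bsF S n hL) (fun x => ?_),
    key _ k₂ hk2 (bresse_cont_dw le_rfl hL (S.reg_f3 n)) (fun x => ?_),
    key _ k₃ hk3 (cont_bgF S n hL) (fun x => ?_)⟩ <;>
  · unfold bDF
    nlinarith [mul_nonneg hk1.le (sq_nonneg ‖bsF S n x‖),
      mul_nonneg hrho1.le (sq_nonneg ‖S.f2 n x‖),
      mul_nonneg hk2.le (sq_nonneg ‖derivWithin (S.f3 n) (Icc 0 L) x‖),
      mul_nonneg hrho2.le (sq_nonneg ‖S.f4 n x‖),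
      mul_nonneg hk3.le (sq_nonneg ‖bgF S n x‖),
      mul_nonneg hrho1.le (sq_nonneg ‖S.f6 n x‖)]

lemma bresse_f3_pointwise (hL : 0 < L)
    (S : BresseSetting ρ₁ ρ₂ k₁ k₂ k₃ l L β a₀ ℓ) (n : ℕ) {x : ℝ} (hx : x ∈ Icc (0:ℝ) L) :
    ‖S.f3 n x‖ ≤ ∫ s in (0:ℝ)..L, ‖derivWithin (S.f3 n) (Icc 0 L) s‖ := by
  have hcont := bresse_cont_dw (L := L) le_rfl hL (S.reg_f3 n)
  have hftc : ∫ s in (0:ℝ)..x, derivWithin (S.f3 n) (Icc 0 L) s = S.f3 n x - S.f3 n 0 := by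
    apply intervalIntegral.integral_eq_sub_of_hasDeriv_right_of_le hx.1
    · exact (S.reg_f3 n).continuousOn.mono (Icc_subset_Icc le_rfl hx.2)
    · intro y hy
      have hy' : y ∈ Ioo (0:ℝ) L := ⟨hy.1, lt_of_lt_of_le hy.2 hx.2⟩
      have h := bresse_hasDerivAt_of_contDiffOn_nhds le_rfl
        (Icc_mem_nhds hy'.1 hy'.2) (S.reg_f3 n)
      rw [← bresse_dw_eq hy'] at h
      exact h.hasDerivWithinAt
    · exact bresse_II hx.1 (hcont.mono (Icc_subset_Icc le_rfl hx.2))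
  obtain ⟨-, -, -, -, -, -, -, b8, -⟩ := S.bc_zero n
  rw [b8, sub_zero] at hftc
  calc ‖S.f3 n x‖ = ‖∫ s in (0:ℝ)..x, derivWithin (S.f3 n) (Icc 0 L) s‖ := by rw [hftc]
    _ ≤ ∫ s in (0:ℝ)..x, ‖derivWithin (S.f3 n) (Icc 0 L) s‖ :=
        intervalIntegral.norm_integral_le_integral_norm hx.1
    _ ≤ ∫ s in (0:ℝ)..L, ‖derivWithin (S.f3 n) (Icc 0 L) s‖ := by
        rw [← intervalIntegral.integral_add_adjacent_intervals
          (bresse_II hx.1 ((hcont.norm).mono (Icc_subset_Icc le_rfl hx.2)))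
          (bresse_II hx.2 ((hcont.norm).mono (Icc_subset_Icc hx.1 le_rfl)))]
        have : 0 ≤ ∫ s in x..L, ‖derivWithin (S.f3 n) (Icc 0 L) s‖ :=
          intervalIntegral.integral_nonneg hx.2 (fun u _ => norm_nonneg _)
        linarith


lemma bresse_w_bound (hL : 0 < L)
    (S : BresseSetting ρ₁ ρ₂ k₁ k₂ k₃ l L β a₀ ℓ) (n : ℕ) (σ : ℂ)
    (hσ : σ = Complex.I ∨ σ = -Complex.I) {x : ℝ} (hx : x ∈ Icc (0:ℝ) L) :
    ‖S.f1 n x + σ * S.f5 n x‖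
      ≤ ∫ s in (0:ℝ)..L, (‖bsF S n s‖ + ‖S.f3 n s‖ + ‖bgF S n s‖) := by
  have hσ2 : σ ^ 2 = -1 := by rcases hσ with h | h <;> rw [h] <;> ring_nf <;>
    simp [Complex.I_sq]
  have hσnorm : ‖σ‖ = 1 := by rcases hσ with h | h <;> rw [h] <;> simp
  have hexpnorm : ∀ s : ℝ, ‖Complex.exp (-(σ * l * s))‖ = 1 := by
    intro s
    rw [Complex.norm_exp]
    rcases hσ with h | h <;> rw [h] <;> simp
  set u : ℝ → ℂ := fun s => Complex.exp (-(σ * l * s)) * (S.f1 n s + σ * S.f5 n s) with hu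
  set g : ℝ → ℂ := fun s => Complex.exp (-(σ * l * s))
    * ((bsF S n s - S.f3 n s) + σ * bgF S n s) with hg
  have hexpcont : Continuous (fun s : ℝ => Complex.exp (-(σ * l * s))) := by
    apply Complex.continuous_exp.comp
    exact ((continuous_const.mul Complex.continuous_ofReal).neg)
  have hwcont : ContinuousOn (fun s => S.f1 n s + σ * S.f5 n s) (Icc 0 L) :=
    (S.reg_f1 n).continuousOn.add (continuousOn_const.mul (S.reg_f5 n).continuousOn)
  have hgcont : ContinuousOn g (Icc 0 L) := by
    apply hexpcont.continuousOn.mul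
    exact ((cont_bsF S n hL).sub (S.reg_f3 n).continuousOn).add
      (continuousOn_const.mul (cont_bgF S n hL))
  have hftc : ∫ s in (0:ℝ)..x, g s = u x - u 0 := by
    apply intervalIntegral.integral_eq_sub_of_hasDeriv_right_of_le hx.1
    · exact (hexpcont.continuousOn.mul hwcont).mono (Icc_subset_Icc le_rfl hx.2)
    · intro y hy
      have hy' : y ∈ Ioo (0:ℝ) L := ⟨hy.1, lt_of_lt_of_le hy.2 hx.2⟩
      have hnb : Icc (0:ℝ) L ∈ nhds y := Icc_mem_nhds hy'.1 hy'.2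
      have hf1 : HasDerivAt (S.f1 n) (deriv (S.f1 n) y) y :=
        bresse_hasDerivAt_of_contDiffOn_nhds le_rfl hnb (S.reg_f1 n)
      have hf5 : HasDerivAt (S.f5 n) (deriv (S.f5 n) y) y :=
        bresse_hasDerivAt_of_contDiffOn_nhds le_rfl hnb (S.reg_f5 n)
      have h0 : HasDerivAt (fun s : ℝ => ((s : ℂ))) 1 y := Complex.ofRealCLM.hasDerivAt
      have h1 : HasDerivAt (fun s : ℝ => -(σ * l * s)) (-(σ * (l:ℂ))) y := by
        have h1' := (h0.const_mul (σ * (l:ℂ))).neg; simp only [mul_one] at h1'; exact h1'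
      have hexp : HasDerivAt (fun s : ℝ => Complex.exp (-(σ * l * s)))
          (-(σ * (l:ℂ)) * Complex.exp (-(σ * l * y))) y := by
        simpa [mul_comm] using h1.cexp
      have hw : HasDerivAt (fun s => S.f1 n s + σ * S.f5 n s)
          (deriv (S.f1 n) y + σ * deriv (S.f5 n) y) y := hf1.add (hf5.const_mul σ)
      have hprod := hexp.mul hw
      have e1 : bsF S n y = deriv (S.f1 n) y + S.f3 n y + (l:ℂ) * S.f5 n y := by
        simp only [bsF, bresse_dw_eq hy']
      have e2 : bgF S n y = deriv (S.f5 n) y - (l:ℂ) * S.f1 n y := by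
        simp only [bgF, bresse_dw_eq hy']
      have hval : -(σ * (l:ℂ)) * Complex.exp (-(σ * l * y))
            * (S.f1 n y + σ * S.f5 n y)
          + Complex.exp (-(σ * l * y)) * (deriv (S.f1 n) y + σ * deriv (S.f5 n) y)
          = g y := by
        rw [hg]
        simp only
        rw [e1, e2]
        linear_combination (-(Complex.exp (-(σ * l * y)) * (l:ℂ) * S.f5 n y)) * hσ2
      rw [hval] at hprod
      exact hprod.hasDerivWithinAt
    · exact bresse_II hx.1 (hgcont.mono (Icc_subset_Icc le_rfl hx.2))
  obtain ⟨-, -, -, -, -, -, b7, -, b9⟩ := S.bc_zero n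
  have hu0 : u 0 = 0 := by simp [hu, b7, b9]
  rw [hu0, sub_zero] at hftc
  have hnormu : ‖u x‖ = ‖S.f1 n x + σ * S.f5 n x‖ := by
    rw [hu]
    simp only
    rw [norm_mul, hexpnorm, one_mul]
  have hgbound : ∀ s, ‖g s‖ ≤ ‖bsF S n s‖ + ‖S.f3 n s‖ + ‖bgF S n s‖ := by
    intro s
    rw [hg]
    simp only
    rw [norm_mul, hexpnorm, one_mul]
    calc ‖(bsF S n s - S.f3 n s) + σ * bgF S n s‖
        ≤ ‖bsF S n s - S.f3 n s‖ + ‖σ * bgF S n s‖ := norm_add_le _ _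
      _ ≤ (‖bsF S n s‖ + ‖S.f3 n s‖) + ‖σ * bgF S n s‖ := by
          linarith [norm_sub_le (bsF S n s) (S.f3 n s)]
      _ = ‖bsF S n s‖ + ‖S.f3 n s‖ + ‖bgF S n s‖ := by rw [norm_mul, hσnorm, one_mul]
  have hφcont : ContinuousOn (fun s => ‖bsF S n s‖ + ‖S.f3 n s‖ + ‖bgF S n s‖)
      (Icc 0 L) :=
    ((cont_bsF S n hL).norm.add (S.reg_f3 n).continuousOn.norm).add (cont_bgF S n hL).norm
  calc ‖S.f1 n x + σ * S.f5 n x‖ = ‖∫ s in (0:ℝ)..x, g s‖ := by rw [hftc, hnormu]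
    _ ≤ ∫ s in (0:ℝ)..x, ‖g s‖ := intervalIntegral.norm_integral_le_integral_norm hx.1
    _ ≤ ∫ s in (0:ℝ)..x, (‖bsF S n s‖ + ‖S.f3 n s‖ + ‖bgF S n s‖) := by
        apply intervalIntegral.integral_mono_on hx.1
          (bresse_II hx.1 ((hgcont.norm).mono (Icc_subset_Icc le_rfl hx.2)))
          (bresse_II hx.1 (hφcont.mono (Icc_subset_Icc le_rfl hx.2)))
        intro s _
        exact hgbound s
    _ ≤ ∫ s in (0:ℝ)..L, (‖bsF S n s‖ + ‖S.f3 n s‖ + ‖bgF S n s‖) := by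
        rw [← intervalIntegral.integral_add_adjacent_intervals
          (bresse_II hx.1 (hφcont.mono (Icc_subset_Icc le_rfl hx.2)))
          (bresse_II hx.2 (hφcont.mono (Icc_subset_Icc hx.1 le_rfl)))]
        have : 0 ≤ ∫ s in x..L, (‖bsF S n s‖ + ‖S.f3 n s‖ + ‖bgF S n s‖) := by
          apply intervalIntegral.integral_nonneg hx.2
          intro s _
          positivity
        linarith

lemma bresse_f5_bound (hk1 : 0 < k₁) (hk2 : 0 < k₂) (hk3 : 0 < k₃)
    (hrho1 : 0 < ρ₁) (hrho2 : 0 < ρ₂) (hL : 0 < L)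
    (S : BresseSetting ρ₁ ρ₂ k₁ k₂ k₃ l L β a₀ ℓ) (n : ℕ) {x : ℝ} (hx : x ∈ Icc (0:ℝ) L) :
    ‖S.f5 n x‖ ≤ 2 * Real.sqrt ((2 + L) * L / 2
      * ((1 / k₁ + L / k₂ + 1 / k₃) / 2 * bE S n)) := by
  have hEn0 : 0 ≤ bE S n := by
    apply intervalIntegral.integral_nonneg hL.le
    intro y _
    unfold bDF
    positivity
  set K : ℝ := ∫ s in (0:ℝ)..L, (‖bsF S n s‖ + ‖S.f3 n s‖ + ‖bgF S n s‖) with hK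
  -- pointwise bound via the two rotating multipliers
  have hf5K : ‖S.f5 n x‖ ≤ K := by
    have h1 := bresse_w_bound hL S n Complex.I (Or.inl rfl) hx
    have h2 := bresse_w_bound hL S n (-Complex.I) (Or.inr rfl) hx
    have hdiff : (S.f1 n x + Complex.I * S.f5 n x)
        - (S.f1 n x + (-Complex.I) * S.f5 n x) = 2 * Complex.I * S.f5 n x := by ring
    have hnd : ‖(S.f1 n x + Complex.I * S.f5 n x)
        - (S.f1 n x + (-Complex.I) * S.f5 n x)‖ = 2 * ‖S.f5 n x‖ := by
      rw [hdiff, norm_mul, norm_mul]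
      simp
    have := norm_sub_le (S.f1 n x + Complex.I * S.f5 n x)
      (S.f1 n x + (-Complex.I) * S.f5 n x)
    rw [hnd] at this
    linarith
  -- K satisfies the AM-GM style family of bounds
  have hKb : ∀ t > 0, K ≤ ((2 + L) * L / 2) / t
      + ((1 / k₁ + L / k₂ + 1 / k₃) / 2 * bE S n) * t := by
    intro t ht
    obtain ⟨hs1, hs2, hs3⟩ := bresse_comp_sq_le hk1 hk2 hk3 hrho1 hrho2 hL S n
    have hb1 := bresse_norm_int_bound hL (cont_bsF S n hL) ht
    have hb2 := bresse_norm_int_bound hL (bresse_cont_dw le_rfl hL (S.reg_f3 n)) ht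
    have hb3 := bresse_norm_int_bound hL (cont_bgF S n hL) ht
    -- ∫‖f3‖ ≤ L * ∫‖(f3)'‖
    have hf3int : ∫ s in (0:ℝ)..L, ‖S.f3 n s‖
        ≤ L * ∫ s in (0:ℝ)..L, ‖derivWithin (S.f3 n) (Icc 0 L) s‖ := by
      have := intervalIntegral.integral_mono_on (μ := volume) hL.le
        (bresse_II hL.le (S.reg_f3 n).continuousOn.norm)
        (intervalIntegrable_const
          (c := ∫ s in (0:ℝ)..L, ‖derivWithin (S.f3 n) (Icc 0 L) s‖))
        (fun y hy => bresse_f3_pointwise hL S n hy)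
      rwa [intervalIntegral.integral_const, smul_eq_mul, sub_zero] at this
    have hsplit : K = (∫ s in (0:ℝ)..L, ‖bsF S n s‖)
        + (∫ s in (0:ℝ)..L, ‖S.f3 n s‖) + (∫ s in (0:ℝ)..L, ‖bgF S n s‖) := by
      rw [hK, intervalIntegral.integral_add, intervalIntegral.integral_add]
      · exact bresse_II hL.le (cont_bsF S n hL).norm
      · exact bresse_II hL.le (S.reg_f3 n).continuousOn.norm
      · exact bresse_II hL.le ((cont_bsF S n hL).norm.add (S.reg_f3 n).continuousOn.norm)
      · exact bresse_II hL.le (cont_bgF S n hL).norm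
    have hchain2 : ∫ s in (0:ℝ)..L, ‖S.f3 n s‖
        ≤ L * (L / (2 * t) + t / 2 * (bE S n / k₂)) := by
      calc ∫ s in (0:ℝ)..L, ‖S.f3 n s‖
          ≤ L * ∫ s in (0:ℝ)..L, ‖derivWithin (S.f3 n) (Icc 0 L) s‖ := hf3int
        _ ≤ L * (L / (2 * t) + t / 2 * (bE S n / k₂)) := by
            apply mul_le_mul_of_nonneg_left _ hL.le
            calc ∫ s in (0:ℝ)..L, ‖derivWithin (S.f3 n) (Icc 0 L) s‖
                ≤ L / (2 * t) + t / 2 * ∫ s in (0:ℝ)..L,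
                    ‖derivWithin (S.f3 n) (Icc 0 L) s‖ ^ 2 := hb2
              _ ≤ L / (2 * t) + t / 2 * (bE S n / k₂) := by
                  have := mul_le_mul_of_nonneg_left hs2 (by positivity : (0:ℝ) ≤ t / 2)
                  linarith
    have hchain1 : ∫ s in (0:ℝ)..L, ‖bsF S n s‖
        ≤ L / (2 * t) + t / 2 * (bE S n / k₁) := by
      have := mul_le_mul_of_nonneg_left hs1 (by positivity : (0:ℝ) ≤ t / 2)
      linarith
    have hchain3 : ∫ s in (0:ℝ)..L, ‖bgF S n s‖
        ≤ L / (2 * t) + t / 2 * (bE S n / k₃) := by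
      have := mul_le_mul_of_nonneg_left hs3 (by positivity : (0:ℝ) ≤ t / 2)
      linarith
    have hrearr : (L / (2 * t) + t / 2 * (bE S n / k₁))
        + L * (L / (2 * t) + t / 2 * (bE S n / k₂))
        + (L / (2 * t) + t / 2 * (bE S n / k₃))
        = ((2 + L) * L / 2) / t + ((1 / k₁ + L / k₂ + 1 / k₃) / 2 * bE S n) * t := by
      field_simp
      ring
    rw [hsplit]
    linarith
  have hK2 : ∀ t > 0, ‖S.f5 n x‖ ≤ ((2 + L) * L / 2) / t
      + ((1 / k₁ + L / k₂ + 1 / k₃) / 2 * bE S n) * t :=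
    fun t ht => le_trans hf5K (hKb t ht)
  exact bresse_amgm2 (by positivity) (by positivity) hK2

end BresseAux

theorem bresse_lemma1_estimates (ρ₁ ρ₂ k₁ k₂ k₃ l L β a₀ : ℝ) (ℓ : ℕ)
    (hrho1 : 0 < ρ₁) (hrho2 : 0 < ρ₂) (hk1 : 0 < k₁) (hk2 : 0 < k₂) (hk3 : 0 < k₃)
    (hl : 0 < l) (hL : 0 < L) (ha0 : 0 < a₀) (hbeta : 0 < β) (hbetaL : β < L)
    (S : BresseSetting ρ₁ ρ₂ k₁ k₂ k₃ l L β a₀ ℓ)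
    (hH : (k₁ / ρ₁ = k₂ / ρ₂ ∧ k₁ = k₃ ∧ ℓ = 0) ∨ (k₁ / ρ₁ = k₂ / ρ₂ ∧ k₁ ≠ k₃ ∧ ℓ = 2) ∨ (k₁ / ρ₁ ≠ k₂ / ρ₂ ∧ ℓ = 4)) :
    Tendsto (fun n => (S.lam n) ^ ℓ * ∫ x in (0 : ℝ)..β, ‖S.v6 n x‖ ^ 2) atTop (nhds 0) ∧
    Tendsto (fun n => (S.lam n) ^ (ℓ + 2) * ∫ x in (0 : ℝ)..β, ‖S.v5 n x‖ ^ 2) atTop (nhds 0) := by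
  have hEven : Even ℓ := by
    rcases hH with ⟨-, -, h⟩ | ⟨-, -, h⟩ | ⟨-, h⟩ <;> subst h <;> decide
  have hEn0 : ∀ n, 0 ≤ bE S n := fun n =>
    intervalIntegral.integral_nonneg hL.le (fun x _ => by unfold bDF; positivity)
  have hEtend : Tendsto (fun n => bE S n) atTop (nhds 0) :=
    S.normF.congr (fun n => (bresse_bE_eq hbeta hbetaL S n).symm)
  have hpowpos : ∀ n, 0 < (S.lam n) ^ ℓ := fun n => hEven.pow_pos (S.lam_ne n)
  have hεpos : ∀ n, 0 < (S.lam n) ^ (-(ℓ:ℤ)) := by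
    intro n
    rw [zpow_neg, zpow_natCast]
    exact inv_pos.mpr (hpowpos n)
  -- Part 1
  have hq0 : ∀ n, 0 ≤ (S.lam n) ^ ℓ * ∫ x in (0:ℝ)..β, ‖S.v6 n x‖ ^ 2 := fun n =>
    mul_nonneg (hpowpos n).le
      (intervalIntegral.integral_nonneg hbeta.le (fun x _ => by positivity))
  have hqb : ∀ n, (S.lam n) ^ ℓ * ∫ x in (0:ℝ)..β, ‖S.v6 n x‖ ^ 2
      ≤ Real.sqrt (bE S n) / a₀ := by
    intro n
    have h := bresse_part1_bound hk1 hk2 hk3 hrho1 hrho2 hbeta hbetaL hEven S n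
    rw [le_div_iff₀ ha0]
    linarith
  have hsqrt : Tendsto (fun n => Real.sqrt (bE S n) / a₀) atTop (nhds 0) := by
    have h1 : Tendsto (fun n => Real.sqrt (bE S n)) atTop (nhds 0) := by
      simpa using hEtend.sqrt
    simpa using h1.div_const a₀
  have part1 : Tendsto (fun n => (S.lam n) ^ ℓ * ∫ x in (0:ℝ)..β, ‖S.v6 n x‖ ^ 2)
      atTop (nhds 0) := squeeze_zero hq0 hqb hsqrt
  refine ⟨part1, ?_⟩
  -- Part 2
  set c₁ : ℝ := (2 + L) * L / 2 with hc₁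
  set c₂ : ℝ := (1 / k₁ + L / k₂ + 1 / k₃) / 2 with hc₂
  have hc₁0 : 0 ≤ c₁ := by rw [hc₁]; positivity
  have hc₂0 : 0 ≤ c₂ := by rw [hc₂]; positivity
  have hf5sq : ∀ n, (∫ x in (0:ℝ)..β, ‖S.f5 n x‖ ^ 2)
      ≤ β * (4 * (c₁ * (c₂ * bE S n))) := by
    intro n
    have hb : ∀ x ∈ Icc (0:ℝ) β, ‖S.f5 n x‖ ^ 2 ≤ 4 * (c₁ * (c₂ * bE S n)) := by
      intro x hx
      have h := bresse_f5_bound hk1 hk2 hk3 hrho1 hrho2 hL S n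
        (⟨hx.1, hx.2.trans hbetaL.le⟩ : x ∈ Icc (0:ℝ) L)
      have h2 : ‖S.f5 n x‖ ^ 2 ≤ (2 * Real.sqrt (c₁ * (c₂ * bE S n))) ^ 2 :=
        pow_le_pow_left₀ (norm_nonneg _) h 2
      have h3 : (2 * Real.sqrt (c₁ * (c₂ * bE S n))) ^ 2 = 4 * (c₁ * (c₂ * bE S n)) := by
        rw [mul_pow, Real.sq_sqrt (mul_nonneg hc₁0 (mul_nonneg hc₂0 (hEn0 n)))]
        ring
      linarith
    have := intervalIntegral.integral_mono_on (μ := volume) hbeta.le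
      (bresse_II hbeta.le (((S.reg_f5 n).continuousOn.norm.pow 2).mono
        (Icc_subset_Icc le_rfl hbetaL.le)))
      (intervalIntegrable_const (c := 4 * (c₁ * (c₂ * bE S n)))) hb
    rwa [intervalIntegral.integral_const, smul_eq_mul, sub_zero] at this
  have hptint : ∀ n, (S.lam n) ^ (ℓ + 2) * ∫ x in (0:ℝ)..β, ‖S.v5 n x‖ ^ 2
      ≤ 2 * ((S.lam n) ^ ℓ * ∫ x in (0:ℝ)..β, ‖S.v6 n x‖ ^ 2)
        + 2 * ((S.lam n) ^ (-(ℓ:ℤ)) * (β * (4 * (c₁ * (c₂ * bE S n))))) := by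
    intro n
    have hpt : ∀ x ∈ Ioo (0:ℝ) β, (S.lam n) ^ (ℓ + 2) * ‖S.v5 n x‖ ^ 2
        ≤ 2 * ((S.lam n) ^ ℓ * ‖S.v6 n x‖ ^ 2)
          + 2 * ((S.lam n) ^ (-(ℓ:ℤ)) * ‖S.f5 n x‖ ^ 2) := by
      intro x hx
      have he5 := S.eq5 n x (Or.inl hx)
      have he5' : Complex.I * (S.lam n : ℂ) * S.v5 n x
          = S.v6 n x + (S.lam n : ℂ) ^ (-(ℓ:ℤ)) * S.f5 n x := by
        linear_combination he5
      have hnε : ‖((S.lam n : ℂ)) ^ (-(ℓ:ℤ))‖ = (S.lam n) ^ (-(ℓ:ℤ)) := by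
        rw [norm_zpow, Complex.norm_real]
        rw [zpow_neg, zpow_neg, zpow_natCast, zpow_natCast, Real.norm_eq_abs,
          hEven.pow_abs]
      have hA : |S.lam n| * ‖S.v5 n x‖
          = ‖S.v6 n x + (S.lam n : ℂ) ^ (-(ℓ:ℤ)) * S.f5 n x‖ := by
        rw [← he5', norm_mul, norm_mul, Complex.norm_I, one_mul, Complex.norm_real,
          Real.norm_eq_abs]
      have hB : ‖S.v6 n x + (S.lam n : ℂ) ^ (-(ℓ:ℤ)) * S.f5 n x‖
          ≤ ‖S.v6 n x‖ + (S.lam n) ^ (-(ℓ:ℤ)) * ‖S.f5 n x‖ := by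
        calc ‖S.v6 n x + (S.lam n : ℂ) ^ (-(ℓ:ℤ)) * S.f5 n x‖
            ≤ ‖S.v6 n x‖ + ‖(S.lam n : ℂ) ^ (-(ℓ:ℤ)) * S.f5 n x‖ := norm_add_le _ _
          _ = ‖S.v6 n x‖ + (S.lam n) ^ (-(ℓ:ℤ)) * ‖S.f5 n x‖ := by
              rw [norm_mul, hnε]
      have hsq : (|S.lam n| * ‖S.v5 n x‖) ^ 2
          ≤ (‖S.v6 n x‖ + (S.lam n) ^ (-(ℓ:ℤ)) * ‖S.f5 n x‖) ^ 2 := by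
        rw [hA]
        exact pow_le_pow_left₀ (norm_nonneg _) hB 2
      have htwo : (‖S.v6 n x‖ + (S.lam n) ^ (-(ℓ:ℤ)) * ‖S.f5 n x‖) ^ 2
          ≤ 2 * ‖S.v6 n x‖ ^ 2 + 2 * ((S.lam n) ^ (-(ℓ:ℤ)))^2 * ‖S.f5 n x‖ ^ 2 := by
        nlinarith [sq_nonneg (‖S.v6 n x‖ - (S.lam n) ^ (-(ℓ:ℤ)) * ‖S.f5 n x‖)]
      have hre : (S.lam n) ^ (ℓ + 2) * ‖S.v5 n x‖ ^ 2
          = (S.lam n) ^ ℓ * (|S.lam n| * ‖S.v5 n x‖) ^ 2 := by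
        rw [mul_pow, sq_abs, pow_add]
        ring
      have hε2 : (S.lam n) ^ ℓ * ((S.lam n) ^ (-(ℓ:ℤ))) ^ 2 = (S.lam n) ^ (-(ℓ:ℤ)) := by
        have hne : S.lam n ^ ℓ ≠ 0 := (hpowpos n).ne'
        rw [zpow_neg, zpow_natCast, sq]
        field_simp
      calc (S.lam n) ^ (ℓ + 2) * ‖S.v5 n x‖ ^ 2
          = (S.lam n) ^ ℓ * (|S.lam n| * ‖S.v5 n x‖) ^ 2 := hre
        _ ≤ (S.lam n) ^ ℓ * (2 * ‖S.v6 n x‖ ^ 2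
            + 2 * ((S.lam n) ^ (-(ℓ:ℤ)))^2 * ‖S.f5 n x‖ ^ 2) := by
            apply mul_le_mul_of_nonneg_left _ (hpowpos n).le
            linarith
        _ = 2 * ((S.lam n) ^ ℓ * ‖S.v6 n x‖ ^ 2)
            + 2 * (((S.lam n) ^ ℓ * ((S.lam n) ^ (-(ℓ:ℤ))) ^ 2) * ‖S.f5 n x‖ ^ 2) := by
            ring
        _ = 2 * ((S.lam n) ^ ℓ * ‖S.v6 n x‖ ^ 2)
            + 2 * ((S.lam n) ^ (-(ℓ:ℤ)) * ‖S.f5 n x‖ ^ 2) := by rw [hε2]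
    have hcont5 : ContinuousOn (fun x => ‖S.v5 n x‖ ^ 2) (Icc 0 β) :=
      ((S.reg_v5 n).continuousOn.norm.pow 2).mono (Icc_subset_Icc le_rfl hbetaL.le)
    have hcont6 : ContinuousOn (fun x => ‖S.v6 n x‖ ^ 2) (Icc 0 β) :=
      ((S.reg_v6 n).continuousOn.norm.pow 2).mono (Icc_subset_Icc le_rfl hbetaL.le)
    have hcontf5 : ContinuousOn (fun x => ‖S.f5 n x‖ ^ 2) (Icc 0 β) :=
      ((S.reg_f5 n).continuousOn.norm.pow 2).mono (Icc_subset_Icc le_rfl hbetaL.le)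
    have hint := bresse_integral_mono_Ioo hbeta.le
      ((bresse_II hbeta.le hcont5).const_mul ((S.lam n) ^ (ℓ + 2)))
      (((bresse_II hbeta.le hcont6).const_mul _).const_mul 2 |>.add
        (((bresse_II hbeta.le hcontf5).const_mul _).const_mul 2)) hpt
    rw [intervalIntegral.integral_const_mul] at hint
    rw [intervalIntegral.integral_add (((bresse_II hbeta.le hcont6).const_mul _).const_mul 2)
      (((bresse_II hbeta.le hcontf5).const_mul _).const_mul 2)] at hint
    simp only [intervalIntegral.integral_const_mul] at hint
    have hlast : 2 * ((S.lam n) ^ (-(ℓ:ℤ)) * ∫ x in (0:ℝ)..β, ‖S.f5 n x‖ ^ 2)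
        ≤ 2 * ((S.lam n) ^ (-(ℓ:ℤ)) * (β * (4 * (c₁ * (c₂ * bE S n))))) := by
      have := mul_le_mul_of_nonneg_left (hf5sq n) (hεpos n).le
      linarith
    linarith
  have h2nd : Tendsto (fun n => 2 * ((S.lam n) ^ (-(ℓ:ℤ))
      * (β * (4 * (c₁ * (c₂ * bE S n)))))) atTop (nhds 0) := by
    have hεE : Tendsto (fun n => (S.lam n) ^ (-(ℓ:ℤ)) * bE S n) atTop (nhds 0) := by
      apply squeeze_zero' (Eventually.of_forall (fun n =>
        mul_nonneg (hεpos n).le (hEn0 n)))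
      · have hev : ∀ᶠ n in atTop, (1:ℝ) ≤ |S.lam n| := S.lam_tendsto.eventually_ge_atTop 1
        filter_upwards [hev] with n hn
        have hle1 : (S.lam n) ^ (-(ℓ:ℤ)) ≤ 1 := by
          rw [zpow_neg, zpow_natCast]
          apply inv_le_one_of_one_le₀
          calc (1:ℝ) = 1 ^ ℓ := (one_pow ℓ).symm
            _ ≤ |S.lam n| ^ ℓ := by gcongr
            _ = (S.lam n) ^ ℓ := hEven.pow_abs _
        calc (S.lam n) ^ (-(ℓ:ℤ)) * bE S n ≤ 1 * bE S n :=
            mul_le_mul_of_nonneg_right hle1 (hEn0 n)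
          _ = bE S n := one_mul _
      · exact hEtend
    have := hεE.const_mul (2 * (β * (4 * (c₁ * c₂))))
    rw [mul_zero] at this
    apply this.congr
    intro n
    ring
  have hfinal0 : ∀ n, 0 ≤ (S.lam n) ^ (ℓ + 2) * ∫ x in (0:ℝ)..β, ‖S.v5 n x‖ ^ 2 := by
    intro n
    apply mul_nonneg ((Even.pow_pos (by exact hEven.add (by decide)) (S.lam_ne n)).le)
    exact intervalIntegral.integral_nonneg hbeta.le (fun x _ => by positivity)
  have hg : Tendsto (fun n => 2 * ((S.lam n) ^ ℓ * ∫ x in (0:ℝ)..β, ‖S.v6 n x‖ ^ 2)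
      + 2 * ((S.lam n) ^ (-(ℓ:ℤ)) * (β * (4 * (c₁ * (c₂ * bE S n))))))
      atTop (nhds 0) := by
    have h1 := part1.const_mul 2
    rw [mul_zero] at h1
    simpa using h1.add h2nd
  exact squeeze_zero hfinal0 hptint hg
end
end
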